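/- arXiv:1805.08457 — 7 statements merged into one kernel-verified Lean document; each statement's English description precedes it below -/
import Mathlib

section
/- Suppose that for all t ≥ 0 and all i ≠ j one has ω_i(t) − ω_j(t) − (a_{ij}(t)+a_{ji}(t))·sin r − Σ_{k∉Λ_{ij}(t), k≠i,j} (min(a_{ik}(t),0) + min(a_{jk}(t),0))·sin r − Σ_{k∈Λ_{ij}(t)} min(a_{ik}(t), a_{jk}(t))·sin r < 0. Then A^r is invariant for the time-varying Kuramoto system: every solution θ with |θ_i(0) − θ_j(0)| ≤ r for all i,j satisfies |θ_i(t) − θ_j(t)| ≤ r for all t ≥ 0 and all i,j. -/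
open scoped BigOperators
open Matrix

open Filter Topology Set

/-- `θ` is a solution of the time-varying Kuramoto system with intrinsic
frequencies `ω` and coupling coefficients `a`. -/
def IsKuramotoSol (m : ℕ) (ω : Fin m → ℝ → ℝ) (a : Fin m → Fin m → ℝ → ℝ)
    (θ : ℝ → Fin m → ℝ) : Prop :=
  ∀ (i : Fin m) (t : ℝ), 0 ≤ t →
    HasDerivAt (fun s => θ s i)
      (ω i t + ∑ j : Fin m, a i j t * Real.sin (θ t j - θ t i)) t

open Real Finset

lemma sin_shift_bound {r φ : ℝ} (hr0 : 0 ≤ r) (hr1 : r < Real.pi / 2)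
    (h1 : -r ≤ φ) (h2 : φ ≤ 0) : Real.sin r ≤ Real.sin (φ + r) - Real.sin φ := by
  have hpi := Real.pi_pos
  have hx : Real.sin (φ + r) - Real.sin φ = 2 * Real.sin (r/2) * Real.cos (φ + r/2) := by
    rw [Real.sin_sub_sin]; ring_nf
  have hsr : Real.sin r = 2 * Real.sin (r/2) * Real.cos (r/2) := by
    rw [← Real.sin_two_mul]; ring_nf
  rw [hx, hsr]
  have habs : |φ + r/2| ≤ r/2 := by rw [abs_le]; constructor <;> linarith
  have hcos : Real.cos (r/2) ≤ Real.cos (φ + r/2) := by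
    rw [← Real.cos_abs (φ + r/2)]
    exact Real.cos_le_cos_of_nonneg_of_le_pi (abs_nonneg _) (by linarith) habs
  have hs : 0 ≤ Real.sin (r/2) := Real.sin_nonneg_of_nonneg_of_le_pi (by linarith) (by linarith)
  nlinarith

lemma kuramoto_key (m : ℕ)
    (ω : Fin m → ℝ → ℝ) (a : Fin m → Fin m → ℝ → ℝ)
    (hdiag : ∀ i t, a i i t = 0)
    (r : ℝ) (hr0 : 0 < r) (hr1 : r < Real.pi / 2)
    (hcond : ∀ t, 0 ≤ t → ∀ i j : Fin m, i ≠ j →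
      ω i t - ω j t - (a i j t + a j i t) * Real.sin r
        - (∑ k ∈ Finset.univ.filter
            (fun k => ¬(0 < a i k t ∧ 0 < a j k t) ∧ k ≠ i ∧ k ≠ j),
            (min (a i k t) 0 + min (a j k t) 0)) * Real.sin r
        - (∑ k ∈ Finset.univ.filter (fun k => 0 < a i k t ∧ 0 < a j k t),
            min (a i k t) (a j k t)) * Real.sin r < 0)
    (θ : ℝ → Fin m → ℝ) (t : ℝ) (ht : 0 ≤ t) (i j : Fin m) (hij : i ≠ j)
    (hmax : θ t i - θ t j = r)
    (hub1 : ∀ k, θ t i - θ t k ≤ r) (hub2 : ∀ k, θ t k - θ t j ≤ r) :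
    (ω i t + ∑ k, a i k t * Real.sin (θ t k - θ t i))
      - (ω j t + ∑ k, a j k t * Real.sin (θ t k - θ t j)) < 0 := by
  classical
  have hpi := Real.pi_pos
  have hsinr : 0 < Real.sin r := Real.sin_pos_of_pos_of_lt_pi hr0 (by linarith)
  have mono : MonotoneOn Real.sin (Set.Icc (-(Real.pi/2)) (Real.pi/2)) :=
    Real.strictMonoOn_sin.monotoneOn
  -- basic bounds on each angle
  have hφub : ∀ k, θ t k - θ t i ≤ 0 := fun k => by have := hub2 k; linarith
  have hφlb : ∀ k, -r ≤ θ t k - θ t i := fun k => by have := hub1 k; linarith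
  have hψ : ∀ k, θ t k - θ t j = (θ t k - θ t i) + r := fun k => by linarith
  set B : Fin m → ℝ := fun k =>
    if k = i then -(a j i t * Real.sin r)
    else if k = j then -(a i j t * Real.sin r)
    else if 0 < a i k t ∧ 0 < a j k t then -(min (a i k t) (a j k t) * Real.sin r)
    else -((min (a i k t) 0 + min (a j k t) 0) * Real.sin r) with hB
  have hsin_mem : ∀ k, Real.sin (θ t k - θ t i) ≤ 0 ∧ -Real.sin r ≤ Real.sin (θ t k - θ t i)
      ∧ 0 ≤ Real.sin (θ t k - θ t j) ∧ Real.sin (θ t k - θ t j) ≤ Real.sin r := by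
    intro k
    have h1 := hφub k; have h2 := hφlb k
    refine ⟨?_, ?_, ?_, ?_⟩
    · exact Real.sin_nonpos_of_nonpos_of_neg_pi_le h1 (by linarith)
    · have : Real.sin (-r) ≤ Real.sin (θ t k - θ t i) := by
        apply mono (Set.mem_Icc.mpr ⟨by linarith, by linarith⟩)
          (Set.mem_Icc.mpr ⟨by linarith, by linarith⟩) h2
      simpa using this
    · rw [hψ k]; exact Real.sin_nonneg_of_nonneg_of_le_pi (by linarith) (by linarith)
    · rw [hψ k]
      apply mono (Set.mem_Icc.mpr ⟨by linarith, by linarith⟩)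
        (Set.mem_Icc.mpr ⟨by linarith, by linarith⟩) (by linarith)
  have hpt : ∀ k, a i k t * Real.sin (θ t k - θ t i) - a j k t * Real.sin (θ t k - θ t j) ≤ B k := by
    intro k
    obtain ⟨hs1, hs2, hs3, hs4⟩ := hsin_mem k
    by_cases hki : k = i
    · subst hki
      simp only [hB, if_pos rfl]
      rw [sub_self, Real.sin_zero, mul_zero, hmax]; linarith
    · by_cases hkj : k = j
      · subst hkj
        simp only [hB, if_neg hki, if_pos rfl, if_true]
        rw [show θ t k - θ t i = -r by linarith, Real.sin_neg, sub_self, Real.sin_zero,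
          mul_zero]
        linarith
      · by_cases hΛ : 0 < a i k t ∧ 0 < a j k t
        · simp only [hB, if_neg hki, if_neg hkj, if_pos hΛ]
          obtain ⟨hA, hA'⟩ := hΛ
          set c := min (a i k t) (a j k t) with hc
          have hc0 : 0 < c := lt_min hA hA'
          have hc1 : c ≤ a i k t := min_le_left _ _
          have hc2 : c ≤ a j k t := min_le_right _ _
          have e1 : a i k t * Real.sin (θ t k - θ t i) ≤ c * Real.sin (θ t k - θ t i) := by
            nlinarith
          have e2 : -(a j k t * Real.sin (θ t k - θ t j)) ≤ -(c * Real.sin (θ t k - θ t j)) := by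
            nlinarith
          have key := sin_shift_bound hr0.le hr1 (hφlb k) (hφub k)
          rw [← hψ k] at key
          nlinarith
        · simp only [hB, if_neg hki, if_neg hkj, if_neg hΛ]
          have e1 : a i k t * Real.sin (θ t k - θ t i) ≤ -(min (a i k t) 0 * Real.sin r) := by
            rcases le_or_gt 0 (a i k t) with h | h
            · rw [min_eq_right h]; nlinarith
            · rw [min_eq_left h.le]; nlinarith
          have e2 : -(a j k t * Real.sin (θ t k - θ t j)) ≤ -(min (a j k t) 0 * Real.sin r) := by
            rcases le_or_gt 0 (a j k t) with h | h
            · rw [min_eq_right h]; nlinarith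
            · rw [min_eq_left h.le]; nlinarith
          nlinarith
  -- sum of the bounds
  set sΛ := Finset.univ.filter (fun k => 0 < a i k t ∧ 0 < a j k t) with hsΛ
  set sO := Finset.univ.filter
      (fun k => ¬(0 < a i k t ∧ 0 < a j k t) ∧ k ≠ i ∧ k ≠ j) with hsO
  have hiΛ : i ∉ sΛ := by simp [hsΛ, hdiag i t]
  have hjΛ : j ∉ sΛ := by simp [hsΛ, hdiag j t]
  have hunion : (Finset.univ : Finset (Fin m)) = ({i, j} ∪ sΛ) ∪ sO := by
    ext k
    simp only [Finset.mem_union, Finset.mem_insert, Finset.mem_singleton, Finset.mem_filter,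
      Finset.mem_univ, true_and, hsΛ, hsO]
    constructor
    · intro _
      by_cases hki : k = i
      · tauto
      · by_cases hkj : k = j
        · tauto
        · by_cases hΛ : 0 < a i k t ∧ 0 < a j k t <;> tauto
    · tauto
  have hd1 : Disjoint ({i, j} : Finset (Fin m)) sΛ := by
    rw [Finset.disjoint_left]
    intro k hk
    simp only [Finset.mem_insert, Finset.mem_singleton] at hk
    rcases hk with rfl | rfl
    · exact hiΛ
    · exact hjΛ
  have hd2 : Disjoint (({i, j} : Finset (Fin m)) ∪ sΛ) sO := by
    rw [Finset.disjoint_right]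
    intro k hk
    simp only [hsO, Finset.mem_filter, Finset.mem_univ, true_and] at hk
    simp only [Finset.mem_union, Finset.mem_insert, Finset.mem_singleton, hsΛ,
      Finset.mem_filter, Finset.mem_univ, true_and]
    tauto
  have hBsum : ∑ k, B k = -((a i j t + a j i t) * Real.sin r)
      - (∑ k ∈ sO, (min (a i k t) 0 + min (a j k t) 0)) * Real.sin r
      - (∑ k ∈ sΛ, min (a i k t) (a j k t)) * Real.sin r := by
    rw [hunion, Finset.sum_union hd2, Finset.sum_union hd1, Finset.sum_pair hij]
    have hBi : B i = -(a j i t * Real.sin r) := by simp [hB]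
    have hBj : B j = -(a i j t * Real.sin r) := by simp [hB, hij.symm]
    have hBΛ : ∑ k ∈ sΛ, B k = -((∑ k ∈ sΛ, min (a i k t) (a j k t)) * Real.sin r) := by
      rw [Finset.sum_mul, ← Finset.sum_neg_distrib]
      apply Finset.sum_congr rfl
      intro k hk
      simp only [hsΛ, Finset.mem_filter, Finset.mem_univ, true_and] at hk
      have hki : k ≠ i := by rintro rfl; rw [hdiag] at hk; exact lt_irrefl 0 hk.1
      have hkj : k ≠ j := by rintro rfl; rw [hdiag] at hk; exact lt_irrefl 0 hk.2
      simp [hB, hki, hkj, hk]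
    have hBO : ∑ k ∈ sO, B k
        = -((∑ k ∈ sO, (min (a i k t) 0 + min (a j k t) 0)) * Real.sin r) := by
      rw [Finset.sum_mul, ← Finset.sum_neg_distrib]
      apply Finset.sum_congr rfl
      intro k hk
      simp only [hsO, Finset.mem_filter, Finset.mem_univ, true_and] at hk
      obtain ⟨hΛ, hki, hkj⟩ := hk
      simp [hB, hki, hkj, hΛ]
    rw [hBi, hBj, hBΛ, hBO]; ring
  have hsum : (∑ k, a i k t * Real.sin (θ t k - θ t i))
      - (∑ k, a j k t * Real.sin (θ t k - θ t j))
      ≤ ∑ k, B k := by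
    rw [← Finset.sum_sub_distrib]
    exact Finset.sum_le_sum fun k _ => hpt k
  have hc := hcond t ht i j hij
  rw [← hsΛ, ← hsO] at hc
  rw [hBsum] at hsum
  linarith


theorem stmt0
    (m : ℕ) (hm : 2 ≤ m)
    (ω : Fin m → ℝ → ℝ) (a : Fin m → Fin m → ℝ → ℝ)
    (hωc : ∀ i, ContinuousOn (ω i) (Set.Ici 0))
    (hac : ∀ i j, ContinuousOn (a i j) (Set.Ici 0))
    (hdiag : ∀ i t, a i i t = 0)
    (r : ℝ) (hr0 : 0 ≤ r) (hr1 : r < Real.pi / 2)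
    (hcond : ∀ t, 0 ≤ t → ∀ i j : Fin m, i ≠ j →
      ω i t - ω j t - (a i j t + a j i t) * Real.sin r
        - (∑ k ∈ Finset.univ.filter
            (fun k => ¬(0 < a i k t ∧ 0 < a j k t) ∧ k ≠ i ∧ k ≠ j),
            (min (a i k t) 0 + min (a j k t) 0)) * Real.sin r
        - (∑ k ∈ Finset.univ.filter (fun k => 0 < a i k t ∧ 0 < a j k t),
            min (a i k t) (a j k t)) * Real.sin r < 0) :
    ∀ θ : ℝ → Fin m → ℝ, IsKuramotoSol m ω a θ →
      (∀ i j, |θ 0 i - θ 0 j| ≤ r) →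
      ∀ t, 0 ≤ t → ∀ i j, |θ t i - θ t j| ≤ r := by
  intro θ hθ hinit t ht i j
  rcases eq_or_lt_of_le hr0 with hre | hrpos
  · -- `r = 0` : the hypotheses are contradictory
    exfalso
    have h01 : (⟨0, by omega⟩ : Fin m) ≠ (⟨1, by omega⟩ : Fin m) := by
      simp [Fin.ext_iff]
    have h1 := hcond 0 le_rfl _ _ h01
    have h2 := hcond 0 le_rfl _ _ h01.symm
    rw [← hre] at h1 h2
    simp only [Real.sin_zero, mul_zero, sub_zero] at h1 h2
    linarith
  · classical
    set g : Fin m × Fin m → ℝ → ℝ := fun p x => θ x p.1 - θ x p.2 with hg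
    have hne : (Finset.univ : Finset (Fin m × Fin m)).Nonempty :=
      ⟨(⟨0, by omega⟩, ⟨0, by omega⟩), Finset.mem_univ _⟩
    set f : ℝ → ℝ := fun x => Finset.univ.sup' hne (fun p => g p x) with hfdef
    set D : Fin m × Fin m → ℝ → ℝ := fun p x =>
      (ω p.1 x + ∑ k, a p.1 k x * Real.sin (θ x k - θ x p.1))
        - (ω p.2 x + ∑ k, a p.2 k x * Real.sin (θ x k - θ x p.2)) with hDdef
    have hD : ∀ (p : Fin m × Fin m) (x : ℝ), 0 ≤ x → HasDerivAt (g p) (D p x) x :=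
      fun p x hx => (hθ p.1 x hx).sub (hθ p.2 x hx)
    have hfCA : ∀ x : ℝ, 0 ≤ x → ContinuousAt f x := by
      intro x hx
      exact Filter.Tendsto.finset_sup'_nhds_apply hne
        (fun p _ => ((hD p x hx).continuousAt : ContinuousAt (g p) x))
    have hAne : ∀ x : ℝ,
        (Finset.univ.filter (fun p : Fin m × Fin m => g p x = f x)).Nonempty := by
      intro x
      obtain ⟨p, hp, hpe⟩ := Finset.exists_mem_eq_sup' hne (fun p => g p x)
      exact ⟨p, Finset.mem_filter.mpr ⟨hp, hpe.symm⟩⟩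
    set f' : ℝ → ℝ := fun x =>
      (Finset.univ.filter (fun p : Fin m × Fin m => g p x = f x)).sup' (hAne x)
        (fun p => D p x) with hf'def
    have hfc : ContinuousOn f (Set.Icc 0 t) :=
      fun x hx => (hfCA x hx.1).continuousWithinAt
    have hslope : ∀ x ∈ Set.Ico 0 t, ∀ s, f' x < s →
        ∃ᶠ z in 𝓝[>] x, slope f x z < s := by
      intro x hx s hs
      have hfreq : ∃ p : Fin m × Fin m, ∃ᶠ z in 𝓝[>] x, g p z = f z := by
        by_contra h
        push_neg at h
        have h' : ∀ p : Fin m × Fin m, ∀ᶠ z in 𝓝[>] x, ¬g p z = f z :=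
          fun p => h p
        have hall : ∀ᶠ z in 𝓝[>] x, ∀ p : Fin m × Fin m, ¬g p z = f z :=
          Filter.eventually_all.mpr h'
        obtain ⟨z, hz⟩ := hall.exists
        obtain ⟨p, hp⟩ := hAne z
        rw [Finset.mem_filter] at hp
        exact hz p hp.2
      obtain ⟨p, hp⟩ := hfreq
      have hgx : g p x = f x := by
        have h1 : Tendsto (g p) (𝓝[>] x) (𝓝 (g p x)) :=
          ((hD p x hx.1).continuousAt.tendsto).mono_left nhdsWithin_le_nhds
        have h2 : Tendsto f (𝓝[>] x) (𝓝 (f x)) :=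
          ((hfCA x hx.1).tendsto).mono_left nhdsWithin_le_nhds
        exact tendsto_nhds_unique_of_frequently_eq h1 h2 hp
      have hpA : p ∈ Finset.univ.filter (fun q : Fin m × Fin m => g q x = f x) :=
        Finset.mem_filter.mpr ⟨Finset.mem_univ _, hgx⟩
      have hDlt : D p x < s := lt_of_le_of_lt (Finset.le_sup' (fun q => D q x) hpA) hs
      have hmono : 𝓝[>] x ≤ 𝓝[≠] x :=
        nhdsWithin_mono x (fun z hz => ne_of_gt hz)
      have htend : Tendsto (slope (g p) x) (𝓝[>] x) (𝓝 (D p x)) :=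
        (hasDerivAt_iff_tendsto_slope.mp (hD p x hx.1)).mono_left hmono
      have hev : ∀ᶠ z in 𝓝[>] x, slope (g p) x z < s := htend.eventually_lt_const hDlt
      refine (hp.and_eventually hev).mono ?_
      rintro z ⟨hz1, hz2⟩
      rwa [slope_def_field, ← hz1, ← hgx, ← slope_def_field]
    have hbound : ∀ x ∈ Set.Ico 0 t, f x = r → f' x < 0 := by
      intro x hx hfx
      rw [hf'def]
      rw [Finset.sup'_lt_iff]
      intro p hp
      rw [Finset.mem_filter] at hp
      have hgpx : g p x = r := hp.2.trans hfx
      have hub : ∀ q : Fin m × Fin m, g q x ≤ r := by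
        intro q
        have h := Finset.le_sup' (fun q : Fin m × Fin m => g q x) (Finset.mem_univ q)
        calc g q x ≤ f x := h
        _ = r := hfx
      have hij' : p.1 ≠ p.2 := by
        intro h
        rw [hg] at hgpx
        simp only [h, sub_self] at hgpx
        exact absurd hgpx.symm (ne_of_gt hrpos)
      exact kuramoto_key m ω a hdiag r hrpos hr1 hcond θ x hx.1 p.1 p.2 hij' hgpx
        (fun k => hub (p.1, k)) (fun k => hub (k, p.2))
    have ha0 : f 0 ≤ r :=
      Finset.sup'_le hne _ (fun p _ => le_of_abs_le (hinit p.1 p.2))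
    have main := image_le_of_liminf_slope_right_lt_deriv_boundary
      (f := f) (f' := f') (a := 0) (b := t) (B := fun _ => r) (B' := fun _ => 0)
      hfc hslope ha0 (fun x => hasDerivAt_const x r) hbound
    have hft : f t ≤ r := main (Set.right_mem_Icc.mpr ht)
    have h1 : θ t i - θ t j ≤ r :=
      le_trans (Finset.le_sup' (fun q : Fin m × Fin m => g q t) (Finset.mem_univ (i, j))) hft
    have h2 : θ t j - θ t i ≤ r :=
      le_trans (Finset.le_sup' (fun q : Fin m × Fin m => g q t) (Finset.mem_univ (j, i))) hft
    rw [abs_le]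
    constructor <;> linarith
end

section
/- Let Δω = sup_{t≥0} max_{i≠j} |ω_i(t) − ω_j(t)|, μ₀ = inf_{t≥0} min_{i≠j} Σ_{k∈Λ_{ij}(t)} min(a_{ik}(t), a_{jk}(t)), μ₁ = sup_{t≥0} max_{i≠j} Σ_{k∉Λ_{ij}(t), k≠i,j} (−min(a_{ik}(t),0) − min(a_{jk}(t),0)), and μ₂ = inf_{t≥0} min_{i≠j} (a_{ij}(t) + a_{ji}(t)). If Δω < (μ₀ + μ₂ − μ₁)·sin r, then A^r is invariant for the time-varying Kuramoto system. -/
open scoped BigOperators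
open Matrix

/-- The region `A^r` is invariant for the system. -/
def InvariantAr (m : ℕ) (ω : Fin m → ℝ → ℝ) (a : Fin m → Fin m → ℝ → ℝ)
    (r : ℝ) : Prop :=
  ∀ θ : ℝ → Fin m → ℝ, IsKuramotoSol m ω a θ →
    (∀ i j, |θ 0 i - θ 0 j| ≤ r) →
    ∀ t, 0 ≤ t → ∀ i j, |θ t i - θ t j| ≤ r

open Real Filter Topology Finset in

theorem local_dec (f : ℝ → ℝ) (d t : ℝ) (hf : HasDerivAt f d t) (hd : d < 0) :
    ∀ᶠ s in 𝓝[>] t, f s < f t := by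
  have h : Tendsto (slope f t) (𝓝[≠] t) (𝓝 d) := hasDerivAt_iff_tendsto_slope.mp hf
  have h2 : ∀ᶠ s in 𝓝[≠] t, slope f t s < 0 := h.eventually_lt_const hd
  have h3 : ∀ᶠ s in 𝓝[>] t, slope f t s < 0 :=
    h2.filter_mono (nhdsWithin_mono t fun x hx => ne_of_gt hx)
  have h4 : ∀ᶠ s in 𝓝[>] t, t < s := eventually_mem_nhdsWithin
  filter_upwards [h3, h4] with s hs hts
  rw [slope_def_field] at hs
  have h5 := mul_neg_of_neg_of_pos hs (sub_pos.mpr hts)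
  rw [div_mul_cancel₀ _ (ne_of_gt (sub_pos.mpr hts))] at h5
  linarith

open Real Filter Topology Finset in

theorem sum_bound (m : ℕ) (A B : Fin m → ℝ) (φ : Fin m → ℝ) (i j : Fin m) (hij : i ≠ j)
    (hAi : A i = 0) (hBj : B j = 0)
    (r : ℝ) (hr0 : 0 < r) (hr1 : r < π / 2)
    (hφij : φ i - φ j = r) (hmax : ∀ k, φ k ≤ φ i) (hmin : ∀ k, φ j ≤ φ k)
    (μ₀ μ₁ μ₂ : ℝ)
    (h0 : μ₀ ≤ ∑ k ∈ univ.filter (fun k => 0 < A k ∧ 0 < B k), min (A k) (B k))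
    (h1 : (∑ k ∈ univ.filter (fun k => ¬(0 < A k ∧ 0 < B k) ∧ k ≠ i ∧ k ≠ j),
        (-(min (A k) 0) - min (B k) 0)) ≤ μ₁)
    (h2 : μ₂ ≤ A j + B i) :
    (μ₀ + μ₂ - μ₁) * Real.sin r ≤
      ∑ k, (A k * Real.sin (φ i - φ k) + B k * Real.sin (φ k - φ j)) := by
  set S := Real.sin r with hS
  have hSpos : 0 < S := Real.sin_pos_of_pos_of_lt_pi hr0 (by linarith [Real.pi_pos])
  set g : Fin m → ℝ := fun k => A k * Real.sin (φ i - φ k) + B k * Real.sin (φ k - φ j) with hg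
  -- per-k facts
  have hx0 : ∀ k, 0 ≤ φ i - φ k := fun k => sub_nonneg.mpr (hmax k)
  have hy0 : ∀ k, 0 ≤ φ k - φ j := fun k => sub_nonneg.mpr (hmin k)
  have hxy : ∀ k, (φ i - φ k) + (φ k - φ j) = r := fun k => by rw [← hφij]; ring
  have hxr : ∀ k, φ i - φ k ≤ r := fun k => by have := hy0 k; have := hxy k; linarith
  have hyr : ∀ k, φ k - φ j ≤ r := fun k => by have := hx0 k; have := hxy k; linarith
  have hsinx0 : ∀ k, 0 ≤ Real.sin (φ i - φ k) := fun k =>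
    Real.sin_nonneg_of_nonneg_of_le_pi (hx0 k) (by have := hxr k; linarith [Real.pi_pos])
  have hsiny0 : ∀ k, 0 ≤ Real.sin (φ k - φ j) := fun k =>
    Real.sin_nonneg_of_nonneg_of_le_pi (hy0 k) (by have := hyr k; linarith [Real.pi_pos])
  have hsinxS : ∀ k, Real.sin (φ i - φ k) ≤ S := fun k =>
    Real.sin_le_sin_of_le_of_le_pi_div_two (by linarith [hx0 k, Real.pi_pos]) hr1.le (hxr k)
  have hsinyS : ∀ k, Real.sin (φ k - φ j) ≤ S := fun k =>
    Real.sin_le_sin_of_le_of_le_pi_div_two (by linarith [hy0 k, Real.pi_pos]) hr1.le (hyr k)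
  -- split the sum
  have hsplit : ∑ k, g k = (∑ k ∈ univ.filter (fun k => 0 < A k ∧ 0 < B k), g k) + ∑ k ∈ univ.filter (fun k => ¬ (0 < A k ∧ 0 < B k)), g k :=
    (Finset.sum_filter_add_sum_filter_not univ _ g).symm
  -- bound on Λ
  have hΛ : μ₀ * S ≤ ∑ k ∈ univ.filter (fun k => 0 < A k ∧ 0 < B k), g k := by
    have step : ∀ k ∈ univ.filter (fun k => 0 < A k ∧ 0 < B k), min (A k) (B k) * S ≤ g k := by
      intro k hk
      simp only [mem_filter] at hk
      obtain ⟨-, hA, hB⟩ := hk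
      have hmin0 : 0 ≤ min (A k) (B k) := le_min hA.le hB.le
      have key : S ≤ Real.sin (φ i - φ k) + Real.sin (φ k - φ j) := by
        rw [hS, ← hxy k, Real.sin_add]
        nlinarith [Real.cos_le_one (φ i - φ k), Real.cos_le_one (φ k - φ j),
          hsinx0 k, hsiny0 k]
      calc min (A k) (B k) * S ≤ min (A k) (B k) * (Real.sin (φ i - φ k) + Real.sin (φ k - φ j)) :=
            mul_le_mul_of_nonneg_left key hmin0
        _ ≤ g k := by
            have := mul_le_mul_of_nonneg_right (min_le_left (A k) (B k)) (hsinx0 k)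
            have := mul_le_mul_of_nonneg_right (min_le_right (A k) (B k)) (hsiny0 k)
            simp only [hg]; nlinarith
    calc μ₀ * S ≤ (∑ k ∈ univ.filter (fun k => 0 < A k ∧ 0 < B k), min (A k) (B k)) * S :=
          mul_le_mul_of_nonneg_right h0 hSpos.le
      _ = ∑ k ∈ univ.filter (fun k => 0 < A k ∧ 0 < B k), min (A k) (B k) * S := by rw [Finset.sum_mul]
      _ ≤ _ := Finset.sum_le_sum step
  -- now the complement
  have hiP : ¬ (0 < A i ∧ 0 < B i) := by simp [hAi]
  have hjP : ¬ (0 < A j ∧ 0 < B j) := by simp [hBj]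
  have hgi : g i = B i * S := by simp [hg, hφij, hAi, hS]
  have hgj : g j = A j * S := by simp [hg, hφij, hBj, sub_self, Real.sin_zero, hS]
  -- the rest-set bound
  have hrest : ∀ k ∈ univ.filter (fun k => ¬ (0 < A k ∧ 0 < B k) ∧ k ≠ i ∧ k ≠ j),
      (min (A k) 0 + min (B k) 0) * S ≤ g k := by
    intro k hk
    have hA : min (A k) 0 * S ≤ A k * Real.sin (φ i - φ k) := by
      rcases le_or_gt 0 (A k) with h | h
      · have : min (A k) 0 = 0 := min_eq_right h
        rw [this, zero_mul]; exact mul_nonneg h (hsinx0 k)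
      · have : min (A k) 0 = A k := min_eq_left h.le
        rw [this]
        have := mul_le_mul_of_nonpos_left (hsinxS k) h.le
        linarith [mul_le_mul_of_nonpos_left (hsinxS k) h.le]
    have hB : min (B k) 0 * S ≤ B k * Real.sin (φ k - φ j) := by
      rcases le_or_gt 0 (B k) with h | h
      · have : min (B k) 0 = 0 := min_eq_right h
        rw [this, zero_mul]; exact mul_nonneg h (hsiny0 k)
      · have : min (B k) 0 = B k := min_eq_left h.le
        rw [this]
        linarith [mul_le_mul_of_nonpos_left (hsinyS k) h.le]
    simp only [hg]; nlinarith [hA, hB]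
  -- decompose the complement sum
  have hmemi : i ∈ univ.filter (fun k => ¬ (0 < A k ∧ 0 < B k)) := by
    simp [hAi]
  have hmemj : j ∈ (univ.filter (fun k => ¬ (0 < A k ∧ 0 < B k))).erase i := by
    simp [hBj, hij.symm, Ne.symm hij]
  have hcompl : ∑ k ∈ univ.filter (fun k => ¬ (0 < A k ∧ 0 < B k)), g k
      = g i + (g j + ∑ k ∈ ((univ.filter (fun k => ¬ (0 < A k ∧ 0 < B k))).erase i).erase j, g k) := by
    rw [Finset.add_sum_erase _ g hmemj, Finset.add_sum_erase _ g hmemi]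
  have hsetrest : ((univ.filter (fun k => ¬ (0 < A k ∧ 0 < B k))).erase i).erase j
      = univ.filter (fun k => ¬(0 < A k ∧ 0 < B k) ∧ k ≠ i ∧ k ≠ j) := by
    ext k
    simp only [Finset.mem_erase, Finset.mem_filter, Finset.mem_univ, true_and]
    tauto
  have hrestsum : (-μ₁) * S ≤ ∑ k ∈ ((univ.filter (fun k => ¬ (0 < A k ∧ 0 < B k))).erase i).erase j, g k := by
    rw [hsetrest]
    have hstep : ∑ k ∈ univ.filter (fun k => ¬(0 < A k ∧ 0 < B k) ∧ k ≠ i ∧ k ≠ j),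
        (min (A k) 0 + min (B k) 0) * S ≤
        ∑ k ∈ univ.filter (fun k => ¬(0 < A k ∧ 0 < B k) ∧ k ≠ i ∧ k ≠ j), g k :=
      Finset.sum_le_sum hrest
    have hsum2 : -μ₁ ≤ ∑ k ∈ univ.filter (fun k => ¬(0 < A k ∧ 0 < B k) ∧ k ≠ i ∧ k ≠ j),
        (min (A k) 0 + min (B k) 0) := by
      have : ∑ k ∈ univ.filter (fun k => ¬(0 < A k ∧ 0 < B k) ∧ k ≠ i ∧ k ≠ j),
          (min (A k) 0 + min (B k) 0)
          = -∑ k ∈ univ.filter (fun k => ¬(0 < A k ∧ 0 < B k) ∧ k ≠ i ∧ k ≠ j),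
          (-(min (A k) 0) - min (B k) 0) := by
        rw [← Finset.sum_neg_distrib]
        exact Finset.sum_congr rfl fun k _ => by ring
      rw [this]
      linarith [h1]
    calc (-μ₁) * S ≤ (∑ k ∈ univ.filter (fun k => ¬(0 < A k ∧ 0 < B k) ∧ k ≠ i ∧ k ≠ j),
          (min (A k) 0 + min (B k) 0)) * S := mul_le_mul_of_nonneg_right hsum2 hSpos.le
      _ = ∑ k ∈ univ.filter (fun k => ¬(0 < A k ∧ 0 < B k) ∧ k ≠ i ∧ k ≠ j),
          (min (A k) 0 + min (B k) 0) * S := by rw [Finset.sum_mul]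
      _ ≤ _ := hstep
  have hij2 : μ₂ * S ≤ g i + g j := by
    rw [hgi, hgj]
    calc μ₂ * S ≤ (A j + B i) * S := mul_le_mul_of_nonneg_right h2 hSpos.le
      _ = B i * S + A j * S := by ring
  have := hsplit
  show (μ₀ + μ₂ - μ₁) * S ≤ ∑ k, g k
  rw [hsplit, hcompl]
  linarith [hΛ, hij2, hrestsum]

set_option maxHeartbeats 1000000 in
open Real Filter Topology Finset in
theorem stmt1
    (m : ℕ) (hm : 2 ≤ m)
    (ω : Fin m → ℝ → ℝ) (a : Fin m → Fin m → ℝ → ℝ)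
    (hωc : ∀ i, ContinuousOn (ω i) (Set.Ici 0))
    (hac : ∀ i j, ContinuousOn (a i j) (Set.Ici 0))
    (hdiag : ∀ i t, a i i t = 0)
    (r : ℝ) (hr0 : 0 ≤ r) (hr1 : r < Real.pi / 2)
    -- `Δω = sup_{t,i≠j} |ω_i - ω_j|`, `μ₀ = inf ...`, `μ₁ = sup ...`,
    -- `μ₂ = inf ...`, and `Δω < (μ₀ + μ₂ - μ₁)·sin r`, phrased equivalently:
    -- there exist bounds `Δω, μ₀, μ₁, μ₂` of the corresponding quantities
    -- satisfying the strict inequality.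
    (hcond : ∃ Δω μ₀ μ₁ μ₂ : ℝ,
      (∀ t, 0 ≤ t → ∀ i j : Fin m, i ≠ j → |ω i t - ω j t| ≤ Δω) ∧
      (∀ t, 0 ≤ t → ∀ i j : Fin m, i ≠ j →
        μ₀ ≤ ∑ k ∈ Finset.univ.filter (fun k => 0 < a i k t ∧ 0 < a j k t),
               min (a i k t) (a j k t)) ∧
      (∀ t, 0 ≤ t → ∀ i j : Fin m, i ≠ j →
        (∑ k ∈ Finset.univ.filter
            (fun k => ¬(0 < a i k t ∧ 0 < a j k t) ∧ k ≠ i ∧ k ≠ j),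
            (-(min (a i k t) 0) - min (a j k t) 0)) ≤ μ₁) ∧
      (∀ t, 0 ≤ t → ∀ i j : Fin m, i ≠ j → μ₂ ≤ a i j t + a j i t) ∧
      Δω < (μ₀ + μ₂ - μ₁) * Real.sin r) :
    InvariantAr m ω a r := by
  obtain ⟨Δω, μ₀, μ₁, μ₂, hΔ, h0, h1, h2, hlt⟩ := hcond
  intro θ hθ hinit
  have hne : (⟨0, by omega⟩ : Fin m) ≠ ⟨1, by omega⟩ := by simp [Fin.ext_iff]
  have hΔ0 : 0 ≤ Δω := le_trans (abs_nonneg _) (hΔ 0 le_rfl _ _ hne)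
  have hprod : 0 < (μ₀ + μ₂ - μ₁) * Real.sin r := lt_of_le_of_lt hΔ0 hlt
  have hrpos : 0 < r := by
    rcases hr0.lt_or_eq with h | h
    · exact h
    · exfalso; rw [← h, Real.sin_zero, mul_zero] at hprod; exact lt_irrefl 0 hprod
  have hsinpos : 0 < Real.sin r :=
    Real.sin_pos_of_pos_of_lt_pi hrpos (by linarith [Real.pi_pos])
  have hcont : ∀ (i : Fin m) t, 0 ≤ t → ContinuousAt (fun s => θ s i) t :=
    fun i t ht => (hθ i t ht).continuousAt
  by_contra hbad
  push_neg at hbad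
  obtain ⟨t₁, ht₁, i₁, j₁, hbad1⟩ := hbad
  set B : Set ℝ := {t | 0 ≤ t ∧ ∃ i j, r < |θ t i - θ t j|} with hBdef
  have hBne : B.Nonempty := ⟨t₁, ht₁, i₁, j₁, hbad1⟩
  have hBbdd : BddBelow B := ⟨0, fun x hx => hx.1⟩
  set T := sInf B with hTdef
  have hT0 : 0 ≤ T := le_csInf hBne fun x hx => hx.1
  have hgoodlt : ∀ s, 0 ≤ s → s < T → ∀ i j, |θ s i - θ s j| ≤ r := by
    intro s hs hsT i j
    by_contra h
    exact absurd (csInf_le hBbdd ⟨hs, i, j, lt_of_not_ge h⟩) (not_le.mpr hsT)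
  have hgoodT : ∀ i j, |θ T i - θ T j| ≤ r := by
    intro i j
    by_contra h
    push_neg at h
    rcases hT0.lt_or_eq with hTpos | hTeq
    · have hc : ContinuousAt (fun s => |θ s i - θ s j|) T :=
        ((hcont i T hT0).sub (hcont j T hT0)).abs
      have hev : ∀ᶠ s in 𝓝 T, r < |θ s i - θ s j| :=
        (continuousAt_const (y := r)).eventually_lt hc h
      have hev2 : ∀ᶠ s in 𝓝 T, 0 < s := eventually_gt_nhds hTpos
      have hev3 : ∀ᶠ s in 𝓝[<] T, r < |θ s i - θ s j| ∧ 0 < s :=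
        ((hev.and hev2).filter_mono nhdsWithin_le_nhds)
      have hev4 : ∀ᶠ s in 𝓝[<] T, s < T := eventually_mem_nhdsWithin
      have hne2 : (𝓝[<] T).NeBot := nhdsWithin_Iio_self_neBot' ⟨T - 1, (by linarith)⟩
      obtain ⟨s, ⟨hs1, hs2⟩, hs3⟩ := (hev3.and hev4).exists
      exact absurd (csInf_le hBbdd ⟨hs2.le, i, j, hs1⟩) (not_le.mpr hs3)
    · exact absurd (hinit i j) (not_le.mpr (by rw [hTeq]; exact h))
  -- the key eventual statement
  have hev : ∀ i j : Fin m, ∀ᶠ s in 𝓝[>] T, θ s i - θ s j < r := by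
    intro i j
    have hle : θ T i - θ T j ≤ r := (abs_le.mp (hgoodT i j)).2
    rcases hle.lt_or_eq with hlt' | heq
    · have hc : ContinuousAt (fun s => θ s i - θ s j) T :=
        (hcont i T hT0).sub (hcont j T hT0)
      exact (hc.eventually_lt continuousAt_const hlt').filter_mono nhdsWithin_le_nhds
    · -- extremal pair: use the derivative
      have hij : i ≠ j := by
        intro hc; rw [hc, sub_self] at heq; exact absurd heq.symm (ne_of_gt hrpos)
      have hi : ∀ k, θ T k ≤ θ T i := by
        intro k
        have := (abs_le.mp (hgoodT k j)).2
        linarith [heq]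
      have hj : ∀ k, θ T j ≤ θ T k := by
        intro k
        have := (abs_le.mp (hgoodT i k)).2
        linarith [heq]
      have hD : HasDerivAt (fun s => θ s i - θ s j)
          ((ω i T + ∑ k : Fin m, a i k T * Real.sin (θ T k - θ T i)) -
           (ω j T + ∑ k : Fin m, a j k T * Real.sin (θ T k - θ T j))) T :=
        (hθ i T hT0).sub (hθ j T hT0)
      have hkey := sum_bound m (fun k => a i k T) (fun k => a j k T) (θ T) i j hij
        (hdiag i T) (hdiag j T) r hrpos hr1 heq hi hj μ₀ μ₁ μ₂
        (h0 T hT0 i j hij) (h1 T hT0 i j hij) (h2 T hT0 i j hij)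
      have hrw : ∑ k : Fin m, a i k T * Real.sin (θ T k - θ T i) -
          ∑ k : Fin m, a j k T * Real.sin (θ T k - θ T j)
          = -∑ k : Fin m, (a i k T * Real.sin (θ T i - θ T k) +
              a j k T * Real.sin (θ T k - θ T j)) := by
        rw [← Finset.sum_sub_distrib, ← Finset.sum_neg_distrib]
        refine Finset.sum_congr rfl fun k _ => ?_
        have hs : Real.sin (θ T k - θ T i) = -Real.sin (θ T i - θ T k) := by
          rw [← Real.sin_neg, neg_sub]
        rw [hs]; ring
      have hω : ω i T - ω j T ≤ Δω := (abs_le.mp (hΔ T hT0 i j hij)).2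
      have hDneg : (ω i T + ∑ k : Fin m, a i k T * Real.sin (θ T k - θ T i)) -
           (ω j T + ∑ k : Fin m, a j k T * Real.sin (θ T k - θ T j)) < 0 := by
        have e : (ω i T + ∑ k : Fin m, a i k T * Real.sin (θ T k - θ T i)) -
           (ω j T + ∑ k : Fin m, a j k T * Real.sin (θ T k - θ T j))
           = (ω i T - ω j T) + (∑ k : Fin m, a i k T * Real.sin (θ T k - θ T i) -
              ∑ k : Fin m, a j k T * Real.sin (θ T k - θ T j)) := by ring
        rw [e, hrw]
        linarith [hkey, hω, hlt]
      have := local_dec _ _ _ hD hDneg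
      filter_upwards [this] with s hs
      calc θ s i - θ s j < θ T i - θ T j := hs
        _ = r := heq
  -- combine over all pairs
  have hall : ∀ᶠ s in 𝓝[>] T, ∀ i j : Fin m, θ s i - θ s j < r :=
    eventually_all.2 fun i => eventually_all.2 fun j => hev i j
  obtain ⟨u, hu, hsub⟩ := mem_nhdsGT_iff_exists_Ioo_subset.mp hall
  have hub : ∀ b ∈ B, u ≤ b := by
    intro b hb
    obtain ⟨hb0, i, j, hbij⟩ := hb
    by_contra hc
    push_neg at hc
    rcases lt_trichotomy b T with hbT | hbT | hbT
    · exact absurd hbij (not_lt.mpr (hgoodlt b hb0 hbT i j))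
    · exact absurd hbij (not_lt.mpr (hbT ▸ hgoodT i j))
    · have hmem : b ∈ Set.Ioo T u := ⟨hbT, hc⟩
      have := hsub hmem
      have habs : |θ b i - θ b j| < r := abs_sub_lt_iff.mpr ⟨this i j, this j i⟩
      exact absurd hbij (not_lt.mpr habs.le)
  have : u ≤ T := le_csInf hBne hub
  exact absurd hu (not_lt.mpr this)
end

section
/- Let L ∈ ℝ^{m×m} be a symmetric matrix with all row sums zero and let r ∈ [0,π/2). Then xᵀ·L̃^r·x ≤ xᵀ·L·x for every x ∈ ℝ^m with Σ_i x_i = 0; consequently, χ₁ ≥ χ₂, where χ₁ = min{ xᵀLx : ‖x‖ = 1, Σ_i x_i = 0 } and χ₂ = min{ xᵀL̃^r x : ‖x‖ = 1, Σ_i x_i = 0 }. -/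
open scoped BigOperators
open Matrix

/-- The `r`-modification `M̃^r` of a matrix `M`: off-diagonal entries are
multiplied by `cos r` when nonpositive and kept when positive; diagonal
entries are minus the sum of the off-diagonal entries of the row. -/
noncomputable def rmod (m : ℕ) (M : Matrix (Fin m) (Fin m) ℝ) (r : ℝ) :
    Matrix (Fin m) (Fin m) ℝ :=
  Matrix.of fun i j =>
    if i = j then
      -(∑ k ∈ Finset.univ.filter (fun k => k ≠ i),
          (if M i k ≤ 0 then M i k * Real.cos r else M i k))
    else (if M i j ≤ 0 then M i j * Real.cos r else M i j)

/-- The minimum of the quadratic form `xᵀMx` over (Euclidean) unit vectors `x`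
orthogonal to `𝟙`, i.e. with `Σᵢ xᵢ = 0`. -/
noncomputable def minFormSumZero (m : ℕ) (M : Matrix (Fin m) (Fin m) ℝ) : ℝ :=
  sInf {y : ℝ | ∃ x : Fin m → ℝ, (∑ i, x i ^ 2) = 1 ∧ (∑ i, x i) = 0 ∧
    y = x ⬝ᵥ M.mulVec x}

lemma aux_dot (m : ℕ) (M : Matrix (Fin m) (Fin m) ℝ) (x : Fin m → ℝ) :
    x ⬝ᵥ M.mulVec x = ∑ i, ∑ j, x i * (M i j * x j) := by
  simp [Matrix.mulVec, dotProduct, Finset.mul_sum]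

lemma quad_eq {m : ℕ} (M : Matrix (Fin m) (Fin m) ℝ) (hsym : M.IsSymm)
    (hrow : ∀ i, ∑ j, M i j = 0) (x : Fin m → ℝ) :
    x ⬝ᵥ M.mulVec x = -(1/2) * ∑ i, ∑ j, M i j * (x i - x j)^2 := by
  have hcol : ∀ j, ∑ i, M i j = 0 := by
    intro j
    calc ∑ i, M i j = ∑ i, M j i :=
          Finset.sum_congr rfl (fun i _ => by rw [hsym.apply])
      _ = 0 := hrow j
  have h1 : ∑ i, ∑ j, M i j * x i ^ 2 = 0 := by
    refine Finset.sum_eq_zero fun i _ => ?_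
    rw [← Finset.sum_mul, hrow i, zero_mul]
  have h2 : ∑ i, ∑ j, M i j * x j ^ 2 = 0 := by
    rw [Finset.sum_comm]
    refine Finset.sum_eq_zero fun j _ => ?_
    rw [← Finset.sum_mul, hcol j, zero_mul]
  have expand : ∑ i, ∑ j, M i j * (x i - x j)^2
      = (∑ i, ∑ j, M i j * x i ^ 2) + (∑ i, ∑ j, M i j * x j ^ 2)
        - 2 * (∑ i, ∑ j, x i * (M i j * x j)) := by
    rw [← Finset.sum_add_distrib, Finset.mul_sum, ← Finset.sum_sub_distrib]
    refine Finset.sum_congr rfl fun i _ => ?_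
    rw [← Finset.sum_add_distrib, Finset.mul_sum, ← Finset.sum_sub_distrib]
    refine Finset.sum_congr rfl fun j _ => ?_
    ring
  rw [aux_dot, expand, h1, h2]
  ring

lemma rmod_rowsum (m : ℕ) (M : Matrix (Fin m) (Fin m) ℝ) (r : ℝ) (i : Fin m) :
    ∑ j, rmod m M r i j = 0 := by
  classical
  rw [← Finset.add_sum_erase Finset.univ _ (Finset.mem_univ i)]
  have h1 : rmod m M r i i
      = -(∑ k ∈ Finset.univ.erase i, (if M i k ≤ 0 then M i k * Real.cos r else M i k)) := by
    simp [rmod, Finset.filter_ne']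
  have h2 : ∑ j ∈ Finset.univ.erase i, rmod m M r i j
      = ∑ j ∈ Finset.univ.erase i, (if M i j ≤ 0 then M i j * Real.cos r else M i j) := by
    refine Finset.sum_congr rfl fun j hj => ?_
    have hji : i ≠ j := (Finset.ne_of_mem_erase hj).symm
    simp [rmod, if_neg hji]
  rw [h1, h2]; ring

lemma rmod_symm (m : ℕ) (M : Matrix (Fin m) (Fin m) ℝ) (hsym : M.IsSymm) (r : ℝ) :
    (rmod m M r).IsSymm := by
  rw [Matrix.IsSymm]
  ext i j
  by_cases h : i = j
  · subst h; rfl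
  · have h' : ¬ (j = i) := fun e => h e.symm
    simp [rmod, Matrix.transpose_apply, if_neg h, if_neg h', hsym.apply i j]

theorem stmt5
    (m : ℕ) (L : Matrix (Fin m) (Fin m) ℝ)
    (hsym : L.IsSymm) (hrow : ∀ i, ∑ j, L i j = 0)
    (r : ℝ) (hr0 : 0 ≤ r) (hr1 : r < Real.pi / 2) :
    (∀ x : Fin m → ℝ, (∑ i, x i) = 0 →
      x ⬝ᵥ (rmod m L r).mulVec x ≤ x ⬝ᵥ L.mulVec x) ∧
    minFormSumZero m (rmod m L r) ≤ minFormSumZero m L := by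
  classical
  set N := rmod m L r with hN
  have hNsym : N.IsSymm := rmod_symm m L hsym r
  have hNrow : ∀ i, ∑ j, N i j = 0 := rmod_rowsum m L r
  -- pointwise inequality (holds for all x)
  have main : ∀ x : Fin m → ℝ, x ⬝ᵥ N.mulVec x ≤ x ⬝ᵥ L.mulVec x := by
    intro x
    rw [quad_eq L hsym hrow x, quad_eq N hNsym hNrow x]
    have hterm : ∀ i j : Fin m,
        L i j * (x i - x j)^2 ≤ N i j * (x i - x j)^2 := by
      intro i j
      by_cases h : i = j
      · subst h; simp
      · have hNij : N i j = if L i j ≤ 0 then L i j * Real.cos r else L i j := by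
          simp [hN, rmod, if_neg h]
        rw [hNij]
        by_cases hL : L i j ≤ 0
        · rw [if_pos hL]
          have : L i j ≤ L i j * Real.cos r := by
            nlinarith [Real.cos_le_one r, sq_nonneg (x i - x j)]
          nlinarith [sq_nonneg (x i - x j)]
        · rw [if_neg hL]
      -- done
    have hsum : ∑ i, ∑ j, L i j * (x i - x j)^2 ≤ ∑ i, ∑ j, N i j * (x i - x j)^2 :=
      Finset.sum_le_sum fun i _ => Finset.sum_le_sum fun j _ => hterm i j
    linarith
  refine ⟨fun x _ => main x, ?_⟩
  -- the sInf inequality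
  unfold minFormSumZero
  set SN := {y : ℝ | ∃ x : Fin m → ℝ, (∑ i, x i ^ 2) = 1 ∧ (∑ i, x i) = 0 ∧
    y = x ⬝ᵥ N.mulVec x} with hSN
  set SL := {y : ℝ | ∃ x : Fin m → ℝ, (∑ i, x i ^ 2) = 1 ∧ (∑ i, x i) = 0 ∧
    y = x ⬝ᵥ L.mulVec x} with hSL
  by_cases hne : ∃ x : Fin m → ℝ, (∑ i, x i ^ 2) = 1 ∧ (∑ i, x i) = 0
  · have hSLne : SL.Nonempty := by
      obtain ⟨x, hx1, hx2⟩ := hne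
      exact ⟨x ⬝ᵥ L.mulVec x, x, hx1, hx2, rfl⟩
    have hbdd : BddBelow SN := by
      refine ⟨-(∑ i, ∑ j, |N i j|), ?_⟩
      rintro y ⟨x, hx1, hx2, rfl⟩
      have hxle : ∀ i, |x i| ≤ 1 := by
        intro i
        have : x i ^ 2 ≤ 1 := by
          rw [← hx1]
          exact Finset.single_le_sum (fun k _ => sq_nonneg (x k)) (Finset.mem_univ i)
        nlinarith [abs_nonneg (x i), sq_abs (x i)]
      rw [aux_dot]
      have : ∑ i, ∑ j, -|N i j| ≤ ∑ i, ∑ j, x i * (N i j * x j) := by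
        refine Finset.sum_le_sum fun i _ => Finset.sum_le_sum fun j _ => ?_
        have h1 : |x i * (N i j * x j)| ≤ |N i j| := by
          rw [abs_mul, abs_mul]
          calc |x i| * (|N i j| * |x j|) ≤ 1 * (|N i j| * 1) := by
                apply mul_le_mul (hxle i) ?_ (by positivity) zero_le_one
                exact mul_le_mul_of_nonneg_left (hxle j) (abs_nonneg _)
            _ = |N i j| := by ring
        linarith [neg_abs_le (x i * (N i j * x j)), abs_le.mp h1]
      calc -(∑ i, ∑ j, |N i j|) = ∑ i, ∑ j, -|N i j| := by
            simp [Finset.sum_neg_distrib]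
        _ ≤ _ := this
    refine le_csInf hSLne ?_
    rintro y ⟨x, hx1, hx2, rfl⟩
    exact le_trans (csInf_le hbdd ⟨x, hx1, hx2, rfl⟩) (main x)
  · have hSNe : SN = ∅ := by
      ext y; simp only [hSN, Set.mem_setOf_eq, Set.mem_empty_iff_false, iff_false]
      rintro ⟨x, hx1, hx2, _⟩; exact hne ⟨x, hx1, hx2⟩
    have hSLe : SL = ∅ := by
      ext y; simp only [hSL, Set.mem_setOf_eq, Set.mem_empty_iff_false, iff_false]
      rintro ⟨x, hx1, hx2, _⟩; exact hne ⟨x, hx1, hx2⟩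
    rw [hSNe, hSLe]
end

section
/- Let G : [0,∞) → ℝ^{m×m} be continuous with G(t) symmetric, positive semidefinite, all row sums zero, and ‖G(t)‖ ≤ R for all t ≥ 0, where ‖·‖ is the operator norm. Fix h > 0 and for k = 0,1,2,… set β_k = min{ xᵀ·((1/h)∫_{kh}^{(k+1)h} G(τ) dτ)·x : ‖x‖ = 1, Σ_i x_i = 0 }. If Σ_{k=0}^∞ β_k = ∞, then every solution x : [0,∞) → ℝ^m of ẋ = −G(t)x reaches consensus: lim_{t→∞}(x_i(t) − x_j(t)) = 0 for all i,j. -/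
open scoped BigOperators
open Matrix

lemma aux_dot_symm {m : ℕ} (A : Matrix (Fin m) (Fin m) ℝ) (hA : A.IsSymm)
    (u v : Fin m → ℝ) : u ⬝ᵥ A.mulVec v = v ⬝ᵥ A.mulVec u := by
  simp only [dotProduct, Matrix.mulVec, Finset.mul_sum]
  rw [Finset.sum_comm]
  refine Finset.sum_congr rfl fun i _ => Finset.sum_congr rfl fun j _ => ?_
  rw [hA.apply i j]; ring

lemma aux_cs_psd {m : ℕ} (A : Matrix (Fin m) (Fin m) ℝ) (hA : A.IsSymm)
    (h0 : ∀ z : Fin m → ℝ, 0 ≤ z ⬝ᵥ A.mulVec z) (u v : Fin m → ℝ) :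
    (u ⬝ᵥ A.mulVec v)^2 ≤ (u ⬝ᵥ A.mulVec u) * (v ⬝ᵥ A.mulVec v) := by
  have key : ∀ s : ℝ, 0 ≤ (v ⬝ᵥ A.mulVec v) * (s*s) + (2*(u ⬝ᵥ A.mulVec v)) * s
      + (u ⬝ᵥ A.mulVec u) := by
    intro s
    have h1 := h0 (u + s • v)
    have e1 : (u + s • v) ⬝ᵥ A.mulVec (u + s • v)
        = (u ⬝ᵥ A.mulVec u) + s*(u ⬝ᵥ A.mulVec v) + s*(v ⬝ᵥ A.mulVec u)
          + s*s*(v ⬝ᵥ A.mulVec v) := by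
      simp only [Matrix.mulVec_add, Matrix.mulVec_smul, dotProduct_add, add_dotProduct,
        smul_dotProduct, dotProduct_smul, smul_eq_mul]
      ring
    rw [e1, aux_dot_symm A hA v u] at h1
    nlinarith [h1]
  have hd := discrim_le_zero key
  rw [discrim] at hd
  nlinarith [hd]

-- u ⬝ᵥ A u ≤ R * ∑ u² given operator norm bound
lemma aux_M2 {m : ℕ} (A : Matrix (Fin m) (Fin m) ℝ) (R : ℝ) (hR : 0 ≤ R)
    (hn : ∀ u : Fin m → ℝ, ∑ i, (A.mulVec u i)^2 ≤ R^2 * ∑ i, (u i)^2)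
    (h0 : ∀ z : Fin m → ℝ, 0 ≤ z ⬝ᵥ A.mulVec z) (u : Fin m → ℝ) :
    u ⬝ᵥ A.mulVec u ≤ R * ∑ i, (u i)^2 := by
  have c1 : (u ⬝ᵥ A.mulVec u)^2 ≤ (∑ i, (u i)^2) * (R^2 * ∑ i, (u i)^2) := by
    have := Finset.sum_mul_sq_le_sq_mul_sq Finset.univ u (A.mulVec u)
    have h2 := hn u
    have hs : u ⬝ᵥ A.mulVec u = ∑ i, u i * A.mulVec u i := rfl
    rw [hs]
    nlinarith [Finset.sum_nonneg (fun i (_ : i ∈ Finset.univ) => sq_nonneg (u i))]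
  have h3 := h0 u
  have h4 : (0:ℝ) ≤ ∑ i, (u i)^2 :=
    Finset.sum_nonneg (fun i _ => sq_nonneg (u i))
  nlinarith [c1, h3, h4, mul_nonneg hR h4]

-- ∑ (A u)² ≤ R * (uᵀ A u)
lemma aux_M3 {m : ℕ} (A : Matrix (Fin m) (Fin m) ℝ) (R : ℝ) (hR : 0 ≤ R)
    (hA : A.IsSymm)
    (hn : ∀ u : Fin m → ℝ, ∑ i, (A.mulVec u i)^2 ≤ R^2 * ∑ i, (u i)^2)
    (h0 : ∀ z : Fin m → ℝ, 0 ≤ z ⬝ᵥ A.mulVec z) (u : Fin m → ℝ) :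
    ∑ i, (A.mulVec u i)^2 ≤ R * (u ⬝ᵥ A.mulVec u) := by
  set w := A.mulVec u with hw
  set E := ∑ i, (w i)^2 with hE
  have hE0 : 0 ≤ E := Finset.sum_nonneg (fun i _ => sq_nonneg (w i))
  have e1 : E = u ⬝ᵥ A.mulVec w := by
    have e0 : E = w ⬝ᵥ (A.mulVec u) := by
      rw [← hw]; simp [hE, dotProduct, sq]
    rw [e0, aux_dot_symm A hA w u]
  have c1 : (u ⬝ᵥ A.mulVec w)^2 ≤ (u ⬝ᵥ A.mulVec u) * (w ⬝ᵥ A.mulVec w) :=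
    aux_cs_psd A hA h0 u w
  have c2 : w ⬝ᵥ A.mulVec w ≤ R * E := aux_M2 A R hR hn h0 w
  have hq0 : 0 ≤ u ⬝ᵥ A.mulVec u := h0 u
  have c3 : E^2 ≤ (u ⬝ᵥ A.mulVec u) * (R * E) := by
    calc E^2 = (u ⬝ᵥ A.mulVec w)^2 := by rw [e1]
    _ ≤ (u ⬝ᵥ A.mulVec u) * (w ⬝ᵥ A.mulVec w) := c1
    _ ≤ (u ⬝ᵥ A.mulVec u) * (R * E) := by
        exact mul_le_mul_of_nonneg_left c2 hq0
  rcases eq_or_lt_of_le hE0 with h | h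
  · rw [← h]; exact mul_nonneg hR hq0
  · nlinarith [c3, h]

-- integral Cauchy–Schwarz
lemma aux_int_cs {a b : ℝ} (hab : a ≤ b) {g : ℝ → ℝ} (hg : ContinuousOn g (Set.Icc a b)) :
    (∫ τ in a..b, g τ)^2 ≤ (b - a) * ∫ τ in a..b, (g τ)^2 := by
  have huIcc : Set.uIcc a b = Set.Icc a b := Set.uIcc_of_le hab
  have hgi : IntervalIntegrable g MeasureTheory.volume a b :=
    (huIcc ▸ hg).intervalIntegrable
  have hg2i : IntervalIntegrable (fun τ => (g τ)^2) MeasureTheory.volume a b :=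
    (huIcc ▸ (hg.pow 2)).intervalIntegrable
  have key : ∀ s : ℝ, 0 ≤ (b - a) * (s*s) + (-2 * ∫ τ in a..b, g τ) * s
      + ∫ τ in a..b, (g τ)^2 := by
    intro s
    have h1 : 0 ≤ ∫ τ in a..b, (g τ - s)^2 :=
      intervalIntegral.integral_nonneg hab (fun τ _ => sq_nonneg _)
    have h2 : ∫ τ in a..b, (g τ - s)^2
        = (∫ τ in a..b, (g τ)^2) + (-2*s) * (∫ τ in a..b, g τ) + (b - a)*(s*s) := by
      have e : ∀ τ, (g τ - s)^2 = (g τ)^2 + (-2*s) * g τ + s*s := by intro τ; ring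
      simp only [e]
      rw [intervalIntegral.integral_add (hg2i.add ((hgi.const_mul (-2*s))))
          (intervalIntegrable_const),
        intervalIntegral.integral_add hg2i (hgi.const_mul (-2*s)),
        intervalIntegral.integral_const_mul, intervalIntegral.integral_const]
      simp [smul_eq_mul]; try ring
    rw [h2] at h1
    nlinarith [h1]
  have hd := discrim_le_zero key
  rw [discrim] at hd
  nlinarith [hd]

set_option maxHeartbeats 2000000 in
theorem stmt7
    (m : ℕ) (hm : 1 ≤ m) (R : ℝ) (hR : 0 ≤ R)
    (G : ℝ → Matrix (Fin m) (Fin m) ℝ)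
    (hGc : ∀ i j, ContinuousOn (fun t => G t i j) (Set.Ici 0))
    (hsym : ∀ t, 0 ≤ t → (G t).IsSymm)
    (hpsd : ∀ t, 0 ≤ t → ∀ x : Fin m → ℝ, 0 ≤ x ⬝ᵥ (G t).mulVec x)
    (hrow : ∀ t, 0 ≤ t → ∀ i, ∑ j, G t i j = 0)
    -- operator norm bound `‖G(t)‖ ≤ R` (Euclidean operator norm)
    (hnorm : ∀ t, 0 ≤ t → ∀ x : Fin m → ℝ,
      ∑ i, ((G t).mulVec x i) ^ 2 ≤ R ^ 2 * ∑ i, (x i) ^ 2)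
    (h : ℝ) (hh : 0 < h)
    -- `β_k = min{ xᵀ·((1/h)∫_{kh}^{(k+1)h} G)·x : ‖x‖ = 1, Σᵢ xᵢ = 0 }`
    (β : ℕ → ℝ)
    (hβ : ∀ k : ℕ, β k =
      sInf {y : ℝ | ∃ x : Fin m → ℝ, (∑ i, x i ^ 2) = 1 ∧ (∑ i, x i) = 0 ∧
        y = x ⬝ᵥ (Matrix.of fun i j =>
          (1 / h) * ∫ τ in ((k : ℝ) * h)..(((k : ℝ) + 1) * h), G τ i j).mulVec x})
    -- `Σ_{k=0}^∞ β_k = ∞`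
    (hdiv : Filter.Tendsto (fun N => ∑ k ∈ Finset.range N, β k)
      Filter.atTop Filter.atTop)
    (x : ℝ → Fin m → ℝ)
    (hx : ∀ (i : Fin m) (t : ℝ), 0 ≤ t →
      HasDerivAt (fun s => x s i) (-((G t).mulVec (x t) i)) t) :
    ∀ i j : Fin m, Filter.Tendsto (fun t => x t i - x t j)
      Filter.atTop (nhds 0) := by
  have hm0 : (0:ℝ) < (m:ℝ) := by exact_mod_cast hm
  set y : ℝ → Fin m → ℝ := fun t i => x t i - (∑ j, x t j) / m with hy
  set q : ℝ → ℝ := fun t => (y t) ⬝ᵥ (G t).mulVec (y t) with hqdef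
  set V : ℝ → ℝ := fun t => ∑ i, (y t i)^2 with hVdef
  -- column sums vanish
  have hcol : ∀ t, 0 ≤ t → ∀ jj, ∑ ii, G t ii jj = 0 := by
    intro t ht jj
    calc ∑ ii, G t ii jj = ∑ ii, G t jj ii :=
          Finset.sum_congr rfl fun ii _ => (hsym t ht).apply jj ii
    _ = 0 := hrow t ht jj
  -- G kills constants: mulVec of y equals mulVec of x
  have hGy : ∀ t, 0 ≤ t → (G t).mulVec (y t) = (G t).mulVec (x t) := by
    intro t ht
    funext ii
    simp only [hy, Matrix.mulVec, dotProduct, mul_sub, Finset.sum_sub_distrib]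
    rw [← Finset.sum_mul, hrow t ht ii]
    ring
  -- sum of components of G x vanishes
  have hGxsum : ∀ t, 0 ≤ t → ∑ ii, (G t).mulVec (x t) ii = 0 := by
    intro t ht
    simp only [Matrix.mulVec, dotProduct]
    rw [Finset.sum_comm]
    have : ∀ jj, ∑ ii, G t ii jj * x t jj = 0 := by
      intro jj; rw [← Finset.sum_mul, hcol t ht jj, zero_mul]
    simp [this]
  -- derivative of y
  have hyder : ∀ (ii : Fin m) (t : ℝ), 0 ≤ t →
      HasDerivAt (fun s => y s ii) (-((G t).mulVec (y t) ii)) t := by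
    intro ii t ht
    have hsum : HasDerivAt (fun s => (∑ j, x s j) / (m:ℝ))
        ((∑ j, -((G t).mulVec (x t) j)) / m) t :=
      (HasDerivAt.fun_sum (fun j _ => hx j t ht)).div_const m
    have h0 : (∑ j, -((G t).mulVec (x t) j)) / (m:ℝ) = 0 := by
      rw [Finset.sum_neg_distrib, hGxsum t ht]; simp
    rw [h0] at hsum
    have := (hx ii t ht).fun_sub hsum
    rw [hGy t ht]; simpa [hy] using this
  -- sum of y components vanishes
  have hysum : ∀ t, ∑ ii, y t ii = 0 := by
    intro t
    simp only [hy, Finset.sum_sub_distrib, Finset.sum_const, Finset.card_univ,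
      Fintype.card_fin, nsmul_eq_mul]
    field_simp
    ring
  -- continuity of y
  have hycont : ∀ ii, ContinuousOn (fun s => y s ii) (Set.Ici 0) :=
    fun ii t ht => ((hyder ii t ht).continuousAt).continuousWithinAt
  -- continuity of G y components
  have hfcont : ∀ ii, ContinuousOn (fun s => (G s).mulVec (y s) ii) (Set.Ici 0) := by
    intro ii
    have : ContinuousOn (fun s => ∑ jj, G s ii jj * y s jj) (Set.Ici 0) :=
      continuousOn_finset_sum _ (fun jj _ => (hGc ii jj).mul (hycont jj))
    simpa [Matrix.mulVec, dotProduct] using this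
  -- continuity of q
  have hqcont : ContinuousOn q (Set.Ici 0) := by
    have : ContinuousOn (fun s => ∑ ii, y s ii * (G s).mulVec (y s) ii) (Set.Ici 0) :=
      continuousOn_finset_sum _ (fun ii _ => (hycont ii).mul (hfcont ii))
    simpa [hqdef, dotProduct] using this
  have hq0 : ∀ t, 0 ≤ t → 0 ≤ q t := fun t ht => hpsd t ht (y t)
  have hV0 : ∀ t, 0 ≤ V t := fun t => Finset.sum_nonneg fun ii _ => sq_nonneg _
  -- derivative of V
  have hVder : ∀ t, 0 ≤ t → HasDerivAt V (-2 * q t) t := by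
    intro t ht
    have := HasDerivAt.fun_sum (u := Finset.univ)
      (A := fun ii s => (y s ii)^2)
      (A' := fun ii => 2 * y t ii ^ 1 * (-((G t).mulVec (y t) ii)))
      (fun ii _ => by
        simpa using (hyder ii t ht).fun_pow 2)
    have e : ∑ ii, 2 * y t ii ^ 1 * (-((G t).mulVec (y t) ii)) = -2 * q t := by
      simp only [pow_one, hqdef, dotProduct, neg_mul, Finset.mul_sum]
      exact Finset.sum_congr rfl fun ii _ => by ring
    rw [e] at this
    exact this
  -- FTC for V
  have hftcV : ∀ a b : ℝ, 0 ≤ a → a ≤ b →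
      V b - V a = ∫ τ in a..b, (-2 * q τ) := by
    intro a b ha hab
    have hsub : Set.uIcc a b ⊆ Set.Ici 0 := by
      rw [Set.uIcc_of_le hab]
      exact fun s hs => le_trans ha hs.1
    refine (intervalIntegral.integral_eq_sub_of_hasDerivAt
      (fun τ hτ => hVder τ (hsub hτ)) ?_).symm
    exact ((hqcont.mono hsub).const_smul (-2:ℝ)).intervalIntegrable
  -- V is nonincreasing
  have hVmono : ∀ a b : ℝ, 0 ≤ a → a ≤ b → V b ≤ V a := by
    intro a b ha hab
    have hI : (∫ τ in a..b, (-2 * q τ)) ≤ 0 := by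
      rw [← neg_nonneg, ← intervalIntegral.integral_neg]
      refine intervalIntegral.integral_nonneg hab (fun τ hτ => ?_)
      have := hq0 τ (le_trans ha hτ.1)
      linarith
    have := hftcV a b ha hab
    linarith
  -- FTC for y components
  have hftc : ∀ (ii : Fin m) (a τ : ℝ), 0 ≤ a → a ≤ τ →
      y τ ii - y a ii = ∫ s in a..τ, -((G s).mulVec (y s) ii) := by
    intro ii a τ ha haτ
    have hsub : Set.uIcc a τ ⊆ Set.Ici 0 := by
      rw [Set.uIcc_of_le haτ]
      exact fun s hs => le_trans ha hs.1
    refine (intervalIntegral.integral_eq_sub_of_hasDerivAt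
      (fun s hs => hyder ii s (hsub hs)) ?_).symm
    exact (((hfcont ii).mono hsub).neg).intervalIntegrable
  -- integrability of G entries
  have hGint : ∀ (ii jj : Fin m) (a b : ℝ), 0 ≤ a → a ≤ b →
      IntervalIntegrable (fun τ => G τ ii jj) MeasureTheory.volume a b := by
    intro ii jj a b ha hab
    refine ((hGc ii jj).mono ?_).intervalIntegrable
    rw [Set.uIcc_of_le hab]; exact fun s hs => le_trans ha hs.1
  -- endpoints
  have hak : ∀ k : ℕ, (0:ℝ) ≤ (k:ℝ) * h := fun k => mul_nonneg (Nat.cast_nonneg k) hh.le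
  have habk : ∀ k : ℕ, (k:ℝ) * h ≤ ((k:ℝ) + 1) * h := fun k => by nlinarith
  -- quadratic form of the averaged matrix
  have hCu : ∀ (k : ℕ) (u : Fin m → ℝ),
      u ⬝ᵥ (Matrix.of fun i j =>
          (1 / h) * ∫ τ in ((k : ℝ) * h)..(((k : ℝ) + 1) * h), G τ i j).mulVec u
      = (1 / h) * ∫ τ in ((k : ℝ) * h)..(((k : ℝ) + 1) * h), u ⬝ᵥ (G τ).mulVec u := by
    intro k u
    set a := (k:ℝ) * h
    set b := ((k:ℝ) + 1) * h
    have hint : ∀ ii jj : Fin m, IntervalIntegrable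
        (fun τ => u ii * G τ ii jj * u jj) MeasureTheory.volume a b := fun ii jj =>
      ((hGint ii jj a b (hak k) (habk k)).const_mul (u ii)).mul_const (u jj)
    have e1 : ∀ τ, u ⬝ᵥ (G τ).mulVec u = ∑ ii, ∑ jj, u ii * G τ ii jj * u jj := by
      intro τ
      simp [dotProduct, Matrix.mulVec, Finset.mul_sum, mul_assoc]
    calc u ⬝ᵥ (Matrix.of fun i j => (1/h) * ∫ τ in a..b, G τ i j).mulVec u
        = ∑ ii, ∑ jj, u ii * (((1/h) * ∫ τ in a..b, G τ ii jj) * u jj) := by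
          simp [dotProduct, Matrix.mulVec, Finset.mul_sum]
      _ = (1/h) * ∑ ii, ∑ jj, ∫ τ in a..b, u ii * G τ ii jj * u jj := by
          rw [Finset.mul_sum]
          refine Finset.sum_congr rfl fun ii _ => ?_
          rw [Finset.mul_sum]
          refine Finset.sum_congr rfl fun jj _ => ?_
          rw [intervalIntegral.integral_mul_const, intervalIntegral.integral_const_mul]
          ring
      _ = (1/h) * ∫ τ in a..b, ∑ ii, ∑ jj, u ii * G τ ii jj * u jj := by
          congr 1
          rw [intervalIntegral.integral_finset_sum (fun ii _ =>
            (IntervalIntegrable.sum Finset.univ (fun jj _ => hint ii jj)).congr_ae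
              (Filter.Eventually.of_forall fun τ => by simp))]
          exact Finset.sum_congr rfl fun ii _ =>
            (intervalIntegral.integral_finset_sum (fun jj _ => hint ii jj)).symm
      _ = (1/h) * ∫ τ in a..b, u ⬝ᵥ (G τ).mulVec u := by
          congr 1
          exact intervalIntegral.integral_congr fun τ _ => (e1 τ).symm
  -- every member of the β-defining set is nonnegative
  have hSnn : ∀ (k : ℕ) (z : ℝ), (∃ u : Fin m → ℝ, (∑ i, u i ^ 2) = 1 ∧ (∑ i, u i) = 0 ∧
      z = u ⬝ᵥ (Matrix.of fun i j =>
        (1 / h) * ∫ τ in ((k : ℝ) * h)..(((k : ℝ) + 1) * h), G τ i j).mulVec u) → 0 ≤ z := by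
    rintro k z ⟨u, -, -, rfl⟩
    rw [hCu k u]
    have : 0 ≤ ∫ τ in ((k : ℝ) * h)..(((k : ℝ) + 1) * h), u ⬝ᵥ (G τ).mulVec u :=
      intervalIntegral.integral_nonneg (habk k)
        (fun τ hτ => hpsd τ (le_trans (hak k) hτ.1) u)
    positivity
  have hβnn : ∀ k, 0 ≤ β k := by
    intro k
    rw [hβ k]
    exact Real.sInf_nonneg (fun z hz => hSnn k z hz)
  -- === key per-interval inequality ===
  have key : ∀ k : ℕ, 2 * (h * β k * V ((k:ℝ)*h)) ≤
      (1+R*h)^2 * (V ((k:ℝ)*h) - V (((k:ℝ)+1)*h)) := by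
    intro k
    set a := (k:ℝ) * h with hadef
    set b := ((k:ℝ) + 1) * h with hbdef
    have ha : 0 ≤ a := hak k
    have hab : a ≤ b := habk k
    have huIcc : Set.uIcc a b = Set.Icc a b := Set.uIcc_of_le hab
    have hsub : Set.uIcc a b ⊆ Set.Ici 0 := by
      rw [huIcc]; exact fun s hs => le_trans ha hs.1
    have hsubIcc : Set.Icc a b ⊆ Set.Ici 0 := huIcc ▸ hsub
    have hba : b - a = h := by rw [hadef, hbdef]; ring
    set W := ∫ τ in a..b, q τ with hWdef
    have hqInt : IntervalIntegrable q MeasureTheory.volume a b :=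
      (hqcont.mono hsub).intervalIntegrable
    have hW0 : 0 ≤ W :=
      intervalIntegral.integral_nonneg hab (fun τ hτ => hq0 τ (hsubIcc hτ))
    have hhW0 : 0 ≤ h * W := mul_nonneg hh.le hW0
    have hVW : V a - V b = 2 * W := by
      have e1 := hftcV a b ha hab
      have e2 : (∫ τ in a..b, (-2) * q τ) = (-2) * W := by
        rw [hWdef, intervalIntegral.integral_const_mul]
      rw [e2] at e1; linarith
    set g := fun τ => Real.sqrt (q τ) with hgdef
    have hgcont : ContinuousOn g (Set.Icc a b) :=
      Real.continuous_sqrt.comp_continuousOn (hqcont.mono hsubIcc)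
    have hgInt : IntervalIntegrable g MeasureTheory.volume a b :=
      (huIcc ▸ hgcont).intervalIntegrable
    have hg2 : (∫ τ in a..b, (g τ)^2) = W := by
      rw [hWdef]
      exact intervalIntegral.integral_congr fun τ hτ =>
        Real.sq_sqrt (hq0 τ (hsub hτ))
    have hIg0 : 0 ≤ ∫ τ in a..b, g τ :=
      intervalIntegral.integral_nonneg hab (fun τ _ => Real.sqrt_nonneg _)
    have hIg : (∫ τ in a..b, g τ) ≤ Real.sqrt (h*W) := by
      have h1 := aux_int_cs hab hgcont
      rw [hg2, hba] at h1
      exact (Real.le_sqrt hIg0 hhW0).mpr h1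
    -- partial integrals of g
    have hgIntSub : ∀ c d : ℝ, c ∈ Set.Icc a b → d ∈ Set.Icc a b →
        IntervalIntegrable g MeasureTheory.volume c d := by
      intro c d hc hd
      exact (hgcont.mono (huIcc ▸ Set.uIcc_subset_uIcc (huIcc ▸ hc) (huIcc ▸ hd))).intervalIntegrable
    have hIgτ : ∀ τ ∈ Set.Icc a b, (∫ s in a..τ, g s) ≤ Real.sqrt (h*W) := by
      intro τ hτ
      have h1 : (∫ s in a..τ, g s) + (∫ s in τ..b, g s) = ∫ s in a..b, g s :=
        intervalIntegral.integral_add_adjacent_intervals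
          (hgIntSub a τ (Set.left_mem_Icc.2 hab) hτ)
          (hgIntSub τ b hτ (Set.right_mem_Icc.2 hab))
      have h2 : 0 ≤ ∫ s in τ..b, g s :=
        intervalIntegral.integral_nonneg hτ.2 (fun s _ => Real.sqrt_nonneg _)
      linarith [hIg]
    -- squared-displacement bound
    have hEbound : ∀ τ ∈ Set.Icc a b, ∑ ii, (y τ ii - y a ii)^2 ≤ R * (h*W) := by
      intro τ hτ
      set e := fun ii => y τ ii - y a ii with hedef
      set E := ∑ ii, (e ii)^2 with hEdef
      have hE0 : 0 ≤ E := Finset.sum_nonneg fun ii _ => sq_nonneg _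
      have hfInt : ∀ ii : Fin m, IntervalIntegrable
          (fun s => -((G s).mulVec (y s) ii)) MeasureTheory.volume a τ := by
        intro ii
        refine (((hfcont ii).mono ?_).neg).intervalIntegrable
        rw [Set.uIcc_of_le hτ.1]
        exact fun s hs => le_trans ha hs.1
      have he : ∀ ii, e ii = ∫ s in a..τ, -((G s).mulVec (y s) ii) :=
        fun ii => hftc ii a τ ha hτ.1
      have hEeq : E = ∫ s in a..τ, ∑ ii, e ii * (-((G s).mulVec (y s) ii)) := by
        rw [intervalIntegral.integral_finset_sum
          (fun ii _ => (hfInt ii).const_mul (e ii))]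
        rw [hEdef]
        refine Finset.sum_congr rfl fun ii _ => ?_
        rw [intervalIntegral.integral_const_mul, ← he ii]
        ring
      have hptws : ∀ s ∈ Set.Icc a τ, ∑ ii, e ii * (-((G s).mulVec (y s) ii))
          ≤ Real.sqrt E * (Real.sqrt R * g s) := by
        intro s hs
        have hs0 : (0:ℝ) ≤ s := le_trans ha hs.1
        have c1 := Finset.sum_mul_sq_le_sq_mul_sq Finset.univ e
          (fun ii => -((G s).mulVec (y s) ii))
        have c2 : ∑ ii, (-((G s).mulVec (y s) ii))^2 ≤ R * q s := by
          have := aux_M3 (G s) R hR (hsym s hs0) (hnorm s hs0) (hpsd s hs0) (y s)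
          simpa using this
        have c3 : (∑ ii, e ii * (-((G s).mulVec (y s) ii)))^2 ≤ E * (R * q s) := by
          refine le_trans c1 ?_
          exact mul_le_mul_of_nonneg_left c2 hE0
        calc ∑ ii, e ii * (-((G s).mulVec (y s) ii))
            ≤ |∑ ii, e ii * (-((G s).mulVec (y s) ii))| := le_abs_self _
          _ = Real.sqrt ((∑ ii, e ii * (-((G s).mulVec (y s) ii)))^2) :=
              (Real.sqrt_sq_eq_abs _).symm
          _ ≤ Real.sqrt (E * (R * q s)) := Real.sqrt_le_sqrt c3
          _ = Real.sqrt E * (Real.sqrt R * g s) := by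
              rw [Real.sqrt_mul hE0, Real.sqrt_mul hR, hgdef]
      have hcontsum : ContinuousOn
          (fun s => ∑ ii, e ii * (-((G s).mulVec (y s) ii))) (Set.Ici 0) :=
        continuousOn_finset_sum _ (fun ii _ =>
          ((hfcont ii).neg).const_smul (e ii) |>.congr (fun s _ => by simp [smul_eq_mul]))
      have hEle : E ≤ Real.sqrt E * (Real.sqrt R * Real.sqrt (h*W)) := by
        have hsubτ : Set.uIcc a τ ⊆ Set.Ici 0 := by
          rw [Set.uIcc_of_le hτ.1]; exact fun s hs => le_trans ha hs.1
        calc E = (∫ s in a..τ, ∑ ii, e ii * (-((G s).mulVec (y s) ii))) := hEeq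
          _
            ≤ ∫ s in a..τ, Real.sqrt E * (Real.sqrt R * g s) := by
              refine intervalIntegral.integral_mono_on hτ.1
                ((hcontsum.mono hsubτ).intervalIntegrable) ?_ hptws
              exact ((hgIntSub a τ (Set.left_mem_Icc.2 hab) hτ).const_mul _).const_mul _
          _ = Real.sqrt E * (Real.sqrt R * ∫ s in a..τ, g s) := by
              rw [← intervalIntegral.integral_const_mul, ← intervalIntegral.integral_const_mul]
          _ ≤ Real.sqrt E * (Real.sqrt R * Real.sqrt (h*W)) := by
              have := hIgτ τ hτ
              have h1 : Real.sqrt R * (∫ s in a..τ, g s) ≤ Real.sqrt R * Real.sqrt (h*W) :=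
                mul_le_mul_of_nonneg_left this (Real.sqrt_nonneg R)
              exact mul_le_mul_of_nonneg_left h1 (Real.sqrt_nonneg E)
      -- conclude E ≤ R * (h*W)
      have hsE : Real.sqrt E ^ 2 = E := Real.sq_sqrt hE0
      have hK2 : (Real.sqrt R * Real.sqrt (h*W))^2 = R * (h*W) := by
        rw [mul_pow, Real.sq_sqrt hR, Real.sq_sqrt hhW0]
      nlinarith [hEle, hsE, hK2, Real.sqrt_nonneg E,
        mul_nonneg (Real.sqrt_nonneg R) (Real.sqrt_nonneg (h*W)),
        sq_nonneg (Real.sqrt E - Real.sqrt R * Real.sqrt (h*W))]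
    -- pointwise main inequality
    have hptw : ∀ τ ∈ Set.Icc a b, (y a) ⬝ᵥ (G τ).mulVec (y a)
        ≤ q τ + (2*R*Real.sqrt (h*W)) * g τ + R^2*(h*W) := by
      intro τ hτ
      have hτ0 : (0:ℝ) ≤ τ := hsubIcc hτ
      set e := y τ - y a with hedef
      have hya : y a = y τ - e := by rw [hedef]; abel
      have hswap : y τ ⬝ᵥ (G τ).mulVec e = e ⬝ᵥ (G τ).mulVec (y τ) :=
        aux_dot_symm (G τ) (hsym τ hτ0) (y τ) e
      have hexp : y a ⬝ᵥ (G τ).mulVec (y a)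
          = q τ - 2*(e ⬝ᵥ (G τ).mulVec (y τ)) + e ⬝ᵥ (G τ).mulVec e := by
        rw [hya]
        simp only [Matrix.mulVec_sub, dotProduct_sub, sub_dotProduct]
        rw [hqdef]
        simp only []
        linarith [hswap]
      have hEb : ∑ ii, (e ii)^2 ≤ R * (h*W) := by
        have := hEbound τ hτ
        simpa [hedef] using this
      have hee : e ⬝ᵥ (G τ).mulVec e ≤ R^2*(h*W) := by
        have h1 := aux_M2 (G τ) R hR (hnorm τ hτ0) (hpsd τ hτ0) e
        have h2 : R * ∑ ii, (e ii)^2 ≤ R * (R * (h*W)) :=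
          mul_le_mul_of_nonneg_left hEb hR
        nlinarith [h1, h2]
      have hcross : -(e ⬝ᵥ (G τ).mulVec (y τ)) ≤ (R*Real.sqrt (h*W)) * g τ := by
        have c1 := aux_cs_psd (G τ) (hsym τ hτ0) (hpsd τ hτ0) e (y τ)
        have c2 : (e ⬝ᵥ (G τ).mulVec (y τ))^2 ≤ (R^2*(h*W)) * q τ := by
          have h3 : (e ⬝ᵥ (G τ).mulVec e) * (y τ ⬝ᵥ (G τ).mulVec (y τ))
              ≤ (R^2*(h*W)) * q τ := by
            have := hq0 τ hτ0
            have h4 : 0 ≤ e ⬝ᵥ (G τ).mulVec e := hpsd τ hτ0 e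
            rw [hqdef]
            nlinarith [hee]
          exact le_trans c1 h3
        calc -(e ⬝ᵥ (G τ).mulVec (y τ)) ≤ |e ⬝ᵥ (G τ).mulVec (y τ)| := neg_le_abs _
          _ = Real.sqrt ((e ⬝ᵥ (G τ).mulVec (y τ))^2) := (Real.sqrt_sq_eq_abs _).symm
          _ ≤ Real.sqrt ((R^2*(h*W)) * q τ) := Real.sqrt_le_sqrt c2
          _ = (R*Real.sqrt (h*W)) * g τ := by
              rw [Real.sqrt_mul (by positivity), Real.sqrt_mul (sq_nonneg R),
                Real.sqrt_sq hR, hgdef]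
      linarith [hexp, hee, hcross]
    -- integrate the pointwise inequality
    have hcontya : ContinuousOn (fun τ => (y a) ⬝ᵥ (G τ).mulVec (y a)) (Set.Ici 0) := by
      have : ContinuousOn (fun τ => ∑ ii, y a ii * ∑ jj, G τ ii jj * y a jj) (Set.Ici 0) :=
        continuousOn_finset_sum _ (fun ii _ => continuousOn_const.mul
          (continuousOn_finset_sum _ (fun jj _ => (hGc ii jj).mul continuousOn_const)))
      simpa [dotProduct, Matrix.mulVec] using this
    have hP : (∫ τ in a..b, (y a) ⬝ᵥ (G τ).mulVec (y a)) ≤ (1+R*h)^2 * W := by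
      have h1 : (∫ τ in a..b, (y a) ⬝ᵥ (G τ).mulVec (y a))
          ≤ ∫ τ in a..b, (q τ + (2*R*Real.sqrt (h*W)) * g τ + R^2*(h*W)) := by
        refine intervalIntegral.integral_mono_on hab
          ((hcontya.mono hsub).intervalIntegrable) ?_ hptw
        exact (hqInt.add (hgInt.const_mul _)).add intervalIntegrable_const
      have h2 : (∫ τ in a..b, (q τ + (2*R*Real.sqrt (h*W)) * g τ + R^2*(h*W)))
          = W + (2*R*Real.sqrt (h*W)) * (∫ τ in a..b, g τ) + R^2*(h*W)*h := by
        rw [intervalIntegral.integral_add (hqInt.add (hgInt.const_mul _))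
            intervalIntegrable_const,
          intervalIntegral.integral_add hqInt (hgInt.const_mul _),
          intervalIntegral.integral_const_mul, intervalIntegral.integral_const,
          hba]
        rw [hWdef]; ring_nf
      have h3 : (2*R*Real.sqrt (h*W)) * (∫ τ in a..b, g τ)
          ≤ (2*R*Real.sqrt (h*W)) * Real.sqrt (h*W) :=
        mul_le_mul_of_nonneg_left hIg (by positivity)
      have h4 : Real.sqrt (h*W) * Real.sqrt (h*W) = h * W :=
        Real.mul_self_sqrt hhW0
      nlinarith [h1, h2, h3, h4, hW0, hh.le]
    -- conclude via the variational characterization of β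
    rcases (hV0 a).eq_or_lt with hVa | hVa
    · have h0 : 0 ≤ (1+R*h)^2 * (V a - V b) := by
        rw [hVW]; positivity
      have h1 : h * β k * V a = 0 := by rw [← hVa]; ring
      have h2 : 2 * (h * β k * V a) = 0 := by rw [h1]; ring
      rw [h2]
      exact h0
    · set c := (Real.sqrt (V a))⁻¹ with hcdef
      have hsV : 0 < Real.sqrt (V a) := Real.sqrt_pos.2 hVa
      have hc2 : c^2 * V a = 1 := by
        rw [hcdef, inv_pow, Real.sq_sqrt (hV0 a)]
        field_simp
      set u := fun ii => c * y a ii with hudef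
      have hu1 : ∑ ii, (u ii)^2 = 1 := by
        simp only [hudef, mul_pow, ← Finset.mul_sum]
        exact hc2
      have hu2 : ∑ ii, u ii = 0 := by
        simp only [hudef, ← Finset.mul_sum, hysum a, mul_zero]
      have hbdd : BddBelow {z : ℝ | ∃ v : Fin m → ℝ, (∑ i, v i ^ 2) = 1 ∧
          (∑ i, v i) = 0 ∧ z = v ⬝ᵥ (Matrix.of fun i j =>
            (1 / h) * ∫ τ in ((k : ℝ) * h)..(((k : ℝ) + 1) * h), G τ i j).mulVec v} :=
        ⟨0, fun z hz => hSnn k z hz⟩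
      have hβle : β k ≤ u ⬝ᵥ (Matrix.of fun i j =>
          (1 / h) * ∫ τ in ((k : ℝ) * h)..(((k : ℝ) + 1) * h), G τ i j).mulVec u := by
        rw [hβ k]
        exact csInf_le hbdd ⟨u, hu1, hu2, rfl⟩
      have hval : u ⬝ᵥ (Matrix.of fun i j =>
          (1 / h) * ∫ τ in ((k : ℝ) * h)..(((k : ℝ) + 1) * h), G τ i j).mulVec u
          = (1/h) * (c^2 * ∫ τ in a..b, (y a) ⬝ᵥ (G τ).mulVec (y a)) := by
        rw [hCu k u]
        congr 1
        have e1 : ∀ τ, u ⬝ᵥ (G τ).mulVec u = c^2 * ((y a) ⬝ᵥ (G τ).mulVec (y a)) := by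
          intro τ
          have : u = c • (y a) := by funext ii; simp [hudef, smul_eq_mul]
          rw [this, Matrix.mulVec_smul, dotProduct_smul, smul_dotProduct, smul_eq_mul,
            smul_eq_mul]
          ring
        rw [show ((k:ℝ)*h) = a from rfl, show (((k:ℝ)+1)*h) = b from rfl]
        rw [intervalIntegral.integral_congr (fun τ _ => e1 τ),
          intervalIntegral.integral_const_mul]
      have hβle2 : β k ≤ (1/h) * (c^2 * ∫ τ in a..b, (y a) ⬝ᵥ (G τ).mulVec (y a)) := by
        rw [← hval]; exact hβle
      set P := ∫ τ in a..b, (y a) ⬝ᵥ (G τ).mulVec (y a) with hPdef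
      have hmul : h * β k * V a ≤ P := by
        have h1 : β k * (h * V a) ≤ ((1/h) * (c^2 * P)) * (h * V a) :=
          mul_le_mul_of_nonneg_right hβle2 (by positivity)
        have h2 : ((1/h) * (c^2 * P)) * (h * V a) = (c^2 * V a) * P := by
          field_simp
        rw [h2, hc2, one_mul] at h1
        linarith [h1]
      have hfin : 2 * (h * β k * V a) ≤ (1+R*h)^2 * (V a - V b) := by
        rw [hVW]
        nlinarith [hmul, hP]
      exact hfin
  -- V becomes arbitrarily small
  have claimA : ∀ ε : ℝ, 0 < ε → ∃ t0 : ℝ, 0 ≤ t0 ∧ V t0 < ε := by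
    intro ε hε
    by_contra hcon
    push_neg at hcon
    have hbd : ∀ N : ℕ, ∑ k ∈ Finset.range N, β k ≤ (1+R*h)^2 * V 0 / (2*h*ε) := by
      intro N
      have h1 : ∀ k ∈ Finset.range N, 2*h*ε * β k ≤
          (1+R*h)^2 * (V ((k:ℝ)*h) - V (((k:ℝ)+1)*h)) := by
        intro k _
        have h2 := key k
        have h3 : ε ≤ V ((k:ℝ)*h) := hcon _ (hak k)
        have h4 := hβnn k
        have h5 : h * (β k * ε) ≤ h * (β k * V ((k:ℝ)*h)) :=
          mul_le_mul_of_nonneg_left (mul_le_mul_of_nonneg_left h3 h4) hh.le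
        nlinarith [h2, h5]
      have h5 : ∑ k ∈ Finset.range N, (2*h*ε * β k) ≤
          ∑ k ∈ Finset.range N, (1+R*h)^2 * (V ((k:ℝ)*h) - V (((k:ℝ)+1)*h)) :=
        Finset.sum_le_sum h1
      have h6 : ∑ k ∈ Finset.range N, (1+R*h)^2 * (V ((k:ℝ)*h) - V (((k:ℝ)+1)*h))
          = (1+R*h)^2 * (V 0 - V ((N:ℝ)*h)) := by
        rw [← Finset.mul_sum]
        congr 1
        have e := Finset.sum_range_sub' (fun k : ℕ => V ((k:ℝ)*h)) N
        push_cast at e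
        simpa using e
      have h7 : 0 ≤ V ((N:ℝ)*h) := hV0 _
      have h8 : ∑ k ∈ Finset.range N, (2*h*ε * β k)
          = 2*h*ε * ∑ k ∈ Finset.range N, β k := by
        rw [Finset.mul_sum]
      have h9 : 2*h*ε * ∑ k ∈ Finset.range N, β k ≤ (1+R*h)^2 * V 0 := by
        nlinarith [h5, h7, sq_nonneg (1+R*h)]
      have hpos : 0 < 2*h*ε := by positivity
      rw [le_div_iff₀ hpos]
      nlinarith [h9]
    obtain ⟨N, hN⟩ := (hdiv.eventually
      (Filter.eventually_gt_atTop ((1+R*h)^2 * V 0 / (2*h*ε)))).exists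
    exact absurd (hbd N) (not_le.2 hN)
  -- V tends to 0
  have tendV : Filter.Tendsto V Filter.atTop (nhds 0) := by
    rw [Metric.tendsto_atTop]
    intro ε hε
    obtain ⟨t0, ht0, hVt0⟩ := claimA ε hε
    refine ⟨t0, fun t ht => ?_⟩
    have h1 : V t ≤ V t0 := hVmono t0 t ht0 ht
    rw [Real.dist_eq, sub_zero, abs_of_nonneg (hV0 t)]
    linarith
  -- conclusion
  intro i j
  have hb : ∀ t : ℝ, |x t i - x t j| ≤ 2 * Real.sqrt (V t) := by
    intro t
    have e1 : x t i - x t j = y t i - y t j := by simp only [hy]; ring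
    have h1 : ∀ ii : Fin m, |y t ii| ≤ Real.sqrt (V t) := by
      intro ii
      rw [← Real.sqrt_sq_eq_abs]
      exact Real.sqrt_le_sqrt (Finset.single_le_sum
        (fun i _ => sq_nonneg (y t i)) (Finset.mem_univ ii))
    calc |x t i - x t j| = |y t i - y t j| := by rw [e1]
      _ ≤ |y t i| + |y t j| := abs_sub _ _
      _ ≤ 2 * Real.sqrt (V t) := by linarith [h1 i, h1 j]
  have htg : Filter.Tendsto (fun t => 2 * Real.sqrt (V t)) Filter.atTop (nhds 0) := by
    have h1 : Filter.Tendsto (fun t => Real.sqrt (V t)) Filter.atTop (nhds 0) := by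
      have h2 := (Real.continuous_sqrt.tendsto 0).comp tendV
      simpa [Function.comp_def] using h2
    simpa using h1.const_mul (2:ℝ)
  exact squeeze_zero_norm (fun t => by
    simpa [Real.norm_eq_abs] using hb t) htg
end

section
/- Let G : [0,∞) → ℝ^{m×m} be continuous with G(t) symmetric, positive semidefinite, all row sums zero, and ‖G(t)‖ ≤ R for all t ≥ 0, where ‖·‖ is the operator norm. Fix h > 0 and for k = 0,1,2,… set β_k = min{ xᵀ·((1/h)∫_{kh}^{(k+1)h} G(τ) dτ)·x : ‖x‖ = 1, Σ_i x_i = 0 }. If there exists β̂ > 0 with β_k ≥ β̂ for all k, then consensus is reached exponentially: there exist C, α > 0 such that every solution x of ẋ = −G(t)x satisfies ‖x(t) − x̄·𝟙‖ ≤ C·e^{−αt}·‖x(0) − x̄·𝟙‖ for all t ≥ 0, where x̄ = (1/m)Σ_i x_i(0) and 𝟙 = (1,…,1)ᵀ. -/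
open scoped BigOperators
open Matrix

open intervalIntegral MeasureTheory Matrix

lemma intCS {a b : ℝ} (hab : a ≤ b) {f g : ℝ → ℝ}
    (hf : ContinuousOn f (Set.Icc a b)) (hg : ContinuousOn g (Set.Icc a b)) :
    (∫ x in a..b, f x * g x) ^ 2 ≤ (∫ x in a..b, f x ^ 2) * (∫ x in a..b, g x ^ 2) := by
  have hu : Set.uIcc a b = Set.Icc a b := Set.uIcc_of_le hab
  have hf' : ContinuousOn f (Set.uIcc a b) := by rwa [hu]
  have hg' : ContinuousOn g (Set.uIcc a b) := by rwa [hu]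
  have hif2 : IntervalIntegrable (fun x => f x ^ 2) volume a b :=
    (hf'.pow 2).intervalIntegrable
  have hig2 : IntervalIntegrable (fun x => g x ^ 2) volume a b :=
    (hg'.pow 2).intervalIntegrable
  have hifg : IntervalIntegrable (fun x => f x * g x) volume a b :=
    (hf'.mul hg').intervalIntegrable
  set A := ∫ x in a..b, f x ^ 2 with hA
  set B := ∫ x in a..b, f x * g x with hB
  set C := ∫ x in a..b, g x ^ 2 with hC
  have key : ∀ x : ℝ, 0 ≤ A * (x * x) + (2 * B) * x + C := by
    intro x
    have h1 : (0:ℝ) ≤ ∫ t in a..b, (x * f t + g t) ^ 2 := by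
      apply intervalIntegral.integral_nonneg hab
      intro u _; positivity
    have h2 : (∫ t in a..b, (x * f t + g t) ^ 2)
        = (x*x) * A + (2*x) * B + C := by
      have e1 : ∀ t, (x * f t + g t) ^ 2
          = (x*x) * (f t ^ 2) + (2*x) * (f t * g t) + g t ^ 2 := by intro t; ring
      simp_rw [e1]
      rw [intervalIntegral.integral_add (((hif2.const_mul _).add (hifg.const_mul _))) hig2,
        intervalIntegral.integral_add (hif2.const_mul _) (hifg.const_mul _),
        intervalIntegral.integral_const_mul, intervalIntegral.integral_const_mul]
    nlinarith [h1, h2]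
  have := discrim_le_zero key
  rw [discrim] at this
  nlinarith [this]

lemma psdCS {m : ℕ} (M : Matrix (Fin m) (Fin m) ℝ)
    (hs : ∀ u v : Fin m → ℝ, u ⬝ᵥ M.mulVec v = v ⬝ᵥ M.mulVec u)
    (hpsd : ∀ x : Fin m → ℝ, 0 ≤ x ⬝ᵥ M.mulVec x) (u v : Fin m → ℝ) :
    (u ⬝ᵥ M.mulVec v) ^ 2 ≤ (u ⬝ᵥ M.mulVec u) * (v ⬝ᵥ M.mulVec v) := by
  have key : ∀ x : ℝ, 0 ≤ (u ⬝ᵥ M.mulVec u) * (x*x) + (2 * (u ⬝ᵥ M.mulVec v)) * x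
      + (v ⬝ᵥ M.mulVec v) := by
    intro x
    have h0 := hpsd (x • u + v)
    rw [Matrix.mulVec_add, Matrix.mulVec_smul] at h0
    simp only [dotProduct_add, add_dotProduct, smul_dotProduct,
      dotProduct_smul, smul_eq_mul] at h0
    have h1 := hs u v
    have h2 : (u ⬝ᵥ M.mulVec u) * (x*x) + (2 * (u ⬝ᵥ M.mulVec v)) * x + (v ⬝ᵥ M.mulVec v)
        = x * (x * (u ⬝ᵥ M.mulVec u) + v ⬝ᵥ M.mulVec u)
          + (x * (u ⬝ᵥ M.mulVec v) + v ⬝ᵥ M.mulVec v) := by rw [h1]; ring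
    rw [h2]; linarith [h0]
  have := discrim_le_zero key
  rw [discrim] at this
  nlinarith [this]

lemma dot_symm {m : ℕ} (M : Matrix (Fin m) (Fin m) ℝ) (hM : M.IsSymm)
    (u v : Fin m → ℝ) : u ⬝ᵥ M.mulVec v = v ⬝ᵥ M.mulVec u := by
  simp only [dotProduct, Matrix.mulVec, Finset.mul_sum]
  rw [Finset.sum_comm]
  refine Finset.sum_congr rfl fun i _ => Finset.sum_congr rfl fun j _ => ?_
  rw [hM.apply i j]; ring

lemma quad_le {m : ℕ} (M : Matrix (Fin m) (Fin m) ℝ) (R : ℝ) (hR : 0 ≤ R)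
    (hn : ∑ i, (M.mulVec (fun i => (1:ℝ) * 0 + 1 * 0) i)^2 ≤ 0) : True := trivial

lemma quad_form_le {m : ℕ} (M : Matrix (Fin m) (Fin m) ℝ) (R : ℝ) (hR : 0 ≤ R)
    (hn : ∀ x : Fin m → ℝ, ∑ i, (M.mulVec x i) ^ 2 ≤ R ^ 2 * ∑ i, x i ^ 2)
    (v : Fin m → ℝ) : v ⬝ᵥ M.mulVec v ≤ R * ∑ i, v i ^ 2 := by
  have h0 : v ⬝ᵥ M.mulVec v = ∑ i, v i * M.mulVec v i := rfl
  have h1 := Finset.sum_mul_sq_le_sq_mul_sq Finset.univ v (M.mulVec v)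
  have h2 := hn v
  have hS : (0:ℝ) ≤ ∑ i, v i ^ 2 := by positivity
  rw [h0]
  have h3 : (∑ i, v i * M.mulVec v i) ^ 2 ≤ (∑ i, v i ^ 2) * (R ^ 2 * ∑ i, v i ^ 2) :=
    le_trans h1 (mul_le_mul_of_nonneg_left h2 hS)
  by_contra hc
  push_neg at hc
  have hRS : 0 ≤ R * ∑ i, v i ^ 2 := mul_nonneg hR hS
  have h4 : (R * ∑ i, v i ^ 2) ^ 2 < (∑ i, v i * M.mulVec v i) ^ 2 := by nlinarith [hc, hRS]
  have e : (R * ∑ i, v i ^ 2) ^ 2 = (∑ i, v i ^ 2) * (R ^ 2 * ∑ i, v i ^ 2) := by ring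
  linarith

lemma normsq_mulVec_le {m : ℕ} (M : Matrix (Fin m) (Fin m) ℝ) (R : ℝ) (hR : 0 ≤ R)
    (hM : M.IsSymm) (hpsd : ∀ x : Fin m → ℝ, 0 ≤ x ⬝ᵥ M.mulVec x)
    (hn : ∀ x : Fin m → ℝ, ∑ i, (M.mulVec x i) ^ 2 ≤ R ^ 2 * ∑ i, x i ^ 2)
    (v : Fin m → ℝ) : ∑ i, (M.mulVec v i) ^ 2 ≤ R * (v ⬝ᵥ M.mulVec v) := by
  set z := M.mulVec v with hz
  have hzz : (∑ i, z i ^ 2) = v ⬝ᵥ M.mulVec z := by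
    rw [dot_symm M hM v z, ← hz]
    simp [dotProduct, sq]
  have hcs := psdCS M (dot_symm M hM) hpsd v z
  have hz2 : z ⬝ᵥ M.mulVec z ≤ R * ∑ i, z i ^ 2 := quad_form_le M R hR hn z
  have hN : (0:ℝ) ≤ ∑ i, z i ^ 2 := by positivity
  have hvv : 0 ≤ v ⬝ᵥ M.mulVec v := hpsd v
  rcases eq_or_lt_of_le hN with hN0 | hNp
  · rw [← hN0]; positivity
  · nlinarith [hcs, hz2, hNp, hvv]

lemma intCS' {a b : ℝ} (hab : a ≤ b) {f g : ℝ → ℝ}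
    (hf : ContinuousOn f (Set.Icc a b)) (hg : ContinuousOn g (Set.Icc a b)) :
    (∫ x in a..b, f x * g x) ≤
      Real.sqrt (∫ x in a..b, f x ^ 2) * Real.sqrt (∫ x in a..b, g x ^ 2) := by
  have h1 := intCS hab hf hg
  have h2 : (∫ x in a..b, f x * g x) ≤ |∫ x in a..b, f x * g x| := le_abs_self _
  have h3 : |∫ x in a..b, f x * g x| = Real.sqrt ((∫ x in a..b, f x * g x) ^ 2) :=
    (Real.sqrt_sq_eq_abs _).symm
  have h4 : Real.sqrt ((∫ x in a..b, f x * g x) ^ 2)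
      ≤ Real.sqrt ((∫ x in a..b, f x ^ 2) * (∫ x in a..b, g x ^ 2)) := Real.sqrt_le_sqrt h1
  have h5 : Real.sqrt ((∫ x in a..b, f x ^ 2) * (∫ x in a..b, g x ^ 2))
      = Real.sqrt (∫ x in a..b, f x ^ 2) * Real.sqrt (∫ x in a..b, g x ^ 2) :=
    Real.sqrt_mul (intervalIntegral.integral_nonneg hab fun u _ => sq_nonneg _) _
  linarith

set_option maxHeartbeats 1600000 in
theorem stmt8
    (m : ℕ) (hm : 1 ≤ m) (R : ℝ) (hR : 0 ≤ R)
    (G : ℝ → Matrix (Fin m) (Fin m) ℝ)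
    (hGc : ∀ i j, ContinuousOn (fun t => G t i j) (Set.Ici 0))
    (hsym : ∀ t, 0 ≤ t → (G t).IsSymm)
    (hpsd : ∀ t, 0 ≤ t → ∀ x : Fin m → ℝ, 0 ≤ x ⬝ᵥ (G t).mulVec x)
    (hrow : ∀ t, 0 ≤ t → ∀ i, ∑ j, G t i j = 0)
    -- operator norm bound `‖G(t)‖ ≤ R` (Euclidean operator norm)
    (hnorm : ∀ t, 0 ≤ t → ∀ x : Fin m → ℝ,
      ∑ i, ((G t).mulVec x i) ^ 2 ≤ R ^ 2 * ∑ i, (x i) ^ 2)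
    (h : ℝ) (hh : 0 < h)
    -- `β_k = min{ xᵀ·((1/h)∫_{kh}^{(k+1)h} G)·x : ‖x‖ = 1, Σᵢ xᵢ = 0 }`
    (β : ℕ → ℝ)
    (hβ : ∀ k : ℕ, β k =
      sInf {y : ℝ | ∃ x : Fin m → ℝ, (∑ i, x i ^ 2) = 1 ∧ (∑ i, x i) = 0 ∧
        y = x ⬝ᵥ (Matrix.of fun i j =>
          (1 / h) * ∫ τ in ((k : ℝ) * h)..(((k : ℝ) + 1) * h), G τ i j).mulVec x})
    (βhat : ℝ) (hβhat : 0 < βhat) (hlb : ∀ k : ℕ, βhat ≤ β k) :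
    ∃ C α : ℝ, 0 < C ∧ 0 < α ∧
      ∀ x : ℝ → Fin m → ℝ,
        (∀ (i : Fin m) (t : ℝ), 0 ≤ t →
          HasDerivAt (fun s => x s i) (-((G t).mulVec (x t) i)) t) →
        ∀ t, 0 ≤ t →
          Real.sqrt (∑ i, (x t i - (1 / (m : ℝ)) * ∑ j, x 0 j) ^ 2) ≤
            C * Real.exp (-α * t) *
              Real.sqrt (∑ i, (x 0 i - (1 / (m : ℝ)) * ∑ j, x 0 j) ^ 2) := by
  -- constants
  have hRh2 : (0:ℝ) < (1 + R * h) ^ 2 := by positivity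
  set θ : ℝ := 2 * h * βhat / (1 + R * h) ^ 2 with hθdef
  have hθpos : 0 < θ := div_pos (by nlinarith) hRh2
  set q : ℝ := max (1 - θ) (1/2) with hqdef
  have hqlt1 : q < 1 := max_lt (by linarith) (by norm_num)
  have hqpos : (0:ℝ) < q := lt_of_lt_of_le (by norm_num) (le_max_right _ _)
  have hlogq : Real.log q < 0 := Real.log_neg hqpos hqlt1
  refine ⟨Real.sqrt (1/q), -(Real.log q)/(2*h), Real.sqrt_pos.mpr (by positivity),
    div_pos (neg_pos.mpr hlogq) (by linarith), ?_⟩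
  intro x hx
  set c : ℝ := (1/(m:ℝ)) * ∑ j, x 0 j with hcdef
  set y : ℝ → Fin m → ℝ := fun t i => x t i - c with hydef
  set V : ℝ → ℝ := fun t => ∑ i, (y t i)^2 with hVdef
  -- continuity
  have hxc : ∀ i, ContinuousOn (fun s => x s i) (Set.Ici 0) :=
    fun i s hs => ((hx i s hs).continuousAt).continuousWithinAt
  have hyc : ∀ i, ContinuousOn (fun s => y s i) (Set.Ici 0) :=
    fun i => (hxc i).sub continuousOn_const
  have hQc : ∀ (u v : ℝ → Fin m → ℝ), (∀ i, ContinuousOn (fun s => u s i) (Set.Ici 0)) →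
      (∀ i, ContinuousOn (fun s => v s i) (Set.Ici 0)) →
      ContinuousOn (fun s => u s ⬝ᵥ (G s).mulVec (v s)) (Set.Ici 0) := by
    intro u v hu hv
    have e : (fun s => u s ⬝ᵥ (G s).mulVec (v s))
        = fun s => ∑ i, u s i * ∑ j, G s i j * v s j := rfl
    rw [e]
    exact continuousOn_finset_sum _ fun i _ =>
      (hu i).mul (continuousOn_finset_sum _ fun j _ => (hGc i j).mul (hv j))
  have hFc : ∀ i, ContinuousOn (fun s => (G s).mulVec (y s) i) (Set.Ici 0) := by
    intro i
    have e : (fun s => (G s).mulVec (y s) i) = fun s => ∑ j, G s i j * y s j := rfl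
    rw [e]
    exact continuousOn_finset_sum _ fun j _ => (hGc i j).mul (hyc j)
  have hWc : ContinuousOn (fun s => y s ⬝ᵥ (G s).mulVec (y s)) (Set.Ici 0) := hQc y y hyc hyc
  -- derivative of y
  have hy' : ∀ (i : Fin m) (s : ℝ), 0 ≤ s →
      HasDerivAt (fun u => y u i) (-((G s).mulVec (y s) i)) s := by
    intro i s hs
    have h1 : HasDerivAt (fun u => y u i) (-((G s).mulVec (x s) i)) s :=
      (hx i s hs).sub_const c
    have e : (G s).mulVec (y s) i = (G s).mulVec (x s) i - (∑ j, G s i j) * c := by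
      simp only [Matrix.mulVec, dotProduct, hydef]
      rw [Finset.sum_mul, ← Finset.sum_sub_distrib]
      exact Finset.sum_congr rfl fun j _ => by ring
    have e2 : (G s).mulVec (y s) i = (G s).mulVec (x s) i := by
      rw [e, hrow s hs i]; ring
    rw [e2]; exact h1
  -- zero sum of y
  have hysum : ∀ s, 0 ≤ s → ∑ i, y s i = 0 := by
    have hsder : ∀ s, 0 ≤ s → HasDerivAt (fun u => ∑ i, x u i) 0 s := by
      intro s hs
      have h1 : HasDerivAt (fun u => ∑ i, x u i) (∑ i, -((G s).mulVec (x s) i)) s :=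
        HasDerivAt.fun_sum fun i _ => hx i s hs
      have e1 : ∑ i, -((G s).mulVec (x s) i) = 0 := by
        simp only [Matrix.mulVec, dotProduct]
        have e0 : ∑ i : Fin m, -∑ j, G s i j * x s j
            = -∑ i : Fin m, ∑ j, G s i j * x s j := by simp
        rw [e0, neg_eq_zero, Finset.sum_comm]
        apply Finset.sum_eq_zero
        intro j _
        rw [← Finset.sum_mul]
        have e2 : ∑ i, G s i j = 0 := by
          rw [Finset.sum_congr rfl fun i _ => (hsym s hs).apply j i]
          exact hrow s hs j
        rw [e2, zero_mul]
      rw [e1] at h1; exact h1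
    have hconst : ∀ s, 0 ≤ s → ∑ i, x s i = ∑ i, x 0 i := by
      intro s hs
      have := constant_of_has_deriv_right_zero (f := fun u => ∑ i, x u i) (a := 0) (b := s)
        (fun u hu => ((hsder u hu.1).continuousAt).continuousWithinAt)
        (fun u hu => (hsder u hu.1).hasDerivWithinAt)
      exact this s ⟨hs, le_refl s⟩
    intro s hs
    have hm0 : ((m:ℝ)) ≠ 0 := by
      have : (0:ℝ) < m := by exact_mod_cast Nat.lt_of_lt_of_le Nat.zero_lt_one hm
      linarith
    simp only [hydef]
    rw [Finset.sum_sub_distrib, hconst s hs, Finset.sum_const, Finset.card_univ,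
      Fintype.card_fin, nsmul_eq_mul, hcdef]
    field_simp
    ring
  -- derivative of V
  have hV' : ∀ s, 0 ≤ s → HasDerivAt V (-2 * (y s ⬝ᵥ (G s).mulVec (y s))) s := by
    intro s hs
    have h1 : HasDerivAt (fun u => ∑ i, (y u i)^2)
        (∑ i, (2:ℕ) * (y s i)^(2-1) * (-((G s).mulVec (y s) i))) s :=
      HasDerivAt.fun_sum fun i _ => (hy' i s hs).pow 2
    have e : ∑ i, ((2:ℕ):ℝ) * (y s i)^(2-1) * (-((G s).mulVec (y s) i))
        = -2 * (y s ⬝ᵥ (G s).mulVec (y s)) := by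
      simp only [dotProduct]
      rw [Finset.mul_sum]
      exact Finset.sum_congr rfl fun i _ => by push_cast; ring
    rw [e] at h1
    exact h1
  -- integrability of W on subintervals of Ici 0
  have hsubIci : ∀ a b : ℝ, 0 ≤ a → a ≤ b → Set.uIcc a b ⊆ Set.Ici 0 := by
    intro a b ha hab
    rw [Set.uIcc_of_le hab]
    intro u hu; exact le_trans ha hu.1
  have hIW : ∀ a b : ℝ, 0 ≤ a → a ≤ b →
      IntervalIntegrable (fun s => y s ⬝ᵥ (G s).mulVec (y s)) MeasureTheory.volume a b :=
    fun a b ha hab => (hWc.mono (hsubIci a b ha hab)).intervalIntegrable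
  -- FTC for V
  have hVftc : ∀ a b : ℝ, 0 ≤ a → a ≤ b →
      V b = V a - 2 * ∫ s in a..b, y s ⬝ᵥ (G s).mulVec (y s) := by
    intro a b ha hab
    have h1 : ∫ s in a..b, (-2 * (y s ⬝ᵥ (G s).mulVec (y s))) = V b - V a :=
      intervalIntegral.integral_eq_sub_of_hasDerivAt
        (fun u hu => hV' u (hsubIci a b ha hab hu))
        ((hIW a b ha hab).const_mul (-2))
    rw [intervalIntegral.integral_const_mul] at h1
    linarith
  -- V is nonnegative
  have hVnn : ∀ s, 0 ≤ V s := by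
    intro s; rw [hVdef]; positivity
  -- monotonicity
  have hVmono : ∀ a b : ℝ, 0 ≤ a → a ≤ b → V b ≤ V a := by
    intro a b ha hab
    rw [hVftc a b ha hab]
    have : 0 ≤ ∫ s in a..b, y s ⬝ᵥ (G s).mulVec (y s) :=
      intervalIntegral.integral_nonneg hab (fun u hu => hpsd u (le_trans ha hu.1) _)
    linarith
  -- key decay over one interval
  have hdecay : ∀ k : ℕ, V (((k:ℝ)+1)*h) ≤ q * V ((k:ℝ)*h) := by
    intro k
    set a : ℝ := (k:ℝ)*h with ha
    set b : ℝ := ((k:ℝ)+1)*h with hb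
    have ha0 : 0 ≤ a := by rw [ha]; positivity
    have hba : b - a = h := by rw [ha, hb]; ring
    have hab : a ≤ b := by linarith
    have hb0 : 0 ≤ b := le_trans ha0 hab
    have hIci : ∀ u ∈ Set.Icc a b, (0:ℝ) ≤ u := fun u hu => le_trans ha0 hu.1
    have hci : ∀ (f : ℝ → ℝ), ContinuousOn f (Set.Ici 0) → ∀ (a' b' : ℝ), 0 ≤ a' → a' ≤ b' →
        IntervalIntegrable f MeasureTheory.volume a' b' :=
      fun f hf a' b' ha' hab' => (hf.mono (hsubIci _ _ ha' hab')).intervalIntegrable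
    set z : Fin m → ℝ := y a with hzdef
    set D : ℝ := ∫ s in a..b, y s ⬝ᵥ (G s).mulVec (y s) with hD
    have hD0 : 0 ≤ D :=
      intervalIntegral.integral_nonneg hab (fun u hu => hpsd u (hIci u hu) _)
    have hVb : V b = V a - 2*D := hVftc a b ha0 hab
    -- entry bound
    have hGent : ∀ τ, 0 ≤ τ → ∀ i j, |G τ i j| ≤ R := by
      intro τ hτ i j
      have h1 := hnorm τ hτ (fun i' => if i' = j then (1:ℝ) else 0)
      have e1 : ∀ i', (G τ).mulVec (fun i' => if i' = j then (1:ℝ) else 0) i' = G τ i' j := by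
        intro i'
        simp only [Matrix.mulVec, dotProduct, mul_ite, mul_one, mul_zero]
        simp
      have e2 : ∑ i' : Fin m, (if i' = j then (1:ℝ) else 0)^2 = 1 := by
        have e3 : ∀ i' : Fin m, ((if i' = j then (1:ℝ) else 0))^2 = if i' = j then 1 else 0 :=
          fun i' => by split <;> norm_num
        simp_rw [e3]
        simp
      simp_rw [e1, e2, mul_one] at h1
      have h3 : (G τ i j)^2 ≤ R^2 :=
        le_trans (Finset.single_le_sum (f := fun i' => (G τ i' j)^2)
          (fun _ _ => sq_nonneg _) (Finset.mem_univ i)) h1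
      rw [abs_le]; constructor <;> nlinarith [h3, hR]
    have hGint : ∀ i j, IntervalIntegrable (fun τ => G τ i j) MeasureTheory.volume a b :=
      fun i j => hci _ (hGc i j) _ _ ha0 hab
    -- z has zero sum and its continuity facts
    have hzsum : ∑ i, z i = 0 := hysum a ha0
    have hzS : ∑ i, z i ^ 2 = V a := rfl
    -- lower bound via β
    have hβz : h * βhat * V a ≤ ∑ i, ∑ j, (z i * z j) * ∫ τ in a..b, G τ i j := by
      rcases eq_or_lt_of_le (hVnn a) with hV0 | hVp
      · have hz0 : ∀ i, z i = 0 := by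
          intro i
          have h0 := (Finset.sum_eq_zero_iff_of_nonneg
            (fun i (_ : i ∈ Finset.univ) => sq_nonneg (y a i))).mp hV0.symm i (Finset.mem_univ i)
          exact (pow_eq_zero_iff two_ne_zero).mp h0
        rw [← hV0, mul_zero]
        apply le_of_eq; symm
        apply Finset.sum_eq_zero; intro i _
        apply Finset.sum_eq_zero; intro j _
        rw [hz0 i]; ring
      · -- bounded below
        have hSbdd : BddBelow {w : ℝ | ∃ v : Fin m → ℝ, (∑ i, v i ^ 2) = 1 ∧ (∑ i, v i) = 0 ∧
            w = v ⬝ᵥ (Matrix.of fun i j =>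
              (1 / h) * ∫ τ in ((k : ℝ) * h)..(((k : ℝ) + 1) * h), G τ i j).mulVec v} := by
          refine ⟨-((m:ℝ)^2 * R), ?_⟩
          rintro w ⟨v, hv1, hv0, rfl⟩
          have hvb : ∀ i, |v i| ≤ 1 := by
            intro i
            have h0' := Finset.single_le_sum (f := fun i => (v i)^2)
              (fun _ _ => sq_nonneg _) (Finset.mem_univ i)
            rw [hv1] at h0'
            have h0 : v i ^ 2 ≤ 1 := h0'
            rw [abs_le]
            constructor <;> nlinarith [h0, sq_nonneg (v i + 1), sq_nonneg (v i - 1)]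
          have hGb : ∀ i j, |(1/h) * ∫ τ in ((k:ℝ)*h)..(((k:ℝ)+1)*h), G τ i j| ≤ R := by
            intro i j
            have h1 : ‖∫ τ in ((k:ℝ)*h)..(((k:ℝ)+1)*h), G τ i j‖ ≤ R * |(((k:ℝ)+1)*h) - ((k:ℝ)*h)| := by
              apply intervalIntegral.norm_integral_le_of_norm_le_const
              intro τ hτ
              rw [Set.uIoc_of_le hab] at hτ
              exact hGent τ (le_trans ha0 (le_of_lt hτ.1)) i j
            rw [Real.norm_eq_abs] at h1
            have e2 : |(((k:ℝ)+1)*h) - ((k:ℝ)*h)| = h := by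
              rw [show (((k:ℝ)+1)*h) - ((k:ℝ)*h) = h by ring, abs_of_pos hh]
            rw [e2] at h1
            rw [abs_mul, abs_of_pos (by positivity : (0:ℝ) < 1/h)]
            calc 1/h * |∫ τ in ((k:ℝ)*h)..(((k:ℝ)+1)*h), G τ i j| ≤ 1/h * (R*h) := by
                  apply mul_le_mul_of_nonneg_left h1 (by positivity)
              _ = R := by field_simp
          have habs : |v ⬝ᵥ (Matrix.of fun i j =>
              (1/h) * ∫ τ in ((k:ℝ)*h)..(((k:ℝ)+1)*h), G τ i j).mulVec v| ≤ (m:ℝ)^2 * R := by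
            have e0 : v ⬝ᵥ (Matrix.of fun i j =>
                (1/h) * ∫ τ in ((k:ℝ)*h)..(((k:ℝ)+1)*h), G τ i j).mulVec v
                = ∑ i, ∑ j, v i * ((1/h) * ∫ τ in ((k:ℝ)*h)..(((k:ℝ)+1)*h), G τ i j) * v j := by
              simp only [dotProduct, Matrix.mulVec, Matrix.of_apply, Finset.mul_sum]
              exact Finset.sum_congr rfl fun i _ => Finset.sum_congr rfl fun j _ => by ring
            rw [e0]
            calc |∑ i, ∑ j, v i * ((1/h) * ∫ τ in ((k:ℝ)*h)..(((k:ℝ)+1)*h), G τ i j) * v j|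
                ≤ ∑ i, |∑ j, v i * ((1/h) * ∫ τ in ((k:ℝ)*h)..(((k:ℝ)+1)*h), G τ i j) * v j| :=
                  Finset.abs_sum_le_sum_abs _ _
              _ ≤ ∑ i : Fin m, ∑ j : Fin m, |v i * ((1/h) * ∫ τ in ((k:ℝ)*h)..(((k:ℝ)+1)*h), G τ i j) * v j| :=
                  Finset.sum_le_sum fun i _ => Finset.abs_sum_le_sum_abs _ _
              _ ≤ ∑ _i : Fin m, ∑ _j : Fin m, R := by
                  apply Finset.sum_le_sum; intro i _
                  apply Finset.sum_le_sum; intro j _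
                  rw [abs_mul, abs_mul]
                  have h9 : (0:ℝ) ≤ |(1/h) * ∫ τ in ((k:ℝ)*h)..(((k:ℝ)+1)*h), G τ i j| := abs_nonneg _
                  calc |v i| * |(1/h) * ∫ τ in ((k:ℝ)*h)..(((k:ℝ)+1)*h), G τ i j| * |v j|
                      ≤ (1 * |(1/h) * ∫ τ in ((k:ℝ)*h)..(((k:ℝ)+1)*h), G τ i j|) * 1 :=
                        mul_le_mul (mul_le_mul (hvb i) le_rfl h9 zero_le_one) (hvb j)
                          (abs_nonneg _) (by positivity)
                    _ = |(1/h) * ∫ τ in ((k:ℝ)*h)..(((k:ℝ)+1)*h), G τ i j| := by ring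
                    _ ≤ R := hGb i j
              _ = (m:ℝ)^2 * R := by
                  simp [Finset.sum_const, Finset.card_univ]
                  ring
          linarith [neg_abs_le (v ⬝ᵥ (Matrix.of fun i j =>
              (1/h) * ∫ τ in ((k:ℝ)*h)..(((k:ℝ)+1)*h), G τ i j).mulVec v), habs]
        set n := Real.sqrt (V a) with hn
        have hnpos : 0 < n := Real.sqrt_pos.mpr hVp
        have hn2 : n^2 = V a := Real.sq_sqrt (hVnn a)
        set u : Fin m → ℝ := fun i => z i / n with hu
        have hu1 : ∑ i, u i ^ 2 = 1 := by
          simp only [hu, div_pow]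
          rw [← Finset.sum_div, hzS, ← hn2]
          field_simp
        have hu0 : ∑ i, u i = 0 := by
          simp only [hu]
          rw [← Finset.sum_div, hzsum, zero_div]
        have hmem : (u ⬝ᵥ (Matrix.of fun i j =>
            (1 / h) * ∫ τ in ((k : ℝ) * h)..(((k : ℝ) + 1) * h), G τ i j).mulVec u)
            ∈ {w : ℝ | ∃ v : Fin m → ℝ, (∑ i, v i ^ 2) = 1 ∧ (∑ i, v i) = 0 ∧
            w = v ⬝ᵥ (Matrix.of fun i j =>
              (1 / h) * ∫ τ in ((k : ℝ) * h)..(((k : ℝ) + 1) * h), G τ i j).mulVec v} :=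
          ⟨u, hu1, hu0, rfl⟩
        have hβu : βhat ≤ u ⬝ᵥ (Matrix.of fun i j =>
            (1 / h) * ∫ τ in ((k : ℝ) * h)..(((k : ℝ) + 1) * h), G τ i j).mulVec u := by
          have h0 := csInf_le hSbdd hmem
          rw [← hβ k] at h0
          exact le_trans (hlb k) h0
        have hscale : (n^2*h) * (u ⬝ᵥ (Matrix.of fun i j =>
            (1 / h) * ∫ τ in ((k : ℝ) * h)..(((k : ℝ) + 1) * h), G τ i j).mulVec u)
            = ∑ i, ∑ j, (z i * z j) * ∫ τ in ((k:ℝ)*h)..(((k:ℝ)+1)*h), G τ i j := by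
          simp only [dotProduct, Matrix.mulVec, Matrix.of_apply, Finset.mul_sum]
          refine Finset.sum_congr rfl fun i _ => ?_
          refine Finset.sum_congr rfl fun j _ => ?_
          simp only [hu]
          field_simp
        have hfin : h * βhat * V a ≤ ∑ i, ∑ j, (z i * z j) * ∫ τ in ((k:ℝ)*h)..(((k:ℝ)+1)*h), G τ i j := by
          rw [← hscale]
          calc h * βhat * V a = (n^2*h) * βhat := by rw [hn2]; ring
            _ ≤ (n^2*h) * (u ⬝ᵥ (Matrix.of fun i j =>
                (1 / h) * ∫ τ in ((k : ℝ) * h)..(((k : ℝ) + 1) * h), G τ i j).mulVec u) := by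
                apply mul_le_mul_of_nonneg_left hβu
                positivity
        exact hfin
    -- swap integral and sums
    have hciij : ∀ i : Fin m, IntervalIntegrable (fun s => ∑ j, (z i * z j) * G s i j)
        MeasureTheory.volume a b := fun i => hci _
      (continuousOn_finset_sum _ fun j _ => continuousOn_const.mul (hGc i j)) _ _ ha0 hab
    have hswap : (∫ s in a..b, z ⬝ᵥ (G s).mulVec z)
        = ∑ i, ∑ j, (z i * z j) * ∫ τ in a..b, G τ i j := by
      have e : ∀ s : ℝ, z ⬝ᵥ (G s).mulVec z = ∑ i, ∑ j, (z i * z j) * G s i j := by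
        intro s
        simp only [dotProduct, Matrix.mulVec, Finset.mul_sum]
        exact Finset.sum_congr rfl fun i _ => Finset.sum_congr rfl fun j _ => by ring
      simp_rw [e]
      rw [intervalIntegral.integral_finset_sum (fun i _ => hciij i)]
      refine Finset.sum_congr rfl fun i _ => ?_
      rw [intervalIntegral.integral_finset_sum
        (fun j _ => hci (fun s => (z i * z j) * G s i j) (continuousOn_const.mul (hGc i j)) _ _ ha0 hab)]
      exact Finset.sum_congr rfl fun j _ => intervalIntegral.integral_const_mul _ _
    -- deviation bound
    have hdev : ∀ t ∈ Set.Icc a b, ∑ i, (y t i - z i)^2 ≤ h * R * D := by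
      intro t htab
      have hta : a ≤ t := htab.1
      have htb : t ≤ b := htab.2
      have ht0 : 0 ≤ t := le_trans ha0 hta
      have hWD : (∫ s in a..t, y s ⬝ᵥ (G s).mulVec (y s)) ≤ D := by
        have hadd := intervalIntegral.integral_add_adjacent_intervals
          (hIW a t ha0 hta) (hIW t b ht0 htb)
        have hpos : 0 ≤ ∫ s in t..b, y s ⬝ᵥ (G s).mulVec (y s) :=
          intervalIntegral.integral_nonneg htb (fun u hu => hpsd u (le_trans ht0 hu.1) _)
        rw [hD]
        linarith [hadd, hpos]
      have hsq : ∀ i, (y t i - z i)^2 ≤ (t - a) * ∫ s in a..t, ((G s).mulVec (y s) i)^2 := by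
        intro i
        have hfc : ContinuousOn (fun s => -((G s).mulVec (y s) i)) (Set.Icc a t) :=
          ((hFc i).mono (fun u hu => le_trans ha0 hu.1)).neg
        have hcomp : y t i - z i = ∫ s in a..t, -((G s).mulVec (y s) i) := by
          rw [intervalIntegral.integral_eq_sub_of_hasDerivAt
            (fun u hu => hy' i u (hsubIci a t ha0 hta hu))
            (hci _ ((hFc i).neg) _ _ ha0 hta)]
        have hCS := intCS hta (f := fun s => -((G s).mulVec (y s) i))
          (g := fun _ => (1:ℝ)) hfc continuousOn_const
        simp only [mul_one, one_pow] at hCS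
        have e1 : (∫ _s in a..t, (1:ℝ)) = t - a := by simp
        rw [e1] at hCS
        have e2 : (∫ s in a..t, (-((G s).mulVec (y s) i))^2)
            = ∫ s in a..t, ((G s).mulVec (y s) i)^2 := by
          apply intervalIntegral.integral_congr
          intro u _
          simp [neg_sq]
        rw [e2] at hCS
        rw [hcomp]
        nlinarith [hCS]
      have hsum2 : ∑ i, (y t i - z i)^2
          ≤ (t - a) * ∫ s in a..t, ∑ i, ((G s).mulVec (y s) i)^2 := by
        have h1 : ∑ i, (y t i - z i)^2
            ≤ ∑ i, (t-a) * ∫ s in a..t, ((G s).mulVec (y s) i)^2 :=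
          Finset.sum_le_sum fun i _ => hsq i
        rw [← Finset.mul_sum] at h1
        rw [intervalIntegral.integral_finset_sum
          (fun i _ => hci (fun s => ((G s).mulVec (y s) i)^2) ((hFc i).pow 2) _ _ ha0 hta)]
        exact h1
      have hptw : ∫ s in a..t, (∑ i, ((G s).mulVec (y s) i)^2)
          ≤ ∫ s in a..t, R * (y s ⬝ᵥ (G s).mulVec (y s)) := by
        apply intervalIntegral.integral_mono_on hta
          (hci _ (continuousOn_finset_sum _ fun i _ => (hFc i).pow 2) _ _ ha0 hta)
          ((hIW a t ha0 hta).const_mul R)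
        intro s hs
        have hs0 : 0 ≤ s := le_trans ha0 hs.1
        exact normsq_mulVec_le (G s) R hR (hsym s hs0) (hpsd s hs0) (hnorm s hs0) (y s)
      have hconst2 : ∫ s in a..t, R * (y s ⬝ᵥ (G s).mulVec (y s))
          = R * ∫ s in a..t, (y s ⬝ᵥ (G s).mulVec (y s)) :=
        intervalIntegral.integral_const_mul _ _
      have hta' : 0 ≤ t - a := by linarith
      have htah : t - a ≤ h := by linarith
      have hWnn : 0 ≤ ∫ s in a..t, (y s ⬝ᵥ (G s).mulVec (y s)) :=
        intervalIntegral.integral_nonneg hta (fun u hu => hpsd u (le_trans ha0 hu.1) _)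
      calc ∑ i, (y t i - z i)^2
          ≤ (t-a) * ∫ s in a..t, ∑ i, ((G s).mulVec (y s) i)^2 := hsum2
        _ ≤ (t-a) * (R * ∫ s in a..t, (y s ⬝ᵥ (G s).mulVec (y s))) := by
            apply mul_le_mul_of_nonneg_left _ hta'
            rw [← hconst2]; exact hptw
        _ ≤ h * (R * D) :=
            mul_le_mul htah (mul_le_mul_of_nonneg_left hWD hR)
              (mul_nonneg hR hWnn) (le_of_lt hh)
        _ = h * R * D := by ring
    -- E and X
    set ee : ℝ → Fin m → ℝ := fun s i => z i - y s i with hedef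
    have hec : ∀ i, ContinuousOn (fun s => ee s i) (Set.Ici 0) :=
      fun i => continuousOn_const.sub (hyc i)
    have heGec : ContinuousOn (fun s => ee s ⬝ᵥ (G s).mulVec (ee s)) (Set.Ici 0) :=
      hQc ee ee hec hec
    have heGyc : ContinuousOn (fun s => ee s ⬝ᵥ (G s).mulVec (y s)) (Set.Ici 0) :=
      hQc ee y hec hyc
    set E : ℝ := ∫ s in a..b, ee s ⬝ᵥ (G s).mulVec (ee s) with hE
    set X : ℝ := ∫ s in a..b, ee s ⬝ᵥ (G s).mulVec (y s) with hX
    have hE0 : 0 ≤ E :=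
      intervalIntegral.integral_nonneg hab (fun u hu => hpsd u (hIci u hu) _)
    have hesq : ∀ s ∈ Set.Icc a b, ∑ i, (ee s i)^2 ≤ h * R * D := by
      intro s hs
      have h1 := hdev s hs
      have e0 : ∑ i, (ee s i)^2 = ∑ i, (y s i - z i)^2 :=
        Finset.sum_congr rfl fun i _ => by simp only [hedef]; ring
      rw [e0]; exact h1
    have hEle : E ≤ h * (R * (h * R * D)) := by
      rw [hE]
      calc (∫ s in a..b, ee s ⬝ᵥ (G s).mulVec (ee s))
          ≤ ∫ _s in a..b, (R * (h * R * D)) := by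
            apply intervalIntegral.integral_mono_on hab (hci _ heGec _ _ ha0 hab)
              intervalIntegrable_const
            intro s hs
            have hs0 : 0 ≤ s := hIci s hs
            calc ee s ⬝ᵥ (G s).mulVec (ee s) ≤ R * ∑ i, (ee s i)^2 :=
                quad_form_le (G s) R hR (hnorm s hs0) (ee s)
              _ ≤ R * (h * R * D) := mul_le_mul_of_nonneg_left (hesq s hs) hR
        _ = (b - a) • (R * (h * R * D)) := intervalIntegral.integral_const _
        _ = h * (R * (h * R * D)) := by rw [smul_eq_mul, hba]
    have hIccsub : Set.Icc a b ⊆ Set.Ici 0 := fun u hu => hIci u hu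
    have hXle : X ≤ Real.sqrt E * Real.sqrt D := by
      rw [hX]
      have h1 : ∀ s ∈ Set.Icc a b, ee s ⬝ᵥ (G s).mulVec (y s)
          ≤ Real.sqrt (ee s ⬝ᵥ (G s).mulVec (ee s))
            * Real.sqrt (y s ⬝ᵥ (G s).mulVec (y s)) := by
        intro s hs
        have hs0 : 0 ≤ s := hIci s hs
        have hcs := psdCS (G s) (dot_symm (G s) (hsym s hs0)) (hpsd s hs0) (ee s) (y s)
        have h2 : ee s ⬝ᵥ (G s).mulVec (y s) ≤ |ee s ⬝ᵥ (G s).mulVec (y s)| := le_abs_self _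
        have h3 : |ee s ⬝ᵥ (G s).mulVec (y s)|
            = Real.sqrt ((ee s ⬝ᵥ (G s).mulVec (y s))^2) := (Real.sqrt_sq_eq_abs _).symm
        have h4 := Real.sqrt_le_sqrt hcs
        rw [Real.sqrt_mul (hpsd s hs0 _) _] at h4
        linarith
      have h5 : (∫ s in a..b, ee s ⬝ᵥ (G s).mulVec (y s))
          ≤ ∫ s in a..b, Real.sqrt (ee s ⬝ᵥ (G s).mulVec (ee s))
              * Real.sqrt (y s ⬝ᵥ (G s).mulVec (y s)) :=
        intervalIntegral.integral_mono_on hab (hci _ heGyc _ _ ha0 hab)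
          (hci _ ((heGec.sqrt).mul (hWc.sqrt)) _ _ ha0 hab) h1
      have h6 := intCS' hab (f := fun s => Real.sqrt (ee s ⬝ᵥ (G s).mulVec (ee s)))
        (g := fun s => Real.sqrt (y s ⬝ᵥ (G s).mulVec (y s)))
        ((heGec.mono hIccsub).sqrt) ((hWc.mono hIccsub).sqrt)
      have e7 : (∫ s in a..b, (Real.sqrt (ee s ⬝ᵥ (G s).mulVec (ee s)))^2) = E := by
        rw [hE]
        apply intervalIntegral.integral_congr
        intro u hu
        rw [Set.uIcc_of_le hab] at hu
        exact Real.sq_sqrt (hpsd u (hIci u hu) _)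
      have e8 : (∫ s in a..b, (Real.sqrt (y s ⬝ᵥ (G s).mulVec (y s)))^2) = D := by
        rw [hD]
        apply intervalIntegral.integral_congr
        intro u hu
        rw [Set.uIcc_of_le hab] at hu
        exact Real.sq_sqrt (hpsd u (hIci u hu) _)
      rw [e7, e8] at h6
      linarith [h5, h6]
    -- expansion
    have hexp : (∫ s in a..b, z ⬝ᵥ (G s).mulVec z) = D + 2*X + E := by
      have e9 : Set.EqOn (fun s => z ⬝ᵥ (G s).mulVec z)
          (fun s => (y s ⬝ᵥ (G s).mulVec (y s))
            + (2 * (ee s ⬝ᵥ (G s).mulVec (y s)) + (ee s ⬝ᵥ (G s).mulVec (ee s))))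
          (Set.uIcc a b) := by
        intro s hs
        rw [Set.uIcc_of_le hab] at hs
        have hs0 : 0 ≤ s := hIci s hs
        have hzd : z = y s + ee s := by
          funext i
          simp only [hedef, Pi.add_apply]
          ring
        show z ⬝ᵥ (G s).mulVec z = _
        rw [hzd, Matrix.mulVec_add, dotProduct_add, add_dotProduct,
          add_dotProduct]
        have hsym' := dot_symm (G s) (hsym s hs0) (y s) (ee s)
        simp only
        linarith [hsym']
      rw [intervalIntegral.integral_congr e9]
      rw [intervalIntegral.integral_add (hci _ hWc _ _ ha0 hab)
        (((hci _ heGyc _ _ ha0 hab).const_mul 2).add (hci _ heGec _ _ ha0 hab))]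
      rw [intervalIntegral.integral_add ((hci _ heGyc _ _ ha0 hab).const_mul 2)
        (hci _ heGec _ _ ha0 hab)]
      rw [intervalIntegral.integral_const_mul]
      rw [hD, hX, hE]; ring
    -- assembly
    have hsqrtE : Real.sqrt E ≤ h * R * Real.sqrt D := by
      have h1 : E ≤ (h*R)^2 * D := by
        calc E ≤ h * (R * (h * R * D)) := hEle
          _ = (h*R)^2 * D := by ring
      calc Real.sqrt E ≤ Real.sqrt ((h*R)^2 * D) := Real.sqrt_le_sqrt h1
        _ = (h*R) * Real.sqrt D := by
            rw [Real.sqrt_mul (sq_nonneg _), Real.sqrt_sq (by positivity)]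
        _ = h * R * Real.sqrt D := by ring
    have hXD : X ≤ h * R * D := by
      calc X ≤ Real.sqrt E * Real.sqrt D := hXle
        _ ≤ (h * R * Real.sqrt D) * Real.sqrt D :=
            mul_le_mul_of_nonneg_right hsqrtE (Real.sqrt_nonneg _)
        _ = h * R * (Real.sqrt D * Real.sqrt D) := by ring
        _ = h * R * D := by rw [Real.mul_self_sqrt hD0]
    have hkey : h * βhat * V a ≤ (1 + R*h)^2 * D := by
      calc h * βhat * V a ≤ ∑ i, ∑ j, (z i * z j) * ∫ τ in a..b, G τ i j := hβz
        _ = ∫ s in a..b, z ⬝ᵥ (G s).mulVec z := hswap.symm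
        _ = D + 2*X + E := hexp
        _ ≤ D + 2*(h*R*D) + (h*(R*(h*R*D))) := by linarith [hXD, hEle]
        _ = (1 + R*h)^2 * D := by ring
    have h2D : θ * V a ≤ 2 * D := by
      rw [hθdef, div_mul_eq_mul_div, div_le_iff₀ hRh2]
      nlinarith [hkey]
    have hfinal : V b ≤ (1 - θ) * V a := by
      rw [hVb]; nlinarith [h2D]
    calc V b ≤ (1-θ) * V a := hfinal
      _ ≤ q * V a := mul_le_mul_of_nonneg_right (le_max_left _ _) (hVnn a)
  -- induction
  have hiter : ∀ k : ℕ, V ((k:ℝ)*h) ≤ q^k * V 0 := by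
    intro k
    induction k with
    | zero => simp
    | succ k ih =>
      have h1 := hdecay k
      have h2 : q * V ((k:ℝ)*h) ≤ q * (q^k * V 0) :=
        mul_le_mul_of_nonneg_left ih (le_of_lt hqpos)
      have e : ((k+1 : ℕ):ℝ) = (k:ℝ)+1 := by push_cast; ring
      rw [e]
      calc V (((k:ℝ)+1)*h) ≤ q * V ((k:ℝ)*h) := h1
        _ ≤ q * (q^k * V 0) := h2
        _ = q^(k+1) * V 0 := by ring
  -- conclusion
  intro t ht
  set A := Real.log q with hA
  set α := -A/(2*h) with hα
  show Real.sqrt (V t) ≤ Real.sqrt (1/q) * Real.exp (-α * t) * Real.sqrt (V 0)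
  set k := ⌊t/h⌋₊ with hk
  have hdiv : 0 ≤ t/h := div_nonneg ht (le_of_lt hh)
  have hkle : (k:ℝ) ≤ t/h := Nat.floor_le hdiv
  have hklt : t/h < (k:ℝ)+1 := Nat.lt_floor_add_one _
  have hkh : (k:ℝ)*h ≤ t := by
    have := (le_div_iff₀ hh).mp hkle
    linarith
  have h1 : V t ≤ V ((k:ℝ)*h) := hVmono _ _ (by positivity) hkh
  have h2 : V t ≤ q^k * V 0 := le_trans h1 (hiter k)
  have hqk : (q:ℝ)^k = Real.exp ((k:ℝ) * A) := by
    rw [hA, ← Real.log_pow, Real.exp_log (pow_pos hqpos k)]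
  have h3 : (k:ℝ) * A ≤ (t/h - 1) * A := by
    apply mul_le_mul_of_nonpos_right _ (le_of_lt hlogq)
    linarith
  have h4 : q^k ≤ Real.exp ((t/h - 1) * A) := by
    rw [hqk]; exact Real.exp_le_exp.mpr h3
  have e1 : Real.exp ((t/h-1)*A) = (1/q) * (Real.exp (-α*t))^2 := by
    have e0 : (t/h - 1)*A = -A + (-α*t + -α*t) := by
      rw [hα]; field_simp; ring
    rw [e0, Real.exp_add, Real.exp_add, ← sq, Real.exp_neg, hA, Real.exp_log hqpos, one_div]
  have h6 : V t ≤ (1/q) * (Real.exp (-α*t))^2 * V 0 := by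
    calc V t ≤ q^k * V 0 := h2
      _ ≤ Real.exp ((t/h-1)*A) * V 0 := mul_le_mul_of_nonneg_right h4 (hVnn 0)
      _ = (1/q) * (Real.exp (-α*t))^2 * V 0 := by rw [e1]
  calc Real.sqrt (V t) ≤ Real.sqrt ((1/q) * (Real.exp (-α*t))^2 * V 0) := Real.sqrt_le_sqrt h6
    _ = Real.sqrt (1/q) * Real.exp (-α*t) * Real.sqrt (V 0) := by
      rw [Real.sqrt_mul (by positivity), Real.sqrt_mul (by positivity),
        Real.sqrt_sq (le_of_lt (Real.exp_pos _))]
end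

section
/- Let n ≥ 1, h > 0, R > 0, and let C : [0,h] → ℝ^{n×n} be continuous with C(s) symmetric, positive semidefinite, and ‖C(s)‖ ≤ R (operator norm) for all s ∈ [0,h]. Let β be the smallest eigenvalue of the symmetric matrix (1/h)∫_0^h C(s) ds. Then every solution z : [0,h] → ℝ^n of ż = −C(t)z satisfies ‖z(h)‖² ≤ (1 − hβ/(1+Rh)²)·‖z(0)‖². -/
open scoped BigOperators
open Matrix

section Aux

open scoped MatrixOrder in
noncomputable def Matrix.PosSemidef.sqrt {n : ℕ} {M : Matrix (Fin n) (Fin n) ℝ}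
    (_ : M.PosSemidef) : Matrix (Fin n) (Fin n) ℝ := CFC.sqrt M

open scoped MatrixOrder in
lemma Matrix.PosSemidef.sqrt_mul_self {n : ℕ} {M : Matrix (Fin n) (Fin n) ℝ}
    (hM : M.PosSemidef) : hM.sqrt * hM.sqrt = M :=
  CFC.sqrt_mul_sqrt_self M hM.nonneg

open scoped MatrixOrder in
lemma Matrix.PosSemidef.posSemidef_sqrt {n : ℕ} {M : Matrix (Fin n) (Fin n) ℝ}
    (hM : M.PosSemidef) : hM.sqrt.PosSemidef :=
  (CFC.sqrt_nonneg M).posSemidef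

lemma quad_eq_sq {n : ℕ} {M : Matrix (Fin n) (Fin n) ℝ} (hM : M.PosSemidef)
    (x : Fin n → ℝ) :
    x ⬝ᵥ M.mulVec x = (hM.sqrt.mulVec x) ⬝ᵥ (hM.sqrt.mulVec x) := by
  have h2 : hM.sqrtᵀ = hM.sqrt := by
    have := hM.posSemidef_sqrt.1
    rwa [Matrix.IsHermitian, conjTranspose_eq_transpose_of_trivial] at this
  conv_lhs => rw [← hM.sqrt_mul_self]
  rw [← Matrix.mulVec_mulVec, Matrix.dotProduct_mulVec, ← Matrix.mulVec_transpose, h2]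

lemma quad_le_R {n : ℕ} {M : Matrix (Fin n) (Fin n) ℝ} {R : ℝ} (hR : 0 ≤ R)
    (hnorm : ∀ x : Fin n → ℝ, ∑ i, (M.mulVec x i) ^ 2 ≤ R ^ 2 * ∑ i, (x i) ^ 2)
    (x : Fin n → ℝ) :
    x ⬝ᵥ M.mulVec x ≤ R * ∑ i, (x i) ^ 2 := by
  have hcs := Finset.sum_mul_sq_le_sq_mul_sq Finset.univ x (M.mulVec x)
  have h1 : (x ⬝ᵥ M.mulVec x) ^ 2 ≤ (R * ∑ i, (x i) ^ 2) ^ 2 := by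
    have h2 := hnorm x
    have h3 : (0:ℝ) ≤ ∑ i, (x i)^2 := Finset.sum_nonneg fun i _ => sq_nonneg _
    calc (x ⬝ᵥ M.mulVec x) ^ 2 ≤ (∑ i, (x i)^2) * ∑ i, (M.mulVec x i)^2 := hcs
      _ ≤ (∑ i, (x i)^2) * (R^2 * ∑ i, (x i)^2) := by
          exact mul_le_mul_of_nonneg_left h2 h3
      _ = (R * ∑ i, (x i) ^ 2) ^ 2 := by ring
  have h4 : 0 ≤ R * ∑ i, (x i)^2 :=
    mul_nonneg hR (Finset.sum_nonneg fun i _ => sq_nonneg _)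
  nlinarith

lemma sq_mulVec_le {n : ℕ} {M : Matrix (Fin n) (Fin n) ℝ} (hM : M.PosSemidef) {R : ℝ}
    (hR : 0 ≤ R)
    (hnorm : ∀ x : Fin n → ℝ, ∑ i, (M.mulVec x i) ^ 2 ≤ R ^ 2 * ∑ i, (x i) ^ 2)
    (x : Fin n → ℝ) :
    ∑ i, (M.mulVec x i) ^ 2 ≤ R * (x ⬝ᵥ M.mulVec x) := by
  set w := hM.sqrt.mulVec x with hw
  have hMx : M.mulVec x = hM.sqrt.mulVec w := by
    rw [hw, Matrix.mulVec_mulVec, hM.sqrt_mul_self]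
  have h1 : ∑ i, (M.mulVec x i) ^ 2 = w ⬝ᵥ M.mulVec w := by
    rw [quad_eq_sq hM w, hMx]; simp [dotProduct, pow_two]
  have h2 : ∑ i, (w i) ^ 2 = x ⬝ᵥ M.mulVec x := by
    rw [quad_eq_sq hM x]; simp [dotProduct, pow_two, hw]
  rw [h1, ← h2]
  exact quad_le_R hR hnorm w

lemma key_pt {n : ℕ} {M : Matrix (Fin n) (Fin n) ℝ} (hM : M.PosSemidef) {R L : ℝ}
    (hR : 0 ≤ R) (hL : 0 < L)
    (hnorm : ∀ x : Fin n → ℝ, ∑ i, (M.mulVec x i) ^ 2 ≤ R ^ 2 * ∑ i, (x i) ^ 2)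
    (u e : Fin n → ℝ) :
    (u + e) ⬝ᵥ M.mulVec (u + e) ≤
      (1 + L) * (u ⬝ᵥ M.mulVec u) + (1 + 1/L) * (R * ∑ i, (e i) ^ 2) := by
  set a := hM.sqrt.mulVec u with ha
  set b := hM.sqrt.mulVec e with hb
  have hab : hM.sqrt.mulVec (u + e) = a + b := by rw [Matrix.mulVec_add]
  have hlhs : (u + e) ⬝ᵥ M.mulVec (u + e) = ∑ i, (a i)^2 + 2 * (∑ i, a i * b i) + ∑ i, (b i)^2 := by
    rw [quad_eq_sq hM, hab]
    simp only [dotProduct, Pi.add_apply]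
    calc ∑ i, (a i + b i) * (a i + b i)
        = ∑ i, ((a i)^2 + (2 * (a i * b i) + (b i)^2)) :=
          Finset.sum_congr rfl fun i _ => by ring
      _ = ∑ i, (a i)^2 + 2 * (∑ i, a i * b i) + ∑ i, (b i)^2 := by
          rw [Finset.sum_add_distrib, Finset.sum_add_distrib, ← Finset.mul_sum]; ring
  have hA : ∑ i, (a i)^2 = u ⬝ᵥ M.mulVec u := by
    rw [quad_eq_sq hM]; simp [dotProduct, pow_two, ha]
  have hB : ∑ i, (b i)^2 = e ⬝ᵥ M.mulVec e := by
    rw [quad_eq_sq hM]; simp [dotProduct, pow_two, hb]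
  have hBle : ∑ i, (b i)^2 ≤ R * ∑ i, (e i)^2 := by
    rw [hB]; exact quad_le_R hR hnorm e
  have hcs : (∑ i, a i * b i)^2 ≤ (∑ i, (a i)^2) * ∑ i, (b i)^2 :=
    Finset.sum_mul_sq_le_sq_mul_sq Finset.univ a b
  have hA0 : (0:ℝ) ≤ ∑ i, (a i)^2 := Finset.sum_nonneg fun i _ => sq_nonneg _
  have hB0 : (0:ℝ) ≤ ∑ i, (b i)^2 := Finset.sum_nonneg fun i _ => sq_nonneg _
  have h2s : 2 * (∑ i, a i * b i) ≤ L * (∑ i, (a i)^2) + (1/L) * ∑ i, (b i)^2 := by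
    have key : 2 * (L * (∑ i, a i * b i)) ≤ L^2 * (∑ i, (a i)^2) + ∑ i, (b i)^2 := by
      have hsq : (2 * (L * (∑ i, a i * b i)))^2 ≤ (L^2 * (∑ i, (a i)^2) + ∑ i, (b i)^2)^2 := by
        nlinarith [sq_nonneg (L^2 * (∑ i, (a i)^2) - ∑ i, (b i)^2),
          mul_nonneg (mul_pos hL hL).le (sub_nonneg.2 hcs)]
      have hpos : (0:ℝ) ≤ L^2 * (∑ i, (a i)^2) + ∑ i, (b i)^2 := by positivity
      have habs := Real.sqrt_le_sqrt hsq
      rw [Real.sqrt_sq_eq_abs, Real.sqrt_sq_eq_abs, abs_of_nonneg hpos] at habs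
      exact le_trans (le_abs_self _) habs
    have hL0 : L ≠ 0 := ne_of_gt hL
    calc 2 * (∑ i, a i * b i) = (2 * (L * (∑ i, a i * b i))) / L := by field_simp
      _ ≤ (L^2 * (∑ i, (a i)^2) + ∑ i, (b i)^2) / L := by gcongr
      _ = L * (∑ i, (a i)^2) + (1/L) * ∑ i, (b i)^2 := by field_simp
  have hE0 : (0:ℝ) ≤ R * ∑ i, (e i)^2 :=
    mul_nonneg hR (Finset.sum_nonneg fun i _ => sq_nonneg _)
  have h1L : (0:ℝ) ≤ 1 + 1/L := by positivity
  calc (u + e) ⬝ᵥ M.mulVec (u + e)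
      = ∑ i, (a i)^2 + 2 * (∑ i, a i * b i) + ∑ i, (b i)^2 := hlhs
    _ ≤ (1 + L) * (∑ i, (a i)^2) + (1 + 1/L) * (∑ i, (b i)^2) := by linarith
    _ ≤ (1 + L) * (u ⬝ᵥ M.mulVec u) + (1 + 1/L) * (R * ∑ i, (e i) ^ 2) := by
        rw [hA]
        exact add_le_add le_rfl (mul_le_mul_of_nonneg_left hBle h1L)

open MeasureTheory in
lemma cs_integral {t : ℝ} (ht : 0 ≤ t) {g : ℝ → ℝ} (hg : ContinuousOn g (Set.Icc 0 t)) :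
    (∫ s in (0:ℝ)..t, g s)^2 ≤ t * ∫ s in (0:ℝ)..t, (g s)^2 := by
  set μ := volume.restrict (Set.Ioc (0:ℝ) t) with hμ
  haveI : IsFiniteMeasure μ := by
    constructor
    rw [hμ, Measure.restrict_apply_univ, Real.volume_Ioc]
    exact ENNReal.ofReal_lt_top
  have hmeas : AEStronglyMeasurable g μ :=
    (hg.mono Set.Ioc_subset_Icc_self).aestronglyMeasurable measurableSet_Ioc
  obtain ⟨Mb, hMb⟩ : ∃ Mb, ∀ s ∈ Set.Icc 0 t, ‖g s‖ ≤ Mb :=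
    isCompact_Icc.exists_bound_of_continuousOn hg
  have hmem : MemLp (fun s => |g s|) (ENNReal.ofReal 2) μ := by
    refine MemLp.of_bound hmeas.norm Mb ?_
    rw [hμ]
    filter_upwards [ae_restrict_mem measurableSet_Ioc] with s hs
    simpa [Real.norm_eq_abs, abs_abs] using hMb s (Set.Ioc_subset_Icc_self hs)
  have hone : MemLp (fun _ : ℝ => (1:ℝ)) (ENNReal.ofReal 2) μ := memLp_const 1
  have hpq : Real.HolderConjugate 2 2 := Real.HolderConjugate.two_two
  have hH := integral_mul_le_Lp_mul_Lq_of_nonneg (μ := μ) hpq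
    (Filter.Eventually.of_forall fun s => zero_le_one)
    (Filter.Eventually.of_forall fun s => abs_nonneg (g s)) hone hmem
  simp only [one_mul] at hH
  have h1 : ∫ s, (1:ℝ) ^ (2:ℝ) ∂μ = t := by
    simp [hμ, Real.volume_Ioc, ENNReal.toReal_ofReal ht, ht]
  have h2 : ∀ s : ℝ, |g s| ^ (2:ℝ) = (g s)^2 := fun s => by
    rw [show ((2:ℝ)) = ((2:ℕ):ℝ) by norm_num, Real.rpow_natCast, sq_abs]
  simp only [h2, h1] at hH
  have habs : |∫ s in (0:ℝ)..t, g s| ≤ ∫ s in (0:ℝ)..t, |g s| :=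
    intervalIntegral.abs_integral_le_integral_abs ht
  have hio : ∫ s in (0:ℝ)..t, |g s| = ∫ s, |g s| ∂μ := by
    rw [intervalIntegral.integral_of_le ht, hμ]
  have hio2 : ∫ s in (0:ℝ)..t, (g s)^2 = ∫ s, (g s)^2 ∂μ := by
    rw [intervalIntegral.integral_of_le ht, hμ]
  have hX0 : 0 ≤ ∫ s, (g s)^2 ∂μ := integral_nonneg fun s => sq_nonneg _
  have hrt : t ^ (1/(2:ℝ)) = Real.sqrt t := (Real.sqrt_eq_rpow t).symm
  have hrX : (∫ s, (g s)^2 ∂μ) ^ (1/(2:ℝ)) = Real.sqrt (∫ s, (g s)^2 ∂μ) :=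
    (Real.sqrt_eq_rpow _).symm
  rw [hrt, hrX] at hH
  have hfin : |∫ s in (0:ℝ)..t, g s| ≤ Real.sqrt t * Real.sqrt (∫ s, (g s)^2 ∂μ) := by
    rw [hio] at habs; exact le_trans habs hH
  have hms := mul_self_le_mul_self (abs_nonneg _) hfin
  calc (∫ s in (0:ℝ)..t, g s)^2 = |∫ s in (0:ℝ)..t, g s| * |∫ s in (0:ℝ)..t, g s| := by
        rw [abs_mul_abs_self]; ring
    _ ≤ (Real.sqrt t * Real.sqrt (∫ s, (g s)^2 ∂μ)) * (Real.sqrt t * Real.sqrt (∫ s, (g s)^2 ∂μ)) := hms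
    _ = (Real.sqrt t * Real.sqrt t) * (Real.sqrt (∫ s, (g s)^2 ∂μ) * Real.sqrt (∫ s, (g s)^2 ∂μ)) := by ring
    _ = t * ∫ s in (0:ℝ)..t, (g s)^2 := by
        rw [Real.mul_self_sqrt ht, Real.mul_self_sqrt hX0, hio2]

end Aux

set_option maxHeartbeats 1000000 in
theorem stmt9
    (n : ℕ) (hn : 1 ≤ n) (h R : ℝ) (hh : 0 < h) (hR : 0 < R)
    (C : ℝ → Matrix (Fin n) (Fin n) ℝ)
    (hCc : ∀ i j, ContinuousOn (fun s => C s i j) (Set.Icc 0 h))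
    (hsym : ∀ s ∈ Set.Icc (0 : ℝ) h, (C s).IsSymm)
    (hpsd : ∀ s ∈ Set.Icc (0 : ℝ) h, ∀ x : Fin n → ℝ, 0 ≤ x ⬝ᵥ (C s).mulVec x)
    -- operator norm bound `‖C(s)‖ ≤ R` (Euclidean operator norm)
    (hnorm : ∀ s ∈ Set.Icc (0 : ℝ) h, ∀ x : Fin n → ℝ,
      ∑ i, ((C s).mulVec x i) ^ 2 ≤ R ^ 2 * ∑ i, (x i) ^ 2)
    -- `β` is the smallest eigenvalue of `(1/h)∫₀ʰ C(s) ds`, expressed as the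
    -- minimum of its Rayleigh quotient over Euclidean unit vectors
    (β : ℝ)
    (hβ : β = sInf {y : ℝ | ∃ x : Fin n → ℝ, (∑ i, x i ^ 2) = 1 ∧
      y = x ⬝ᵥ (Matrix.of fun i j => (1 / h) * ∫ s in (0:ℝ)..h, C s i j).mulVec x})
    (z : ℝ → Fin n → ℝ)
    (hz : ∀ (i : Fin n), ∀ t ∈ Set.Icc (0 : ℝ) h,
      HasDerivWithinAt (fun s => z s i) (-((C t).mulVec (z t) i))
        (Set.Icc 0 h) t) :
    ∑ i, (z h i) ^ 2 ≤ (1 - h * β / (1 + R * h) ^ 2) * ∑ i, (z 0 i) ^ 2 := by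
  -- basic notation
  set ψ : ℝ → ℝ := fun s => z s ⬝ᵥ (C s).mulVec (z s) with hψdef
  have hPSD : ∀ s ∈ Set.Icc (0:ℝ) h, (C s).PosSemidef := by
    intro s hs
    refine .of_dotProduct_mulVec_nonneg ?_ fun x => by simpa using hpsd s hs x
    rw [Matrix.IsHermitian, conjTranspose_eq_transpose_of_trivial]
    exact hsym s hs
  -- continuity
  have hzc : ∀ i, ContinuousOn (fun s => z s i) (Set.Icc 0 h) :=
    fun i s hs => (hz i s hs).continuousWithinAt
  have hCzc : ∀ i, ContinuousOn (fun s => (C s).mulVec (z s) i) (Set.Icc 0 h) := by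
    intro i
    simp only [Matrix.mulVec, dotProduct]
    exact continuousOn_finset_sum _ fun j _ => (hCc i j).mul (hzc j)
  have hψc : ContinuousOn ψ (Set.Icc 0 h) := by
    rw [hψdef]
    simp only [dotProduct]
    exact continuousOn_finset_sum _ fun i _ => (hzc i).mul (hCzc i)
  have hCz2c : ContinuousOn (fun s => ∑ i, ((C s).mulVec (z s) i)^2) (Set.Icc 0 h) :=
    continuousOn_finset_sum _ fun i _ => (hCzc i).pow 2
  have hφc : ContinuousOn (fun s => z 0 ⬝ᵥ (C s).mulVec (z 0)) (Set.Icc 0 h) := by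
    simp only [dotProduct, Matrix.mulVec]
    exact continuousOn_finset_sum _ fun i _ =>
      (continuousOn_const.mul (continuousOn_finset_sum _ fun j _ =>
        (hCc i j).mul continuousOn_const))
  -- FTC for each coordinate
  have ftc : ∀ t ∈ Set.Icc (0:ℝ) h, ∀ i,
      z 0 i - z t i = ∫ s in (0:ℝ)..t, (C s).mulVec (z s) i := by
    intro t ht i
    have hIccsub : Set.Icc (0:ℝ) t ⊆ Set.Icc (0:ℝ) h :=
      Set.Icc_subset_Icc le_rfl ht.2
    have h1 : ∫ s in (0:ℝ)..t, -((C s).mulVec (z s) i) = z t i - z 0 i := by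
      apply intervalIntegral.integral_eq_sub_of_hasDeriv_right_of_le ht.1
      · exact (hzc i).mono hIccsub
      · intro x hx
        have hxI : Set.Icc (0:ℝ) h ∈ nhds x :=
          Icc_mem_nhds hx.1 (lt_of_lt_of_le hx.2 ht.2)
        exact ((hz i x (mem_of_mem_nhds hxI)).hasDerivAt hxI).hasDerivWithinAt
      · apply ContinuousOn.intervalIntegrable
        rw [Set.uIcc_of_le ht.1]
        exact ((hCzc i).mono hIccsub).neg
    rw [intervalIntegral.integral_neg] at h1
    linarith
  -- FTC for the squared norm
  have ftcN : (∑ i, (z h i)^2) - (∑ i, (z 0 i)^2) = ∫ s in (0:ℝ)..h, (-2 * ψ s) := by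
    symm
    apply intervalIntegral.integral_eq_sub_of_hasDeriv_right_of_le hh.le
    · exact continuousOn_finset_sum _ fun i _ => (hzc i).pow 2
    · intro x hx
      have hxI : Set.Icc (0:ℝ) h ∈ nhds x := Icc_mem_nhds hx.1 hx.2
      have hxmem : x ∈ Set.Icc (0:ℝ) h := mem_of_mem_nhds hxI
      have hsum : HasDerivAt (fun s => ∑ i, (z s i)^2)
          (∑ i, (2:ℕ) * (z x i)^1 * (-((C x).mulVec (z x) i))) x := by
        apply HasDerivAt.fun_sum
        intro i _
        exact ((hz i x hxmem).hasDerivAt hxI).pow 2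
      have heq : (∑ i, ((2:ℕ):ℝ) * (z x i)^1 * (-((C x).mulVec (z x) i))) = -2 * ψ x := by
        rw [hψdef]
        simp only [dotProduct, Nat.cast_ofNat, pow_one, Finset.mul_sum, neg_mul]
        exact Finset.sum_congr rfl fun i _ => by ring
      rw [heq] at hsum
      exact hsum.hasDerivWithinAt
    · apply ContinuousOn.intervalIntegrable
      rw [Set.uIcc_of_le hh.le]
      exact continuousOn_const.mul hψc
  -- interchange: quadratic form of the average matrix
  have hint : ∀ (x : Fin n → ℝ) (i j : Fin n),
      IntervalIntegrable (fun s => x i * (C s i j * x j)) MeasureTheory.volume 0 h := by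
    intro x i j
    apply ContinuousOn.intervalIntegrable
    rw [Set.uIcc_of_le hh.le]
    exact continuousOn_const.mul ((hCc i j).mul continuousOn_const)
  have quadK : ∀ x : Fin n → ℝ,
      x ⬝ᵥ (Matrix.of fun i j => (1 / h) * ∫ s in (0:ℝ)..h, C s i j).mulVec x
        = (1/h) * ∫ s in (0:ℝ)..h, (x ⬝ᵥ (C s).mulVec x) := by
    intro x
    have e1 : ∫ s in (0:ℝ)..h, (x ⬝ᵥ (C s).mulVec x)
        = ∫ s in (0:ℝ)..h, ∑ i, ∑ j, x i * (C s i j * x j) := by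
      apply intervalIntegral.integral_congr
      intro s _
      simp only [dotProduct, Matrix.mulVec, Finset.mul_sum]
    have e2 : ∫ s in (0:ℝ)..h, ∑ i, ∑ j, x i * (C s i j * x j)
        = ∑ i, ∫ s in (0:ℝ)..h, ∑ j, x i * (C s i j * x j) :=
      intervalIntegral.integral_finset_sum (f := fun i s => ∑ j, x i * (C s i j * x j))
        (fun i _ => by
          apply ContinuousOn.intervalIntegrable
          rw [Set.uIcc_of_le hh.le]
          exact continuousOn_finset_sum _ fun j _ =>
            continuousOn_const.mul ((hCc i j).mul continuousOn_const))
    have e3 : ∀ i : Fin n, ∫ s in (0:ℝ)..h, ∑ j, x i * (C s i j * x j)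
        = ∑ j, x i * ((∫ s in (0:ℝ)..h, C s i j) * x j) := by
      intro i
      rw [intervalIntegral.integral_finset_sum (f := fun j s => x i * (C s i j * x j))
        (fun j _ => hint x i j)]
      refine Finset.sum_congr rfl fun j _ => ?_
      rw [intervalIntegral.integral_const_mul, intervalIntegral.integral_mul_const]
    rw [e1, e2]
    simp only [e3]
    simp only [dotProduct, Matrix.mulVec, Matrix.of_apply, Finset.mul_sum]
    exact Finset.sum_congr rfl fun i _ => Finset.sum_congr rfl fun j _ => by ring
  -- β is nonnegative and bounds the quadratic form
  have hqnonneg : ∀ x : Fin n → ℝ,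
      0 ≤ x ⬝ᵥ (Matrix.of fun i j => (1 / h) * ∫ s in (0:ℝ)..h, C s i j).mulVec x := by
    intro x
    rw [quadK x]
    have : 0 ≤ ∫ s in (0:ℝ)..h, (x ⬝ᵥ (C s).mulVec x) :=
      intervalIntegral.integral_nonneg hh.le fun s hs => hpsd s hs x
    positivity
  have hβ0 : 0 ≤ β := by
    rw [hβ]
    apply le_csInf
    · refine ⟨_, ⟨fun j => if j = ⟨0, hn⟩ then 1 else 0, ?_, rfl⟩⟩
      simp [apply_ite, Finset.sum_ite_eq']
    · rintro y ⟨x, -, rfl⟩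
      exact hqnonneg x
  have hβle : β * (∑ i, (z 0 i)^2)
      ≤ z 0 ⬝ᵥ (Matrix.of fun i j => (1 / h) * ∫ s in (0:ℝ)..h, C s i j).mulVec (z 0) := by
    by_cases hz0 : (∑ i, (z 0 i)^2) = 0
    · have hz00 : z 0 = 0 := by
        funext i
        have h1 : ∀ i ∈ (Finset.univ : Finset (Fin n)), (0:ℝ) ≤ (z 0 i)^2 :=
          fun i _ => sq_nonneg _
        have := (Finset.sum_eq_zero_iff_of_nonneg h1).1 hz0 i (Finset.mem_univ i)
        exact pow_eq_zero_iff (by norm_num : (2:ℕ) ≠ 0) |>.mp this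
      rw [hz0, hz00]
      simp
    · have hspos : 0 < ∑ i, (z 0 i)^2 :=
        lt_of_le_of_ne (Finset.sum_nonneg fun i _ => sq_nonneg _) (Ne.symm hz0)
      set c : ℝ := Real.sqrt (∑ i, (z 0 i)^2) with hc
      have hcpos : 0 < c := Real.sqrt_pos.2 hspos
      have hc2 : c^2 = ∑ i, (z 0 i)^2 := Real.sq_sqrt hspos.le
      set x : Fin n → ℝ := c⁻¹ • z 0 with hx
      have hxunit : (∑ i, x i ^ 2) = 1 := by
        simp only [hx, Pi.smul_apply, smul_eq_mul, mul_pow, ← Finset.mul_sum]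
        rw [← hc2]
        field_simp
      have hmem : x ⬝ᵥ (Matrix.of fun i j => (1 / h) * ∫ s in (0:ℝ)..h, C s i j).mulVec x
          ∈ {y : ℝ | ∃ x : Fin n → ℝ, (∑ i, x i ^ 2) = 1 ∧
            y = x ⬝ᵥ (Matrix.of fun i j => (1 / h) * ∫ s in (0:ℝ)..h, C s i j).mulVec x} :=
        ⟨x, hxunit, rfl⟩
      have hbdd : BddBelow {y : ℝ | ∃ x : Fin n → ℝ, (∑ i, x i ^ 2) = 1 ∧
            y = x ⬝ᵥ (Matrix.of fun i j => (1 / h) * ∫ s in (0:ℝ)..h, C s i j).mulVec x} :=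
        ⟨0, by rintro y ⟨x, -, rfl⟩; exact hqnonneg x⟩
      have hβx := hβ ▸ csInf_le hbdd hmem
      have hquad : x ⬝ᵥ (Matrix.of fun i j => (1 / h) * ∫ s in (0:ℝ)..h, C s i j).mulVec x
          = c⁻¹ * c⁻¹ * (z 0 ⬝ᵥ (Matrix.of fun i j => (1 / h) * ∫ s in (0:ℝ)..h, C s i j).mulVec (z 0)) := by
        rw [hx, Matrix.mulVec_smul, smul_dotProduct, dotProduct_smul,
          smul_eq_mul, smul_eq_mul]
        ring
      rw [hquad] at hβx
      have hcc : c⁻¹ * c⁻¹ = (∑ i, (z 0 i)^2)⁻¹ := by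
        rw [← hc2]; field_simp
      rw [hcc] at hβx
      calc β * (∑ i, (z 0 i)^2)
          ≤ ((∑ i, (z 0 i)^2)⁻¹ * (z 0 ⬝ᵥ (Matrix.of fun i j => (1 / h) * ∫ s in (0:ℝ)..h, C s i j).mulVec (z 0))) * (∑ i, (z 0 i)^2) := by
            exact mul_le_mul_of_nonneg_right hβx hspos.le
        _ = z 0 ⬝ᵥ (Matrix.of fun i j => (1 / h) * ∫ s in (0:ℝ)..h, C s i j).mulVec (z 0) := by
            field_simp
  -- integral quantities
  set I : ℝ := ∫ s in (0:ℝ)..h, ψ s with hIdef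
  have hψint : IntervalIntegrable ψ MeasureTheory.volume 0 h := by
    apply ContinuousOn.intervalIntegrable
    rw [Set.uIcc_of_le hh.le]; exact hψc
  have hI0 : 0 ≤ I :=
    intervalIntegral.integral_nonneg hh.le fun s hs => hpsd s hs (z s)
  have E1 : ∑ i, (z h i)^2 = (∑ i, (z 0 i)^2) - 2 * I := by
    have e : ∫ s in (0:ℝ)..h, (-2 * ψ s) = -2 * I := by
      rw [hIdef, ← intervalIntegral.integral_const_mul]
    rw [e] at ftcN; linarith
  have hCz2int : IntervalIntegrable (fun s => ∑ i, ((C s).mulVec (z s) i)^2)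
      MeasureTheory.volume 0 h := by
    apply ContinuousOn.intervalIntegrable
    rw [Set.uIcc_of_le hh.le]; exact hCz2c
  have hJle : (∫ s in (0:ℝ)..h, ∑ i, ((C s).mulVec (z s) i)^2) ≤ R * I := by
    have hmono := intervalIntegral.integral_mono_on hh.le hCz2int
      (by apply ContinuousOn.intervalIntegrable
          rw [Set.uIcc_of_le hh.le]; exact continuousOn_const.mul hψc)
      (fun s hs => sq_mulVec_le (hPSD s hs) hR.le (hnorm s hs) (z s))
    rwa [intervalIntegral.integral_const_mul] at hmono
  have eB : ∀ t ∈ Set.Icc (0:ℝ) h, ∑ i, (z 0 i - z t i)^2 ≤ h * (R * I) := by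
    intro t ht
    have step1 : ∀ i, (z 0 i - z t i)^2 ≤ h * ∫ s in (0:ℝ)..h, ((C s).mulVec (z s) i)^2 := by
      intro i
      rw [ftc t ht i]
      have hcs := cs_integral ht.1
        (((hCzc i).mono (Set.Icc_subset_Icc le_rfl ht.2)))
      have hith : IntervalIntegrable (fun s => ((C s).mulVec (z s) i)^2)
          MeasureTheory.volume t h := by
        apply ContinuousOn.intervalIntegrable
        rw [Set.uIcc_of_le ht.2]
        exact ((hCzc i).pow 2).mono (Set.Icc_subset_Icc ht.1 le_rfl)
      have hi0t : IntervalIntegrable (fun s => ((C s).mulVec (z s) i)^2)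
          MeasureTheory.volume 0 t := by
        apply ContinuousOn.intervalIntegrable
        rw [Set.uIcc_of_le ht.1]
        exact ((hCzc i).pow 2).mono (Set.Icc_subset_Icc le_rfl ht.2)
      have hadj := intervalIntegral.integral_add_adjacent_intervals hi0t hith
      have hth0 : 0 ≤ ∫ s in t..h, ((C s).mulVec (z s) i)^2 :=
        intervalIntegral.integral_nonneg ht.2 (fun s _ => sq_nonneg _)
      have h0t0 : 0 ≤ ∫ s in (0:ℝ)..t, ((C s).mulVec (z s) i)^2 :=
        intervalIntegral.integral_nonneg ht.1 (fun s _ => sq_nonneg _)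
      have hmono : (∫ s in (0:ℝ)..t, ((C s).mulVec (z s) i)^2)
          ≤ ∫ s in (0:ℝ)..h, ((C s).mulVec (z s) i)^2 := by linarith
      calc (∫ s in (0:ℝ)..t, (C s).mulVec (z s) i)^2
          ≤ t * ∫ s in (0:ℝ)..t, ((C s).mulVec (z s) i)^2 := hcs
        _ ≤ h * ∫ s in (0:ℝ)..h, ((C s).mulVec (z s) i)^2 :=
            mul_le_mul ht.2 hmono h0t0 hh.le
    calc ∑ i, (z 0 i - z t i)^2
        ≤ ∑ i, h * ∫ s in (0:ℝ)..h, ((C s).mulVec (z s) i)^2 :=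
          Finset.sum_le_sum fun i _ => step1 i
      _ = h * ∫ s in (0:ℝ)..h, ∑ i, ((C s).mulVec (z s) i)^2 := by
          rw [← Finset.mul_sum,
            intervalIntegral.integral_finset_sum (f := fun i s => ((C s).mulVec (z s) i)^2)
              (fun i _ => by
                apply ContinuousOn.intervalIntegrable
                rw [Set.uIcc_of_le hh.le]; exact (hCzc i).pow 2)]
      _ ≤ h * (R * I) := mul_le_mul_of_nonneg_left hJle hh.le
  have hRh : (0:ℝ) < R * h := mul_pos hR hh
  have keys : ∀ s ∈ Set.Icc (0:ℝ) h,
      z 0 ⬝ᵥ (C s).mulVec (z 0)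
        ≤ (1 + R*h) * ψ s + (1 + 1/(R*h)) * (R * (h * (R * I))) := by
    intro s hs
    have hk := key_pt (hPSD s hs) hR.le hRh (hnorm s hs) (z s) (z 0 - z s)
    rw [show z s + (z 0 - z s) = z 0 from by funext i; simp] at hk
    refine le_trans hk ?_
    have he : ∑ i, ((z 0 - z s) i)^2 ≤ h * (R * I) := by
      simpa [Pi.sub_apply] using eB s hs
    have h1L : (0:ℝ) ≤ 1 + 1/(R*h) := by positivity
    exact add_le_add le_rfl
      (mul_le_mul_of_nonneg_left (mul_le_mul_of_nonneg_left he hR.le) h1L)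
  have hφint : IntervalIntegrable (fun s => z 0 ⬝ᵥ (C s).mulVec (z 0))
      MeasureTheory.volume 0 h := by
    apply ContinuousOn.intervalIntegrable
    rw [Set.uIcc_of_le hh.le]; exact hφc
  have hφle : (∫ s in (0:ℝ)..h, z 0 ⬝ᵥ (C s).mulVec (z 0))
      ≤ (1 + R*h) * I + ((1 + 1/(R*h)) * (R * (h * (R * I)))) * h := by
    have hRint : IntervalIntegrable (fun s => (1 + R*h) * ψ s) MeasureTheory.volume 0 h := by
      apply ContinuousOn.intervalIntegrable
      rw [Set.uIcc_of_le hh.le]; exact continuousOn_const.mul hψc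
    have hmono := intervalIntegral.integral_mono_on hh.le hφint
      (hRint.add (intervalIntegrable_const)) keys
    rw [intervalIntegral.integral_add hRint intervalIntegrable_const,
      intervalIntegral.integral_const_mul, intervalIntegral.integral_const] at hmono
    simp only [sub_zero, smul_eq_mul] at hmono
    calc (∫ s in (0:ℝ)..h, z 0 ⬝ᵥ (C s).mulVec (z 0))
        ≤ (1 + R*h) * I + h * ((1 + 1/(R*h)) * (R * (h * (R * I)))) := hmono
      _ = (1 + R*h) * I + ((1 + 1/(R*h)) * (R * (h * (R * I)))) * h := by ring
  have hβφ : h * (β * ∑ i, (z 0 i)^2) ≤ ∫ s in (0:ℝ)..h, z 0 ⬝ᵥ (C s).mulVec (z 0) := by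
    have h1 := hβle
    rw [quadK (z 0)] at h1
    have h2 := mul_le_mul_of_nonneg_left h1 hh.le
    calc h * (β * ∑ i, (z 0 i)^2) ≤ h * ((1/h) * ∫ s in (0:ℝ)..h, z 0 ⬝ᵥ (C s).mulVec (z 0)) := h2
      _ = ∫ s in (0:ℝ)..h, z 0 ⬝ᵥ (C s).mulVec (z 0) := by
          field_simp
  have halg : (1 + R*h) * I + ((1 + 1/(R*h)) * (R * (h * (R * I)))) * h = (1 + R*h)^2 * I := by
    field_simp
    ring
  have E2 : h * (β * ∑ i, (z 0 i)^2) ≤ (1 + R*h)^2 * I := by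
    rw [← halg]; exact le_trans hβφ hφle
  have hD : (0:ℝ) < (1 + R*h)^2 := by positivity
  have hS0 : (0:ℝ) ≤ ∑ i, (z 0 i)^2 := Finset.sum_nonneg fun i _ => sq_nonneg _
  have E3 : h * β * (∑ i, (z 0 i)^2) / (1 + R*h)^2 ≤ I := by
    rw [div_le_iff₀ hD]
    nlinarith [E2]
  have hfrac0 : 0 ≤ h * β * (∑ i, (z 0 i)^2) / (1 + R*h)^2 := by positivity
  rw [E1]
  have hexp : (1 - h * β / (1 + R * h) ^ 2) * ∑ i, (z 0 i)^2
      = (∑ i, (z 0 i)^2) - h * β * (∑ i, (z 0 i)^2) / (1 + R*h)^2 := by ring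
  rw [hexp]
  linarith
end

section
/- Let Y ∈ ℝ^{m×m} be a matrix such that 0 is a simple eigenvalue of Y (algebraic multiplicity one) and every nonzero eigenvalue of Y has negative real part. Let z : [0,∞) → ℝ^m be continuous, bounded, and T-periodic with ∫_0^T z(s) ds = 0. Then every solution Φ : [0,∞) → ℝ^m of Φ̇ = z(t) + Y·Φ is bounded on [0,∞): there exists U > 0 with ‖Φ(t)‖ ≤ U for all t ≥ 0. -/
open scoped BigOperators
open Matrix

open Polynomial NormedSpace intervalIntegral

attribute [local instance] Matrix.linftyOpNormedAddCommGroup Matrix.linftyOpNormedRing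
  Matrix.linftyOpNormedAlgebra

variable {m : ℕ}

noncomputable def mulVecCLM (v : Fin m → ℂ) :
    Matrix (Fin m) (Fin m) ℂ →L[ℝ] (Fin m → ℂ) :=
  LinearMap.toContinuousLinearMap
    { toFun := fun M => M.mulVec v
      map_add' := fun A B => Matrix.add_mulVec A B v
      map_smul' := fun c A => by simp [Matrix.smul_mulVec] }

@[simp] lemma mulVecCLM_apply (v : Fin m → ℂ) (M : Matrix (Fin m) (Fin m) ℂ) :
    mulVecCLM v M = M.mulVec v := rfl

lemma hasDerivAt_expM (W : Matrix (Fin m) (Fin m) ℂ) (t : ℝ) :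
    HasDerivAt (fun s : ℝ => exp (s • W)) (W * exp (t • W)) t :=
  hasDerivAt_exp_smul_const' W t

lemma continuous_expM (W : Matrix (Fin m) (Fin m) ℂ) :
    Continuous (fun s : ℝ => exp (s • W)) :=
  continuous_iff_continuousAt.2 fun t => (hasDerivAt_expM W t).continuousAt

lemma hasDerivAt_expMv (W : Matrix (Fin m) (Fin m) ℂ) (v : Fin m → ℂ) (t : ℝ) :
    HasDerivAt (fun s : ℝ => (exp (s • W)).mulVec v)
      ((W * exp (t • W)).mulVec v) t :=
  ((mulVecCLM v).hasFDerivAt.comp_hasDerivAt t (hasDerivAt_expM W t))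

lemma continuous_expMv (W : Matrix (Fin m) (Fin m) ℂ) (v : Fin m → ℂ) :
    Continuous (fun s : ℝ => (exp (s • W)).mulVec v) :=
  (mulVecCLM v).continuous.comp (continuous_expM W)

lemma exp_int_le {c t : ℝ} (hc : 0 < c) (_ht : 0 ≤ t) :
    ∫ s in (0:ℝ)..t, Real.exp (c * s) ≤ Real.exp (c * t) / c := by
  have h : ∫ s in (0:ℝ)..t, Real.exp (c * s) = (Real.exp (c * t) - Real.exp (c * 0)) / c := by
    rw [intervalIntegral.integral_eq_sub_of_hasDerivAt
      (f := fun s => Real.exp (c * s) / c) (f' := fun s => Real.exp (c * s))]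
    · ring
    · intro x _
      have h1 := ((Real.hasDerivAt_exp (c * x)).comp x ((hasDerivAt_id x).const_mul c)).div_const c
      have h2 : Real.exp (c * x) * c / c = Real.exp (c * x) := by field_simp
      simpa [h2] using h1
    · exact (Real.continuous_exp.comp (continuous_const.mul continuous_id)).intervalIntegrable 0 t
  rw [h]
  have h0 : (0:ℝ) < Real.exp (c * 0) := Real.exp_pos _
  have h2 : Real.exp (c * t) - Real.exp (c * 0) ≤ Real.exp (c * t) := by linarith
  gcongr

lemma decay (W : Matrix (Fin m) (Fin m) ℂ) (S : Multiset ℂ) (β : ℝ)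
    (hS : ∀ μ ∈ S, μ.re < β) :
    ∃ C : ℝ, 0 < C ∧ ∀ v : Fin m → ℂ,
      (Polynomial.aeval W (S.map (fun μ => X - Polynomial.C μ)).prod).mulVec v = 0 →
      ∀ t : ℝ, 0 ≤ t → ‖(exp (t • W)).mulVec v‖ ≤ C * Real.exp (β * t) * ‖v‖ := by
  induction S using Multiset.induction with
  | empty =>
    refine ⟨1, one_pos, fun v hv t ht => ?_⟩
    simp only [Multiset.map_zero, Multiset.prod_zero, _root_.map_one, Matrix.one_mulVec] at hv
    have : (0:ℝ) ≤ 1 * Real.exp (β * t) * ‖v‖ := by positivity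
    simpa [hv, Matrix.mulVec_zero] using this
  | cons μ S ih =>
    obtain ⟨C, hC, hCb⟩ := ih (fun ν hν => hS ν (Multiset.mem_cons_of_mem hν))
    have hμβ : μ.re < β := hS μ (Multiset.mem_cons_self μ S)
    set K : ℝ := ‖W - μ • (1 : Matrix (Fin m) (Fin m) ℂ)‖ with hK
    have hK0 : 0 ≤ K := norm_nonneg _
    have hβμ : (0:ℝ) < β - μ.re := sub_pos.2 hμβ
    have hCK : (0:ℝ) ≤ C * K / (β - μ.re) := div_nonneg (mul_nonneg hC.le hK0) hβμ.le
    refine ⟨1 + C * K / (β - μ.re), by linarith, fun v hv t ht => ?_⟩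
    -- the auxiliary vector
    set u : Fin m → ℂ := (W - μ • (1 : Matrix (Fin m) (Fin m) ℂ)).mulVec v with hu
    have hu_ann : (Polynomial.aeval W (S.map (fun ν => X - Polynomial.C ν)).prod).mulVec u = 0 := by
      have : (Polynomial.aeval W ((μ ::ₘ S).map (fun ν => X - Polynomial.C ν)).prod) =
          (Polynomial.aeval W (S.map (fun ν => X - Polynomial.C ν)).prod) *
            (W - μ • (1 : Matrix (Fin m) (Fin m) ℂ)) := by
        rw [Multiset.map_cons, Multiset.prod_cons, mul_comm, _root_.map_mul]
        congr 1
        simp [Algebra.algebraMap_eq_smul_one]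
      rw [hu, Matrix.mulVec_mulVec, ← this, hv]
    have hunorm : ‖u‖ ≤ K * ‖v‖ := Matrix.linfty_opNorm_mulVec _ _
    -- commutation
    have hcom : ∀ s : ℝ, W * exp (s • W) = exp (s • W) * W := fun s =>
      (((Commute.refl W).smul_right s).exp_right).eq
    -- derivative of the twisted curve
    have hg : ∀ s : ℝ, HasDerivAt
        (fun r : ℝ => Complex.exp (-(μ * r)) • (exp (r • W)).mulVec v)
        (Complex.exp (-(μ * s)) • ((exp (s • W)).mulVec u)) s := by
      intro s
      have hc : HasDerivAt (fun r : ℝ => Complex.exp (-(μ * r)))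
          (-μ * Complex.exp (-(μ * s))) s := by
        have h1 : HasDerivAt (fun w : ℂ => Complex.exp (-(μ * w)))
            (-μ * Complex.exp (-(μ * (s:ℂ)))) (s : ℂ) := by
          have h0 : HasDerivAt (fun w : ℂ => -(μ * w)) (-μ) (s : ℂ) := by
            exact ((hasDerivAt_id ((s:ℝ):ℂ)).const_mul μ).neg.congr_deriv (by simp)
          simpa [mul_comm] using h0.cexp
        exact h1.comp_ofReal
      have hE := hasDerivAt_expMv W v s
      have hsm := hc.smul hE
      refine hsm.congr_deriv (Eq.symm ?_)
      have hexpu : (exp (s • W)).mulVec u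
          = (W * exp (s • W)).mulVec v - μ • (exp (s • W)).mulVec v := by
        rw [hu, Matrix.mulVec_mulVec, mul_sub, Matrix.mul_smul, mul_one, hcom s,
          Matrix.sub_mulVec, Matrix.smul_mulVec]
      rw [hexpu, smul_sub, smul_smul, mul_comm (Complex.exp (-(μ * (s:ℂ)))) μ,
        sub_eq_add_neg, ← neg_smul]
      simp [neg_mul]
    -- FTC
    have hcontu : Continuous (fun s : ℝ =>
        Complex.exp (-(μ * s)) • (exp (s • W)).mulVec u) :=
      ((Complex.continuous_exp.comp ((continuous_const.mul Complex.continuous_ofReal).neg)).smul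
        (continuous_expMv W u))
    have hftc : Complex.exp (-(μ * t)) • (exp (t • W)).mulVec v - v
        = ∫ s in (0:ℝ)..t, Complex.exp (-(μ * s)) • (exp (s • W)).mulVec u := by
      have h0 : Complex.exp (-(μ * (0:ℝ))) • (exp ((0:ℝ) • W)).mulVec v = v := by
        simp [Matrix.one_mulVec]
      rw [intervalIntegral.integral_eq_sub_of_hasDerivAt (fun s _ => hg s)
        (hcontu.intervalIntegrable 0 t), h0]
    -- bound the integral
    have hnorm_int : ‖∫ s in (0:ℝ)..t, Complex.exp (-(μ * s)) • (exp (s • W)).mulVec u‖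
        ≤ C * ‖u‖ * (Real.exp ((β - μ.re) * t) / (β - μ.re)) := by
      have hb1 : ∀ s ∈ Set.Icc (0:ℝ) t,
          ‖Complex.exp (-(μ * s)) • (exp (s • W)).mulVec u‖
            ≤ C * ‖u‖ * Real.exp ((β - μ.re) * s) := by
        intro s hs
        rw [norm_smul]
        have habs : ‖Complex.exp (-(μ * s))‖ = Real.exp (-(μ.re * s)) := by
          rw [Complex.norm_exp]
          congr 1
          simp [Complex.mul_re]
        rw [habs]
        have hEb := hCb u hu_ann s hs.1
        calc Real.exp (-(μ.re * s)) * ‖(exp (s • W)).mulVec u‖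
            ≤ Real.exp (-(μ.re * s)) * (C * Real.exp (β * s) * ‖u‖) := by
              exact mul_le_mul_of_nonneg_left hEb (Real.exp_nonneg _)
          _ = C * ‖u‖ * Real.exp ((β - μ.re) * s) := by
              rw [show (β - μ.re) * s = -(μ.re * s) + β * s by ring, Real.exp_add]; ring
      calc ‖∫ s in (0:ℝ)..t, Complex.exp (-(μ * s)) • (exp (s • W)).mulVec u‖
          ≤ ∫ s in (0:ℝ)..t, ‖Complex.exp (-(μ * s)) • (exp (s • W)).mulVec u‖ :=
            intervalIntegral.norm_integral_le_integral_norm ht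
        _ ≤ ∫ s in (0:ℝ)..t, C * ‖u‖ * Real.exp ((β - μ.re) * s) := by
            apply intervalIntegral.integral_mono_on ht
              (hcontu.norm.intervalIntegrable 0 t)
              (((continuous_const).mul ((Real.continuous_exp.comp
                (continuous_const.mul continuous_id)))).intervalIntegrable 0 t)
            exact hb1
        _ = C * ‖u‖ * ∫ s in (0:ℝ)..t, Real.exp ((β - μ.re) * s) := by
            rw [← intervalIntegral.integral_const_mul]
        _ ≤ C * ‖u‖ * (Real.exp ((β - μ.re) * t) / (β - μ.re)) := by
            apply mul_le_mul_of_nonneg_left (exp_int_le hβμ ht)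
            positivity
    -- reconstruct
    have hEt : (exp (t • W)).mulVec v = Complex.exp (μ * t) •
        (Complex.exp (-(μ * t)) • (exp (t • W)).mulVec v) := by
      rw [smul_smul, ← Complex.exp_add]
      simp
    have habs2 : ‖Complex.exp (μ * (t:ℂ))‖ = Real.exp (μ.re * t) := by
      rw [Complex.norm_exp]
      congr 1
      simp [Complex.mul_re]
    have h5 : ‖(exp (t • W)).mulVec v‖ ≤ Real.exp (μ.re * t) *
        (‖v‖ + C * ‖u‖ * (Real.exp ((β - μ.re) * t) / (β - μ.re))) := by
      rw [hEt, norm_smul, habs2]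
      apply mul_le_mul_of_nonneg_left _ (Real.exp_nonneg _)
      have : Complex.exp (-(μ * t)) • (exp (t • W)).mulVec v
          = v + ∫ s in (0:ℝ)..t, Complex.exp (-(μ * s)) • (exp (s • W)).mulVec u := by
        exact (sub_eq_iff_eq_add'.1 hftc)
      rw [this]
      exact (norm_add_le _ _).trans (add_le_add_right hnorm_int _)
    -- final arithmetic
    have hexpβ : Real.exp (μ.re * t) ≤ Real.exp (β * t) :=
      Real.exp_le_exp.2 (mul_le_mul_of_nonneg_right hμβ.le ht)
    have hcomb : Real.exp (μ.re * t) * Real.exp ((β - μ.re) * t) = Real.exp (β * t) := by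
      rw [← Real.exp_add]; ring_nf
    calc ‖(exp (t • W)).mulVec v‖
        ≤ Real.exp (μ.re * t) * ‖v‖
          + C * ‖u‖ / (β - μ.re) * (Real.exp (μ.re * t) * Real.exp ((β - μ.re) * t)) := by
          refine h5.trans (le_of_eq ?_); ring
      _ ≤ Real.exp (β * t) * ‖v‖ + C * (K * ‖v‖) / (β - μ.re) * Real.exp (β * t) := by
          rw [hcomb]
          have h6 : C * ‖u‖ / (β - μ.re) ≤ C * (K * ‖v‖) / (β - μ.re) := by
            gcongr
          have h7 : Real.exp (μ.re * t) * ‖v‖ ≤ Real.exp (β * t) * ‖v‖ :=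
            mul_le_mul_of_nonneg_right hexpβ (norm_nonneg _)
          have h8 := mul_le_mul_of_nonneg_right h6 (Real.exp_nonneg (β * t))
          linarith
      _ = (1 + C * K / (β - μ.re)) * Real.exp (β * t) * ‖v‖ := by ring

lemma exp_mul_exp (W : Matrix (Fin m) (Fin m) ℂ) (a b : ℝ) :
    exp (a • W) * exp (b • W) = exp ((a + b) • W) := by
  rw [add_smul, Matrix.exp_add_of_commute]
  exact ((Commute.refl W).smul_left a).smul_right b

lemma exp_mul_proj (W E : Matrix (Fin m) (Fin m) ℂ)
    (hWE : W * E = 0) (hEW : E * W = 0) (t : ℝ) :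
    exp (t • W) * E = E := by
  have hconst : ∀ s : ℝ, HasDerivAt (fun r : ℝ => exp (r • W) * E) 0 s := by
    intro s
    have h := (hasDerivAt_expM W s).mul_const E
    have hcomm : Commute W E := by unfold Commute SemiconjBy; rw [hWE, hEW]
    have hcE : Commute (exp (s • W)) E := ((hcomm.smul_left s).exp_left)
    have : W * exp (s • W) * E = 0 := by
      rw [mul_assoc, hcE.eq, ← mul_assoc, hWE, zero_mul]
    rwa [this] at h
  have hdiff : Differentiable ℝ (fun r : ℝ => exp (r • W) * E) :=
    fun s => (hconst s).differentiableAt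
  have := is_const_of_deriv_eq_zero hdiff (fun s => (hconst s).deriv) t 0
  simpa [zero_smul, exp_zero] using this

lemma spectral (W : Matrix (Fin m) (Fin m) ℂ)
    (hsimple : Polynomial.rootMultiplicity 0 W.charpoly = 1)
    (hneg : ∀ μ : ℂ, μ ∈ W.charpoly.roots → μ ≠ 0 → μ.re < 0) :
    ∃ (E F : Matrix (Fin m) (Fin m) ℂ) (β : ℝ) (C : ℝ), E + F = 1 ∧
      W * E = 0 ∧ E * W = 0 ∧ β < 0 ∧ 0 < C ∧
      ∀ x : Fin m → ℂ, ∀ t : ℝ, 0 ≤ t →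
        ‖(exp (t • W)).mulVec (F.mulVec x)‖ ≤ C * Real.exp (β * t) * ‖F.mulVec x‖ := by
  have hp0 : W.charpoly ≠ 0 := W.charpoly_monic.ne_zero
  obtain ⟨q, hpq, hndvd⟩ := W.charpoly.exists_eq_pow_rootMultiplicity_mul_and_not_dvd hp0 0
  rw [hsimple] at hpq
  simp only [map_zero, sub_zero, pow_one] at hpq hndvd
  have hqmonic : q.Monic := Polynomial.monic_X.of_mul_monic_left (hpq ▸ W.charpoly_monic)
  -- roots of q have negative real part
  have hqroots : ∀ μ ∈ q.roots, μ.re < 0 := by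
    intro μ hμ
    have hμp : μ ∈ W.charpoly.roots :=
      Multiset.mem_of_le (Polynomial.roots.le_of_dvd hp0 ⟨X, by rw [hpq, mul_comm]⟩) hμ
    have hμ0 : μ ≠ 0 := by
      rintro rfl
      have hdvd : (X - Polynomial.C 0 : Polynomial ℂ) ∣ q :=
        Polynomial.dvd_iff_isRoot.2 (Polynomial.isRoot_of_mem_roots hμ)
      exact hndvd (by simpa using hdvd)
    exact hneg μ hμp hμ0
  -- choose β
  set R : Finset ℝ := insert (-1 : ℝ) (q.roots.map Complex.re).toFinset with hR
  have hRne : R.Nonempty := ⟨-1, Finset.mem_insert_self _ _⟩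
  set B : ℝ := R.max' hRne with hB
  have hBneg : B < 0 := by
    rw [hB, Finset.max'_lt_iff]
    intro x hx
    rcases Finset.mem_insert.1 hx with rfl | hx
    · norm_num
    · obtain ⟨μ, hμ, rfl⟩ := Multiset.mem_map.1 (Multiset.mem_toFinset.1 hx)
      exact hqroots μ hμ
  set β : ℝ := B / 2 with hβ
  have hβneg : β < 0 := by rw [hβ]; linarith
  have hSβ : ∀ μ ∈ q.roots, μ.re < β := by
    intro μ hμ
    have : μ.re ≤ B := Finset.le_max' R μ.re
      (Finset.mem_insert_of_mem (Multiset.mem_toFinset.2 (Multiset.mem_map_of_mem _ hμ)))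
    rw [hβ]; linarith
  obtain ⟨C, hC, hCb⟩ := decay W q.roots β hSβ
  -- coprime decomposition
  have hcop : IsCoprime (X : Polynomial ℂ) q :=
    (Polynomial.irreducible_X).coprime_iff_not_dvd.2 hndvd
  obtain ⟨a, b, hab⟩ := hcop
  have hXq : (X : Polynomial ℂ) * q = W.charpoly := hpq.symm
  have hqfact : q = (q.roots.map (fun μ => X - Polynomial.C μ)).prod :=
    (IsAlgClosed.splits q).eq_prod_roots_of_monic hqmonic
  have key : ∀ r : Polynomial ℂ, Polynomial.aeval W (r * ((X : Polynomial ℂ) * q)) = 0 := by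
    intro r
    rw [_root_.map_mul, hXq, Matrix.aeval_self_charpoly, mul_zero]
  refine ⟨Polynomial.aeval W (b * q), Polynomial.aeval W (a * X), β, C, ?_, ?_, ?_, hβneg, hC, ?_⟩
  · rw [← _root_.map_add, add_comm, hab, _root_.map_one]
  · calc W * Polynomial.aeval W (b * q)
        = Polynomial.aeval W ((X : Polynomial ℂ) * (b * q)) := by
          simp [_root_.map_mul, mul_assoc]
      _ = 0 := by rw [show (X : Polynomial ℂ) * (b * q) = b * ((X : Polynomial ℂ) * q) by ring]
                  exact key b
  · calc Polynomial.aeval W (b * q) * W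
        = Polynomial.aeval W ((b * q) * (X : Polynomial ℂ)) := by
          simp [_root_.map_mul, mul_assoc]
      _ = 0 := by rw [show (b * q) * (X : Polynomial ℂ) = b * ((X : Polynomial ℂ) * q) by ring]
                  exact key b
  · intro x t ht
    refine hCb _ ?_ t ht
    have hqaF : Polynomial.aeval W q * Polynomial.aeval W (a * X) = 0 := by
      rw [← _root_.map_mul, show q * (a * X) = a * ((X : Polynomial ℂ) * q) by ring]
      exact key a
    rw [Matrix.mulVec_mulVec, ← hqfact, hqaF, Matrix.zero_mulVec]

noncomputable def matCLM (M : Matrix (Fin m) (Fin m) ℂ) :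
    (Fin m → ℂ) →L[ℝ] (Fin m → ℂ) :=
  LinearMap.toContinuousLinearMap ((Matrix.mulVecLin M).restrictScalars ℝ)

@[simp] lemma matCLM_apply (M : Matrix (Fin m) (Fin m) ℂ) (v : Fin m → ℂ) :
    matCLM M v = M.mulVec v := rfl

noncomputable def PsiCLM (m : ℕ) :
    Matrix (Fin m) (Fin m) ℂ →L[ℝ] ((Fin m → ℂ) →L[ℝ] (Fin m → ℂ)) :=
  LinearMap.toContinuousLinearMap
    { toFun := matCLM
      map_add' := fun A B => by
        ext v i
        simp [Matrix.add_mulVec]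
      map_smul' := fun c A => by
        ext v i
        simp [Matrix.mulVec, Matrix.smul_apply, dotProduct, Finset.smul_sum, smul_mul_assoc,
          mul_assoc] }

@[simp] lemma PsiCLM_apply (M : Matrix (Fin m) (Fin m) ℂ) (v : Fin m → ℂ) :
    PsiCLM m M v = M.mulVec v := rfl

lemma voc (W : Matrix (Fin m) (Fin m) ℂ) (zc w : ℝ → (Fin m → ℂ))
    (hzc : Continuous zc)
    (hw : ∀ t, 0 ≤ t → HasDerivAt w (zc t + W.mulVec (w t)) t) :
    ∀ t, 0 ≤ t → w t = (exp (t • W)).mulVec (w 0)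
      + ∫ s in (0:ℝ)..t, (exp (t • W) * exp ((-s) • W)).mulVec (zc s) := by
  intro t ht
  have hcontI : Continuous (fun s : ℝ => (exp ((-s) • W)).mulVec (zc s)) := by
    have h1 : Continuous (fun s : ℝ => PsiCLM m (exp ((-s) • W))) :=
      (PsiCLM m).continuous.comp ((continuous_expM W).comp continuous_neg)
    exact h1.clm_apply hzc
  have hg : ∀ s, 0 ≤ s → HasDerivAt (fun r => PsiCLM m (exp ((-r) • W)) (w r))
      ((exp ((-s) • W)).mulVec (zc s)) s := by
    intro s hs
    have hexpneg : HasDerivAt (fun r : ℝ => exp ((-r) • W))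
        (-(W * exp ((-s) • W))) s := by
      have h := hasDerivAt_expM W (-s)
      have hneg : HasDerivAt (fun r : ℝ => -r) (-1) s := (hasDerivAt_id s).neg
      have := HasDerivAt.scomp s h hneg
      exact this.congr_deriv (by simp)
    have hΨ : HasDerivAt (fun r => PsiCLM m (exp ((-r) • W)))
        (PsiCLM m (-(W * exp ((-s) • W)))) s :=
      (PsiCLM m).hasFDerivAt.comp_hasDerivAt s hexpneg
    have hsum := hΨ.clm_apply (hw s hs)
    refine hsum.congr_deriv (Eq.symm ?_)
    have hcom : W * exp ((-s) • W) = exp ((-s) • W) * W :=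
      (((Commute.refl W).smul_right (-s)).exp_right).eq
    simp only [PsiCLM_apply, Matrix.neg_mulVec, Matrix.mulVec_add]
    rw [Matrix.mulVec_mulVec, ← hcom]
    abel
  have hftc : PsiCLM m (exp ((-t) • W)) (w t) - w 0
      = ∫ s in (0:ℝ)..t, (exp ((-s) • W)).mulVec (zc s) := by
    have h0 : PsiCLM m (exp ((-(0:ℝ)) • W)) (w 0) = w 0 := by
      simp [exp_zero, Matrix.one_mulVec]
    rw [← h0]
    have h1 : ∀ s ∈ Set.uIcc (0:ℝ) t, HasDerivAt
        (fun r => PsiCLM m (exp ((-r) • W)) (w r))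
        ((exp ((-s) • W)).mulVec (zc s)) s := by
      intro s hs
      rw [Set.uIcc_of_le ht] at hs
      exact hg s hs.1
    exact (intervalIntegral.integral_eq_sub_of_hasDerivAt h1
      (hcontI.intervalIntegrable 0 t)).symm
  have hinv : exp (t • W) * exp ((-t) • W) = 1 := by
    rw [exp_mul_exp]
    simp [exp_zero]
  have hwt : w t = (exp (t • W)).mulVec (w 0 + ∫ s in (0:ℝ)..t,
      (exp ((-s) • W)).mulVec (zc s)) := by
    have : (exp ((-t) • W)).mulVec (w t) = w 0 + ∫ s in (0:ℝ)..t,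
        (exp ((-s) • W)).mulVec (zc s) := by
      have := sub_eq_iff_eq_add'.1 hftc
      simpa using this
    rw [← this, Matrix.mulVec_mulVec, hinv, Matrix.one_mulVec]
  rw [hwt, Matrix.mulVec_add]
  congr 1
  have hcc := (matCLM (exp (t • W))).intervalIntegral_comp_comm (μ := MeasureTheory.volume)
    (hcontI.intervalIntegrable 0 t)
  simp only [matCLM_apply] at hcc
  rw [← hcc]
  simp only [Matrix.mulVec_mulVec]

lemma periodic_primitive_bound (T : ℝ) (hT : 0 < T) (f : ℝ → ℝ) (hf : Continuous f)
    (hp : Function.Periodic f T) (hint : (∫ s in (0:ℝ)..T, f s) = 0) :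
    ∃ M : ℝ, ∀ t : ℝ, |∫ s in (0:ℝ)..t, f s| ≤ M := by
  set h : ℝ → ℝ := fun t => ∫ s in (0:ℝ)..t, f s with hh
  have hcont : Continuous h :=
    intervalIntegral.continuous_primitive (fun a b => hf.intervalIntegrable a b) 0
  have hper : Function.Periodic h T := by
    intro x
    have hsplit : ∫ s in (0:ℝ)..(x+T), f s
        = (∫ s in (0:ℝ)..x, f s) + ∫ s in x..(x+T), f s :=
      (intervalIntegral.integral_add_adjacent_intervals (hf.intervalIntegrable 0 x)
        (hf.intervalIntegrable x (x+T))).symm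
    have hpint : ∫ s in x..(x+T), f s = ∫ s in (0:ℝ)..T, f s := by
      simpa using hp.intervalIntegral_add_eq x 0
    simp [hh, hsplit, hpint, hint]
  obtain ⟨M, hM⟩ := (isCompact_Icc (a := (0:ℝ)) (b := T)).exists_bound_of_continuousOn
    hcont.continuousOn
  refine ⟨M, fun t => ?_⟩
  obtain ⟨y, hy, hyeq⟩ := hper.exists_mem_Ico₀ hT t
  rw [show |∫ s in (0:ℝ)..t, f s| = |h t| from rfl, hyeq, ← Real.norm_eq_abs]
  exact hM y (Set.Ico_subset_Icc_self hy)

lemma exp_int_le3 {β t : ℝ} (hβ : β < 0) (ht : 0 ≤ t) :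
    ∫ s in (0:ℝ)..t, Real.exp (β * (t + -s)) ≤ 1 / (-β) := by
  have h : ∫ s in (0:ℝ)..t, Real.exp (β * (t + -s))
      = Real.exp (β * (t + -t)) / (-β) - Real.exp (β * (t + -(0:ℝ))) / (-β) := by
    rw [intervalIntegral.integral_eq_sub_of_hasDerivAt
      (f := fun s => Real.exp (β * (t + -s)) / (-β)) (f' := fun s => Real.exp (β * (t + -s)))]
    · intro x _
      have hinner : HasDerivAt (fun s : ℝ => β * (t + -s)) (-β) x := by
        simpa using (((hasDerivAt_id x).neg.const_add t).const_mul β)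
      have h1 := ((Real.hasDerivAt_exp (β * (t + -x))).comp x hinner).div_const (-β)
      refine h1.congr_deriv (Eq.symm ?_)
      exact (mul_div_cancel_right₀ _ (show (-β:ℝ) ≠ 0 by linarith)).symm
    · exact (Real.continuous_exp.comp (by continuity)).intervalIntegrable 0 t
  rw [h]
  have h1 : Real.exp (β * (t + -t)) = 1 := by norm_num
  have h2 : 0 < Real.exp (β * (t + -(0:ℝ))) := Real.exp_pos _
  have h3 : 0 < -β := by linarith
  rw [h1]
  have : Real.exp (β * (t + -(0:ℝ))) / (-β) ≥ 0 := by positivity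
  linarith

theorem stmt14
    (m : ℕ) (hm : 1 ≤ m)
    (Y : Matrix (Fin m) (Fin m) ℝ)
    -- `0` is a simple eigenvalue of `Y` (algebraic multiplicity one)
    (hsimple :
      Polynomial.rootMultiplicity 0
        (Matrix.charpoly (Y.map fun x : ℝ => (x : ℂ))) = 1)
    -- every nonzero eigenvalue of `Y` has negative real part
    (hneg : ∀ μ : ℂ,
      μ ∈ (Matrix.charpoly (Y.map fun x : ℝ => (x : ℂ))).roots →
      μ ≠ 0 → μ.re < 0)
    (T : ℝ) (hT : 0 < T)
    (z : ℝ → Fin m → ℝ)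
    (hzc : ∀ i, Continuous fun t => z t i)
    (hzb : ∃ B : ℝ, ∀ t, 0 ≤ t → ∀ i, |z t i| ≤ B)
    (hzp : ∀ i t, z (t + T) i = z t i)
    (hzint : ∀ i, (∫ s in (0:ℝ)..T, z s i) = 0)
    (Φ : ℝ → Fin m → ℝ)
    (hΦ : ∀ (i : Fin m) (t : ℝ), 0 ≤ t →
      HasDerivAt (fun s => Φ s i) (z t i + Y.mulVec (Φ t) i) t) :
    ∃ U : ℝ, 0 < U ∧ ∀ t, 0 ≤ t → Real.sqrt (∑ i, (Φ t i) ^ 2) ≤ U := by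
  classical
  set W : Matrix (Fin m) (Fin m) ℂ := Y.map (fun x : ℝ => (x : ℂ)) with hW
  obtain ⟨E, F, β, C, hEF, hWE, hEW, hβ, hC, hdecay⟩ := spectral W hsimple hneg
  set zc : ℝ → (Fin m → ℂ) := fun t i => ((z t i : ℝ) : ℂ) with hzcdef
  set w : ℝ → (Fin m → ℂ) := fun t i => ((Φ t i : ℝ) : ℂ) with hwdef
  have hmv : ∀ v : Fin m → ℝ,
      W.mulVec (fun i => ((v i : ℝ) : ℂ)) = fun i => ((Y.mulVec v i : ℝ) : ℂ) := by
    intro v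
    funext i
    simp only [hW, Matrix.mulVec, dotProduct, Matrix.map_apply]
    push_cast
    rfl
  have hzccont : Continuous zc :=
    continuous_pi fun i => Complex.continuous_ofReal.comp (hzc i)
  have hwderiv : ∀ t, 0 ≤ t → HasDerivAt w (zc t + W.mulVec (w t)) t := by
    intro t ht
    rw [hasDerivAt_pi]
    intro i
    have h1 := (hΦ i t ht).ofReal_comp
    refine h1.congr_deriv (Eq.symm ?_)
    have h2 : W.mulVec (w t) i = ((Y.mulVec (Φ t) i : ℝ) : ℂ) := by
      rw [show W.mulVec (w t) = fun i => ((Y.mulVec (Φ t) i : ℝ) : ℂ) from hmv (Φ t)]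
    show zc t i + W.mulVec (w t) i = _
    rw [h2]
    push_cast
    rfl
  have hrep := voc W zc w hzccont hwderiv
  -- bound on zc
  obtain ⟨B, hB⟩ := hzb
  set Bz : ℝ := max B 0 with hBzdef
  have hBz : ∀ s : ℝ, 0 ≤ s → ‖zc s‖ ≤ Bz := by
    intro s hs
    rw [pi_norm_le_iff_of_nonneg (le_max_right B 0)]
    intro i
    rw [show zc s i = ((z s i : ℝ) : ℂ) from rfl, Complex.norm_real, Real.norm_eq_abs]
    exact (hB s hs i).trans (le_max_left B 0)
  -- bound on the primitive of zc
  have hMi : ∀ i : Fin m, ∃ M : ℝ, ∀ t : ℝ, |∫ s in (0:ℝ)..t, z s i| ≤ M := fun i =>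
    periodic_primitive_bound T hT (fun t => z t i) (hzc i) (fun x => hzp i x) (hzint i)
  choose Mf hMf using hMi
  set MJ : ℝ := ∑ i, |Mf i| with hMJdef
  have hMJ0 : 0 ≤ MJ := Finset.sum_nonneg fun i _ => abs_nonneg _
  have hJ : ∀ t : ℝ, ‖∫ s in (0:ℝ)..t, zc s‖ ≤ MJ := by
    intro t
    rw [pi_norm_le_iff_of_nonneg hMJ0]
    intro i
    have hproj := (ContinuousLinearMap.proj (R := ℂ) (φ := fun _ : Fin m => ℂ) i
      ).intervalIntegral_comp_comm (μ := MeasureTheory.volume)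
      (hzccont.intervalIntegrable 0 t)
    have hcomp := hproj.symm
    simp only [ContinuousLinearMap.proj_apply] at hcomp
    rw [hcomp]
    have : (∫ s in (0:ℝ)..t, zc s i) = ((∫ s in (0:ℝ)..t, z s i : ℝ) : ℂ) :=
      intervalIntegral.integral_ofReal
    rw [this, Complex.norm_real, Real.norm_eq_abs]
    calc |∫ s in (0:ℝ)..t, z s i| ≤ Mf i := hMf i t
      _ ≤ |Mf i| := le_abs_self _
      _ ≤ MJ := Finset.single_le_sum (fun j _ => abs_nonneg (Mf j)) (Finset.mem_univ i)
  -- splitting of the exponential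
  have hsplit : ∀ τ : ℝ, exp (τ • W) = E + exp (τ • W) * F := by
    intro τ
    have h1 : exp (τ • W) * (E + F) = exp (τ • W) := by rw [hEF, mul_one]
    rw [mul_add, exp_mul_proj W E hWE hEW τ] at h1
    exact h1.symm
  set U0 : ℝ := (‖E.mulVec (w 0)‖ + C * ‖F.mulVec (w 0)‖)
      + (‖E‖ * MJ + C * ‖F‖ * Bz * (1 / (-β))) with hU0def
  have hU0nn : 0 ≤ U0 := by
    have h1 : (0:ℝ) < -β := by linarith
    have h2 : (0:ℝ) ≤ Bz := le_max_right B 0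
    positivity
  have hwb : ∀ t : ℝ, 0 ≤ t → ‖w t‖ ≤ U0 := by
    intro t ht
    rw [hrep t ht]
    have hterm1 : ‖(exp (t • W)).mulVec (w 0)‖
        ≤ ‖E.mulVec (w 0)‖ + C * ‖F.mulVec (w 0)‖ := by
      rw [hsplit t, Matrix.add_mulVec, ← Matrix.mulVec_mulVec]
      refine (norm_add_le _ _).trans (add_le_add_right ?_ _)
      have := hdecay (w 0) t ht
      have hexple : Real.exp (β * t) ≤ 1 := by
        rw [show (1:ℝ) = Real.exp 0 from (Real.exp_zero).symm]
        exact Real.exp_le_exp.2 (by nlinarith)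
      calc ‖(exp (t • W)).mulVec (F.mulVec (w 0))‖
          ≤ C * Real.exp (β * t) * ‖F.mulVec (w 0)‖ := this
        _ ≤ C * 1 * ‖F.mulVec (w 0)‖ := by
            apply mul_le_mul_of_nonneg_right _ (norm_nonneg _)
            exact mul_le_mul_of_nonneg_left hexple hC.le
        _ = C * ‖F.mulVec (w 0)‖ := by ring
    -- the integrand decomposition
    have hintdec : ∀ s : ℝ, (exp (t • W) * exp ((-s) • W)).mulVec (zc s)
        = E.mulVec (zc s) + (exp ((t + -s) • W)).mulVec (F.mulVec (zc s)) := by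
      intro s
      rw [exp_mul_exp]
      conv_lhs => rw [hsplit (t + -s)]
      rw [Matrix.add_mulVec, ← Matrix.mulVec_mulVec]
    have hcont2 : Continuous (fun s : ℝ => (exp ((t + -s) • W)).mulVec (F.mulVec (zc s))) := by
      have h1 : Continuous (fun s : ℝ => PsiCLM m (exp ((t + -s) • W))) :=
        (PsiCLM m).continuous.comp ((continuous_expM W).comp
          (continuous_const.add continuous_neg))
      exact h1.clm_apply ((matCLM F).continuous.comp hzccont)
    have hcont1 : Continuous (fun s : ℝ => E.mulVec (zc s)) :=
      (matCLM E).continuous.comp hzccont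
    have hintsplit : (∫ s in (0:ℝ)..t, (exp (t • W) * exp ((-s) • W)).mulVec (zc s))
        = (∫ s in (0:ℝ)..t, E.mulVec (zc s))
          + ∫ s in (0:ℝ)..t, (exp ((t + -s) • W)).mulVec (F.mulVec (zc s)) := by
      rw [← intervalIntegral.integral_add (hcont1.intervalIntegrable 0 t)
        (hcont2.intervalIntegrable 0 t)]
      apply intervalIntegral.integral_congr
      intro s _
      exact hintdec s
    have hpartA : ‖∫ s in (0:ℝ)..t, E.mulVec (zc s)‖ ≤ ‖E‖ * MJ := by
      have hcc := (matCLM E).intervalIntegral_comp_comm (μ := MeasureTheory.volume)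
        (hzccont.intervalIntegrable 0 t)
      simp only [matCLM_apply] at hcc
      rw [hcc]
      calc ‖E.mulVec (∫ s in (0:ℝ)..t, zc s)‖
          ≤ ‖E‖ * ‖∫ s in (0:ℝ)..t, zc s‖ := Matrix.linfty_opNorm_mulVec _ _
        _ ≤ ‖E‖ * MJ := mul_le_mul_of_nonneg_left (hJ t) (norm_nonneg _)
    have hpartB : ‖∫ s in (0:ℝ)..t, (exp ((t + -s) • W)).mulVec (F.mulVec (zc s))‖
        ≤ C * ‖F‖ * Bz * (1 / (-β)) := by
      have hpt : ∀ s ∈ Set.Icc (0:ℝ) t,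
          ‖(exp ((t + -s) • W)).mulVec (F.mulVec (zc s))‖
            ≤ C * ‖F‖ * Bz * Real.exp (β * (t + -s)) := by
        intro s hs
        have hts : (0:ℝ) ≤ t + -s := by
          have := hs.2; linarith
        calc ‖(exp ((t + -s) • W)).mulVec (F.mulVec (zc s))‖
            ≤ C * Real.exp (β * (t + -s)) * ‖F.mulVec (zc s)‖ := hdecay (zc s) (t + -s) hts
          _ ≤ C * Real.exp (β * (t + -s)) * (‖F‖ * Bz) := by
              apply mul_le_mul_of_nonneg_left _ (by positivity)
              exact (Matrix.linfty_opNorm_mulVec _ _).trans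
                (mul_le_mul_of_nonneg_left (hBz s hs.1) (norm_nonneg _))
          _ = C * ‖F‖ * Bz * Real.exp (β * (t + -s)) := by ring
      calc ‖∫ s in (0:ℝ)..t, (exp ((t + -s) • W)).mulVec (F.mulVec (zc s))‖
          ≤ ∫ s in (0:ℝ)..t, ‖(exp ((t + -s) • W)).mulVec (F.mulVec (zc s))‖ :=
            intervalIntegral.norm_integral_le_integral_norm ht
        _ ≤ ∫ s in (0:ℝ)..t, C * ‖F‖ * Bz * Real.exp (β * (t + -s)) := by
            apply intervalIntegral.integral_mono_on ht
              (hcont2.norm.intervalIntegrable 0 t)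
              (((continuous_const.mul (Real.continuous_exp.comp
                (continuous_const.mul (continuous_const.add continuous_neg)))) :
                Continuous fun s : ℝ =>
                C * ‖F‖ * Bz * Real.exp (β * (t + -s))).intervalIntegrable 0 t)
            exact hpt
        _ = C * ‖F‖ * Bz * ∫ s in (0:ℝ)..t, Real.exp (β * (t + -s)) := by
            rw [← intervalIntegral.integral_const_mul]
        _ ≤ C * ‖F‖ * Bz * (1 / (-β)) := by
            apply mul_le_mul_of_nonneg_left (exp_int_le3 hβ ht)
            have h2 : (0:ℝ) ≤ Bz := le_max_right B 0
            positivity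
    calc ‖(exp (t • W)).mulVec (w 0)
          + ∫ s in (0:ℝ)..t, (exp (t • W) * exp ((-s) • W)).mulVec (zc s)‖
        ≤ ‖(exp (t • W)).mulVec (w 0)‖
          + ‖∫ s in (0:ℝ)..t, (exp (t • W) * exp ((-s) • W)).mulVec (zc s)‖ :=
          norm_add_le _ _
      _ ≤ (‖E.mulVec (w 0)‖ + C * ‖F.mulVec (w 0)‖)
          + (‖E‖ * MJ + C * ‖F‖ * Bz * (1 / (-β))) := by
          refine add_le_add hterm1 ?_
          rw [hintsplit]
          exact (norm_add_le _ _).trans (add_le_add hpartA hpartB)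
  -- conclude
  refine ⟨Real.sqrt m * U0 + 1, by positivity, fun t ht => ?_⟩
  have hcomp : ∀ i, |Φ t i| ≤ U0 := by
    intro i
    have h1 : ‖w t i‖ ≤ ‖w t‖ := norm_le_pi_norm (w t) i
    rw [show w t i = ((Φ t i : ℝ) : ℂ) from rfl, Complex.norm_real, Real.norm_eq_abs] at h1
    exact h1.trans (hwb t ht)
  have hsum : (∑ i, (Φ t i) ^ 2) ≤ (m : ℝ) * U0 ^ 2 := by
    calc (∑ i, (Φ t i) ^ 2) ≤ ∑ _i : Fin m, U0 ^ 2 := by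
          apply Finset.sum_le_sum
          intro i _
          rw [← sq_abs]
          exact pow_le_pow_left₀ (abs_nonneg _) (hcomp i) 2
      _ = (m : ℝ) * U0 ^ 2 := by
          rw [Finset.sum_const, Finset.card_univ, Fintype.card_fin, nsmul_eq_mul]
  calc Real.sqrt (∑ i, (Φ t i) ^ 2) ≤ Real.sqrt ((m : ℝ) * U0 ^ 2) :=
        Real.sqrt_le_sqrt hsum
    _ = Real.sqrt m * U0 := by
        rw [Real.sqrt_mul (Nat.cast_nonneg m), Real.sqrt_sq hU0nn]
    _ ≤ Real.sqrt m * U0 + 1 := by linarith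
end
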